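/- arXiv:1710.08455 — 12 statements merged into one kernel-verified Lean document; each statement's English description precedes it below -/
import Mathlib

section
/- Let n = 2d be an even positive integer. For j = 1,...,d define the n×n matrix A_j by (A_j)_{s,t} = 1 if min((s−t) mod n, (t−s) mod n) = j and (A_j)_{s,t} = 0 otherwise (these are the distance matrices of the n-cycle with vertices ordered 1,2,...,n). Then: each A_j is symmetric with nonnegative entries; ∑_{j=1}^d A_j = J − I, where J is the all-ones n×n matrix and I the identity; and for each k = 1,...,d the matrix I + ∑_{j=1}^d cos(2πjk/n) · A_j is positive semidefinite. In particular these matrices form a feasible solution to the SDP relaxation. -/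
open Matrix

theorem stmt_1 (d : ℕ) (hd : 0 < d) (n : ℕ) (hn : n = 2 * d)
    (A : ℕ → Matrix (Fin n) (Fin n) ℝ)
    (hA : ∀ j, ∀ s t : Fin n, A j s t =
      if min (((s : ℕ) + n - (t : ℕ)) % n) (((t : ℕ) + n - (s : ℕ)) % n) = j
      then 1 else 0) :
    (∀ j ∈ Finset.Icc 1 d, (A j).IsSymm ∧ ∀ s t : Fin n, 0 ≤ A j s t) ∧
    (∑ j ∈ Finset.Icc 1 d, A j) = Matrix.of (fun _ _ => (1 : ℝ)) - 1 ∧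
    (∀ k ∈ Finset.Icc 1 d,
      ((1 : Matrix (Fin n) (Fin n) ℝ) +
        ∑ j ∈ Finset.Icc 1 d, Real.cos (2 * Real.pi * j * k / n) • A j).PosSemidef) := by
  have hn0 : 0 < n := by omega
  have hnR : (n : ℝ) ≠ 0 := by positivity
  -- explicit value of the wrap-around distances
  have modval : ∀ s t : Fin n, (((s : ℕ) + n - (t : ℕ)) % n) =
      if (t : ℕ) ≤ (s : ℕ) then (s : ℕ) - (t : ℕ) else (s : ℕ) + n - (t : ℕ) := by
    intro s t
    have hs := s.isLt
    have ht := t.isLt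
    by_cases h : (t : ℕ) ≤ (s : ℕ)
    · rw [if_pos h, show (s : ℕ) + n - (t : ℕ) = ((s : ℕ) - (t : ℕ)) + n by omega,
        Nat.add_mod_right, Nat.mod_eq_of_lt (by omega)]
    · rw [if_neg h, Nat.mod_eq_of_lt (by omega)]
  have hdist : ∀ s t : Fin n, s ≠ t →
      1 ≤ min (((s : ℕ) + n - (t : ℕ)) % n) (((t : ℕ) + n - (s : ℕ)) % n) ∧
      min (((s : ℕ) + n - (t : ℕ)) % n) (((t : ℕ) + n - (s : ℕ)) % n) ≤ d := by
    intro s t hst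
    have hs := s.isLt
    have ht := t.isLt
    have hne : (s : ℕ) ≠ (t : ℕ) := fun h => hst (Fin.ext h)
    rw [modval s t, modval t s]
    split_ifs <;> omega
  have hdiag : ∀ s : Fin n, (((s : ℕ) + n - (s : ℕ)) % n) = 0 := by
    intro s
    rw [show (s : ℕ) + n - (s : ℕ) = n by omega, Nat.mod_self]
  refine ⟨?_, ?_, ?_⟩
  · -- symmetry and nonnegativity
    intro j hj
    constructor
    · ext s t
      rw [Matrix.transpose_apply, hA, hA, min_comm]
    · intro s t
      rw [hA]
      split <;> norm_num
  · -- sum equals J - I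
    ext s t
    simp only [Matrix.sum_apply, hA, Matrix.sub_apply, Matrix.of_apply, Matrix.one_apply]
    rw [show (∑ j ∈ Finset.Icc 1 d,
        if min (((s : ℕ) + n - (t : ℕ)) % n) (((t : ℕ) + n - (s : ℕ)) % n) = j
        then (1:ℝ) else 0) = _ from Finset.sum_ite_eq _ _ (fun _ => (1:ℝ))]
    by_cases hst : s = t
    · subst hst
      simp [hdiag s, Finset.mem_Icc]
    · obtain ⟨h1, h2⟩ := hdist s t hst
      have : min (((s : ℕ) + n - (t : ℕ)) % n) (((t : ℕ) + n - (s : ℕ)) % n) ∈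
          Finset.Icc 1 d := Finset.mem_Icc.mpr ⟨h1, h2⟩
      simp [this, hst]
  · -- positive semidefiniteness
    intro k hk
    set θ : ℝ := 2 * Real.pi * k / n with hθ
    -- cosine periodicity lemma
    have hcos : ∀ s t : Fin n, Real.cos (θ * ((((s : ℕ) + n - (t : ℕ)) % n : ℕ) : ℝ)) =
        Real.cos (θ * s - θ * t) := by
      intro s t
      have hs := s.isLt
      have ht := t.isLt
      rw [modval s t]
      by_cases h : (t : ℕ) ≤ (s : ℕ)
      · rw [if_pos h]
        have : θ * (((s : ℕ) - (t : ℕ) : ℕ) : ℝ) = θ * s - θ * t := by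
          rw [Nat.cast_sub h]; ring
        rw [this]
      · rw [if_neg h]
        have : θ * (((s : ℕ) + n - (t : ℕ) : ℕ) : ℝ) =
            (θ * s - θ * t) + ((k : ℤ) : ℝ) * (2 * Real.pi) := by
          rw [Nat.cast_sub (by omega : (t : ℕ) ≤ (s : ℕ) + n), hθ]
          push_cast
          field_simp
          ring
        rw [this, Real.cos_add_int_mul_two_pi]
    -- entrywise formula
    have key : ∀ s t : Fin n,
        ((1 : Matrix (Fin n) (Fin n) ℝ) +
          ∑ j ∈ Finset.Icc 1 d, Real.cos (2 * Real.pi * j * k / n) • A j) s t =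
        Real.cos (θ * s) * Real.cos (θ * t) + Real.sin (θ * s) * Real.sin (θ * t) := by
      intro s t
      have hcoef : ∀ j : ℕ, Real.cos (2 * Real.pi * j * k / n) = Real.cos (θ * j) := by
        intro j; rw [hθ]; ring_nf
      simp only [Matrix.add_apply, Matrix.sum_apply, Matrix.smul_apply, hA, Matrix.one_apply,
        smul_eq_mul, hcoef, mul_ite, mul_one, mul_zero]
      rw [show (∑ j ∈ Finset.Icc 1 d,
          if min (((s : ℕ) + n - (t : ℕ)) % n) (((t : ℕ) + n - (s : ℕ)) % n) = j
          then Real.cos (θ * j) else 0) = _ from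
        Finset.sum_ite_eq _ _ (fun j : ℕ => Real.cos (θ * j))]
      rw [← Real.cos_sub]
      by_cases hst : s = t
      · subst hst
        simp [hdiag s, Finset.mem_Icc]
      · obtain ⟨h1, h2⟩ := hdist s t hst
        have hmem : min (((s : ℕ) + n - (t : ℕ)) % n) (((t : ℕ) + n - (s : ℕ)) % n) ∈
            Finset.Icc 1 d := Finset.mem_Icc.mpr ⟨h1, h2⟩
        simp only [hst, if_false, hmem, if_true, zero_add]
        rcases le_total (((s : ℕ) + n - (t : ℕ)) % n) (((t : ℕ) + n - (s : ℕ)) % n) with h | h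
        · rw [min_eq_left h, hcos s t]
        · rw [min_eq_right h, hcos t s, ← Real.cos_neg (θ * t - θ * s)]
          ring_nf
    refine Matrix.posSemidef_iff_dotProduct_mulVec.mpr ⟨?_, ?_⟩
    · ext i j
      rw [Matrix.conjTranspose_apply, star_trivial, key, key]
      ring
    · intro x
      have expand : star x ⬝ᵥ ((1 : Matrix (Fin n) (Fin n) ℝ) +
          ∑ j ∈ Finset.Icc 1 d, Real.cos (2 * Real.pi * j * k / n) • A j) *ᵥ x =
          (∑ s, x s * Real.cos (θ * s)) ^ 2 + (∑ s, x s * Real.sin (θ * s)) ^ 2 := by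
        simp only [dotProduct, mulVec, Pi.star_apply, star_trivial, key]
        rw [sq, sq, Finset.sum_mul_sum, Finset.sum_mul_sum, ← Finset.sum_add_distrib]
        refine Finset.sum_congr rfl fun s _ => ?_
        rw [← Finset.sum_add_distrib, Finset.mul_sum]
        refine Finset.sum_congr rfl fun t _ => ?_
        ring
      rw [expand]
      positivity
end

section
/- Let n = 2d be an even positive integer with n ≥ 4. Given real numbers a_1,...,a_d, set b_j = 4/n − (1 − 2/n)a_j for j = 1,...,d−1 and b_d = 2/n − (1 − 2/n)a_d. Partition {1,...,n} into U = {1,...,d} and W = {d+1,...,n}, and for j = 1,...,d define X^(j) to be the symmetric n×n matrix with zero diagonal whose (s,t) entry for s ≠ t equals a_j if s and t lie in the same part and b_j if s and t lie in different parts. Define a^(k) = ∑_{i=1}^d cos(2πik/n)·a_i. Then for each k = 1,...,d, the matrix I + ∑_{j=1}^d cos(2πjk/n)·X^(j) is positive semidefinite if and only if −2/(n−2) ≤ a^(k) ≤ 1. -/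
open Matrix

lemma cos_tele (d : ℕ) (θ : ℝ) :
    (∑ i ∈ Finset.range d, Real.cos (((i : ℝ) + 1) * θ)) * (2 * Real.sin (θ / 2)) =
      Real.sin (d * θ + θ / 2) - Real.sin (θ / 2) := by
  calc (∑ i ∈ Finset.range d, Real.cos (((i : ℝ) + 1) * θ)) * (2 * Real.sin (θ / 2))
      = ∑ i ∈ Finset.range d,
          (Real.sin (((i : ℕ) + 1 : ℕ) * θ + θ / 2) - Real.sin ((i : ℕ) * θ + θ / 2)) := by
        rw [Finset.sum_mul]
        refine Finset.sum_congr rfl fun i _ => ?_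
        rw [Real.sin_sub_sin,
          show ((((i : ℕ) + 1 : ℕ) : ℝ) * θ + θ / 2 - ((i : ℝ) * θ + θ / 2)) / 2 = θ / 2 by
            push_cast; ring,
          show ((((i : ℕ) + 1 : ℕ) : ℝ) * θ + θ / 2 + ((i : ℝ) * θ + θ / 2)) / 2
              = ((i : ℝ) + 1) * θ by push_cast; ring]
        ring
    _ = Real.sin ((d : ℕ) * θ + θ / 2) - Real.sin ((0 : ℕ) * θ + θ / 2) :=
        Finset.sum_range_sub (fun i => Real.sin ((i : ℕ) * θ + θ / 2)) d
    _ = Real.sin (d * θ + θ / 2) - Real.sin (θ / 2) := by norm_num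

lemma cos_sum (d k : ℕ) (hd : 0 < d) (hk1 : 1 ≤ k) (hkd : k ≤ d) :
    ∑ j ∈ Finset.Icc 1 d, Real.cos ((j : ℝ) * (Real.pi * k / d)) =
      (Real.cos (Real.pi * k) - 1) / 2 := by
  set θ : ℝ := Real.pi * k / d with hθ
  have hdR : (0 : ℝ) < d := by exact_mod_cast hd
  have hsin : 0 < Real.sin (θ / 2) := by
    apply Real.sin_pos_of_pos_of_lt_pi
    · rw [hθ]; positivity
    · rw [hθ]
      rw [div_div, div_lt_iff₀ (by positivity)]
      have : (k : ℝ) ≤ d := by exact_mod_cast hkd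
      nlinarith [Real.pi_pos]
  have hshift : ∑ j ∈ Finset.Icc 1 d, Real.cos ((j : ℝ) * θ)
      = ∑ i ∈ Finset.range d, Real.cos (((i : ℝ) + 1) * θ) := by
    rw [← Finset.Ico_add_one_right_eq_Icc, Finset.sum_Ico_eq_sum_range]
    refine Finset.sum_congr (by congr 1) fun i _ => ?_
    congr 1
    push_cast; ring
  have htele := cos_tele d θ
  have hdθ : (d : ℝ) * θ = Real.pi * k := by
    rw [hθ]; field_simp
  have hsin2 : Real.sin ((d : ℝ) * θ + θ / 2) = Real.cos (Real.pi * k) * Real.sin (θ / 2) := by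
    rw [hdθ, Real.sin_add, mul_comm Real.pi (k : ℝ), Real.sin_nat_mul_pi]
    ring
  rw [hshift]
  have key : (∑ i ∈ Finset.range d, Real.cos (((i : ℝ) + 1) * θ)) * (2 * Real.sin (θ / 2))
      = ((Real.cos (Real.pi * k) - 1) / 2) * (2 * Real.sin (θ / 2)) := by
    rw [htele, hsin2]; ring
  exact mul_right_cancel₀ (by positivity) key

lemma cs_aux (m : ℕ) (p : Fin m → Prop) [DecidablePred p] (x : Fin m → ℝ) :
    (∑ s : Fin m, if p s then x s else 0) ^ 2 ≤
      (∑ s : Fin m, if p s then (1 : ℝ) else 0) * ∑ s : Fin m, if p s then x s ^ 2 else 0 := by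
  have h := Finset.sum_mul_sq_le_sq_mul_sq Finset.univ
    (fun s : Fin m => if p s then (1 : ℝ) else 0) (fun s : Fin m => if p s then x s else 0)
  have e1 : ∑ s : Fin m, (if p s then (1 : ℝ) else 0) * (if p s then x s else 0)
      = ∑ s : Fin m, if p s then x s else 0 :=
    Finset.sum_congr rfl fun s _ => by split_ifs <;> ring
  have e2 : ∑ s : Fin m, (if p s then (1 : ℝ) else 0) ^ 2
      = ∑ s : Fin m, if p s then (1 : ℝ) else 0 :=
    Finset.sum_congr rfl fun s _ => by split_ifs <;> ring
  have e3 : ∑ s : Fin m, (if p s then x s else 0) ^ 2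
      = ∑ s : Fin m, if p s then x s ^ 2 else 0 :=
    Finset.sum_congr rfl fun s _ => by split_ifs <;> ring
  rw [e1, e2, e3] at h
  exact h

lemma cardU (n d : ℕ) (hdn : d ≤ n) :
    ∑ s : Fin n, (if (s : ℕ) < d then (1 : ℝ) else 0) = d := by
  rw [Fin.sum_univ_eq_sum_range (fun i => if i < d then (1 : ℝ) else 0) n]
  rw [Finset.sum_boole]
  rw [show (Finset.range n).filter (fun i => i < d) = Finset.range d from by
    ext i; simp; omega]
  simp

lemma cardW (n d : ℕ) (hn : n = 2 * d) :
    ∑ s : Fin n, (if (s : ℕ) < d then (0 : ℝ) else 1) = d := by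
  have h1 : ∀ s : Fin n, (if (s : ℕ) < d then (0 : ℝ) else 1)
      = 1 - (if (s : ℕ) < d then (1 : ℝ) else 0) := fun s => by split_ifs <;> ring
  rw [Finset.sum_congr rfl fun s _ => h1 s, Finset.sum_sub_distrib, cardU n d (by omega)]
  rw [Finset.sum_const, Finset.card_univ, Fintype.card_fin, nsmul_eq_mul, mul_one, hn]
  push_cast; ring

lemma quad (n d : ℕ) (M : Matrix (Fin n) (Fin n) ℝ) (A Bv : ℝ)
    (hM : ∀ s t : Fin n, M s t =
      (1 - A) * (if s = t then 1 else 0) +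
        (if (((s : ℕ) < d) ↔ ((t : ℕ) < d)) then A else Bv))
    (x : Fin n → ℝ) :
    x ⬝ᵥ (M *ᵥ x) = (1 - A) * (∑ s : Fin n, x s ^ 2)
      + A * ((∑ s : Fin n, if (s : ℕ) < d then x s else 0) ^ 2
           + (∑ s : Fin n, if (s : ℕ) < d then 0 else x s) ^ 2)
      + 2 * Bv * ((∑ s : Fin n, if (s : ℕ) < d then x s else 0)
                * (∑ s : Fin n, if (s : ℕ) < d then 0 else x s)) := by
  set U := ∑ s : Fin n, if (s : ℕ) < d then x s else 0 with hU
  set W := ∑ s : Fin n, if (s : ℕ) < d then 0 else x s with hW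
  have hrow : ∀ s : Fin n, (M *ᵥ x) s
      = (1 - A) * x s + (if (s : ℕ) < d then A * U + Bv * W else Bv * U + A * W) := by
    intro s
    simp only [Matrix.mulVec, dotProduct]
    have step1 : ∀ t : Fin n, M s t * x t
        = (1 - A) * (if s = t then x t else 0)
          + (A * (if (((s : ℕ) < d) ↔ ((t : ℕ) < d)) then x t else 0)
             + Bv * (if (((s : ℕ) < d) ↔ ((t : ℕ) < d)) then 0 else x t)) := by
      intro t; rw [hM]; split_ifs <;> ring
    calc ∑ t : Fin n, M s t * x t
        = ∑ t : Fin n, ((1 - A) * (if s = t then x t else 0)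
          + (A * (if (((s : ℕ) < d) ↔ ((t : ℕ) < d)) then x t else 0)
             + Bv * (if (((s : ℕ) < d) ↔ ((t : ℕ) < d)) then 0 else x t))) :=
          Finset.sum_congr rfl fun t _ => step1 t
      _ = (1 - A) * x s
          + (A * (∑ t : Fin n, if (((s : ℕ) < d) ↔ ((t : ℕ) < d)) then x t else 0)
             + Bv * (∑ t : Fin n, if (((s : ℕ) < d) ↔ ((t : ℕ) < d)) then 0 else x t)) := by
          rw [Finset.sum_add_distrib, Finset.sum_add_distrib, ← Finset.mul_sum, ← Finset.mul_sum,
            ← Finset.mul_sum, Finset.sum_ite_eq, if_pos (Finset.mem_univ s)]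
      _ = (1 - A) * x s + (if (s : ℕ) < d then A * U + Bv * W else Bv * U + A * W) := by
          by_cases hs : (s : ℕ) < d
          · rw [if_pos hs]
            have eU : (∑ t : Fin n, if (((s : ℕ) < d) ↔ ((t : ℕ) < d)) then x t else 0) = U := by
              rw [hU]
              exact Finset.sum_congr rfl fun t _ => by
                by_cases ht : (t : ℕ) < d <;> simp [hs, ht]
            have eW : (∑ t : Fin n, if (((s : ℕ) < d) ↔ ((t : ℕ) < d)) then 0 else x t) = W := by
              rw [hW]
              exact Finset.sum_congr rfl fun t _ => by
                by_cases ht : (t : ℕ) < d <;> simp [hs, ht]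
            rw [eU, eW]
          · rw [if_neg hs]
            have eU : (∑ t : Fin n, if (((s : ℕ) < d) ↔ ((t : ℕ) < d)) then x t else 0) = W := by
              rw [hW]
              exact Finset.sum_congr rfl fun t _ => by
                by_cases ht : (t : ℕ) < d <;> simp [hs, ht]
            have eW : (∑ t : Fin n, if (((s : ℕ) < d) ↔ ((t : ℕ) < d)) then 0 else x t) = U := by
              rw [hU]
              exact Finset.sum_congr rfl fun t _ => by
                by_cases ht : (t : ℕ) < d <;> simp [hs, ht]
            rw [eU, eW]
            ring
  calc x ⬝ᵥ (M *ᵥ x)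
      = ∑ s : Fin n, x s * ((1 - A) * x s
          + (if (s : ℕ) < d then A * U + Bv * W else Bv * U + A * W)) := by
        simp only [dotProduct]
        exact Finset.sum_congr rfl fun s _ => by rw [hrow]
    _ = ∑ s : Fin n, ((1 - A) * x s ^ 2
          + ((A * U + Bv * W) * (if (s : ℕ) < d then x s else 0)
             + (Bv * U + A * W) * (if (s : ℕ) < d then 0 else x s))) :=
        Finset.sum_congr rfl fun s _ => by by_cases hs : (s : ℕ) < d <;> simp [hs] <;> ring
    _ = (1 - A) * (∑ s : Fin n, x s ^ 2) + ((A * U + Bv * W) * U + (Bv * U + A * W) * W) := by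
        rw [Finset.sum_add_distrib, Finset.sum_add_distrib, ← Finset.mul_sum, ← Finset.mul_sum,
          ← Finset.mul_sum, ← hU, ← hW]
    _ = _ := by ring

theorem stmt_3 (d : ℕ) (hd : 0 < d) (n : ℕ) (hn : n = 2 * d) (hn4 : 4 ≤ n)
    (a b : ℕ → ℝ)
    (hb : ∀ j ∈ Finset.Icc 1 (d - 1), b j = 4 / n - (1 - 2 / n) * a j)
    (hbd : b d = 2 / n - (1 - 2 / n) * a d)
    (X : ℕ → Matrix (Fin n) (Fin n) ℝ)
    (hX : ∀ j, ∀ s t : Fin n, X j s t =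
      if s = t then 0
      else if (((s : ℕ) < d) ↔ ((t : ℕ) < d)) then a j else b j) :
    ∀ k ∈ Finset.Icc 1 d,
      (((1 : Matrix (Fin n) (Fin n) ℝ) +
          ∑ j ∈ Finset.Icc 1 d, Real.cos (2 * Real.pi * j * k / n) • X j).PosSemidef ↔
        (-2 / ((n : ℝ) - 2) ≤ ∑ i ∈ Finset.Icc 1 d, Real.cos (2 * Real.pi * i * k / n) * a i ∧
          ∑ i ∈ Finset.Icc 1 d, Real.cos (2 * Real.pi * i * k / n) * a i ≤ 1)) := by
  intro k hk
  rw [Finset.mem_Icc] at hk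
  obtain ⟨hk1, hkd⟩ := hk
  have hd2 : 2 ≤ d := by omega
  have hdR : (0 : ℝ) < d := by exact_mod_cast hd
  have hd2R : (2 : ℝ) ≤ d := by exact_mod_cast hd2
  have hnR : (n : ℝ) = 2 * d := by rw [hn]; push_cast; ring
  have hnne : (n : ℝ) ≠ 0 := by rw [hnR]; positivity
  have hdne : (d : ℝ) ≠ 0 := ne_of_gt hdR
  have hcarg : ∀ j : ℕ, 2 * Real.pi * (j : ℝ) * k / n = (j : ℝ) * (Real.pi * k / d) := by
    intro j; rw [hnR]; field_simp
  have hS : ∑ j ∈ Finset.Icc 1 d, Real.cos (2 * Real.pi * (j : ℝ) * k / n)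
      = (Real.cos (Real.pi * k) - 1) / 2 := by
    rw [← cos_sum d k hd hk1 hkd]
    exact Finset.sum_congr rfl fun j _ => by rw [hcarg]
  have hcd : Real.cos (2 * Real.pi * (d : ℝ) * k / n) = Real.cos (Real.pi * k) := by
    rw [hcarg d]; congr 1; field_simp
  set A := ∑ i ∈ Finset.Icc 1 d, Real.cos (2 * Real.pi * (i : ℝ) * k / n) * a i with hAdef
  have hB : ∑ i ∈ Finset.Icc 1 d, Real.cos (2 * Real.pi * (i : ℝ) * k / n) * b i
      = -2 / (n : ℝ) - (1 - 2 / (n : ℝ)) * A := by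
    clear hcarg hX
    obtain ⟨e, rfl⟩ : ∃ e, d = e + 1 := ⟨d - 1, by omega⟩
    rw [Finset.sum_Icc_succ_top (by omega : 1 ≤ e + 1)]
    have hQa : ∑ j ∈ Finset.Icc 1 e, Real.cos (2 * Real.pi * (j : ℝ) * k / n) * b j
        = 4 / (n : ℝ) * (∑ j ∈ Finset.Icc 1 e, Real.cos (2 * Real.pi * (j : ℝ) * k / n))
          - (1 - 2 / (n : ℝ)) *
            (∑ j ∈ Finset.Icc 1 e, Real.cos (2 * Real.pi * (j : ℝ) * k / n) * a j) := by
      rw [Finset.mul_sum, Finset.mul_sum, ← Finset.sum_sub_distrib]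
      refine Finset.sum_congr rfl fun j hj => ?_
      rw [hb j (by simpa using hj)]
      ring
    have hSs := hS
    rw [Finset.sum_Icc_succ_top (by omega : 1 ≤ e + 1), hcd] at hSs
    have hAs := hAdef
    rw [Finset.sum_Icc_succ_top (by omega : 1 ≤ e + 1), hcd] at hAs
    rw [hQa, hbd, hcd]
    linear_combination (4 / (n : ℝ)) * hSs + (1 - 2 / (n : ℝ)) * hAs
  set M := (1 : Matrix (Fin n) (Fin n) ℝ) +
      ∑ j ∈ Finset.Icc 1 d, Real.cos (2 * Real.pi * (j : ℝ) * k / n) • X j with hMdef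
  have hM : ∀ s t : Fin n, M s t =
      (1 - A) * (if s = t then 1 else 0) +
        (if (((s : ℕ) < d) ↔ ((t : ℕ) < d)) then A
          else (-2 / (n : ℝ) - (1 - 2 / (n : ℝ)) * A)) := by
    intro s t
    rw [hMdef, Matrix.add_apply, Matrix.sum_apply]
    simp only [Matrix.smul_apply, smul_eq_mul]
    by_cases hst : s = t
    · subst hst
      have hz : ∀ j ∈ Finset.Icc 1 d,
          Real.cos (2 * Real.pi * (j : ℝ) * k / n) * X j s s = 0 := fun j _ => by
        rw [hX]; simp
      rw [Finset.sum_congr rfl hz, Finset.sum_const_zero, Matrix.one_apply_eq,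
        if_pos rfl, if_pos (Iff.refl _)]
      ring
    · rw [Matrix.one_apply_ne hst, if_neg hst]
      by_cases hsame : (((s : ℕ) < d) ↔ ((t : ℕ) < d))
      · rw [if_pos hsame]
        have hz : ∀ j ∈ Finset.Icc 1 d,
            Real.cos (2 * Real.pi * (j : ℝ) * k / n) * X j s t
              = Real.cos (2 * Real.pi * (j : ℝ) * k / n) * a j := fun j _ => by
          rw [hX, if_neg hst, if_pos hsame]
        rw [Finset.sum_congr rfl hz, ← hAdef]
        ring
      · rw [if_neg hsame]
        have hz : ∀ j ∈ Finset.Icc 1 d,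
            Real.cos (2 * Real.pi * (j : ℝ) * k / n) * X j s t
              = Real.cos (2 * Real.pi * (j : ℝ) * k / n) * b j := fun j _ => by
          rw [hX, if_neg hst, if_neg hsame]
        rw [Finset.sum_congr rfl hz, hB]
        ring
  have hHerm : M.IsHermitian := by
    show Mᴴ = M
    ext i j
    rw [Matrix.conjTranspose_apply, star_trivial, hM j i, hM i j]
    by_cases h1 : j = i
    · subst h1; rfl
    · rw [if_neg h1, if_neg (show ¬ i = j from fun hh => h1 hh.symm)]
      by_cases h2 : (j : ℕ) < d <;> by_cases h3 : (i : ℕ) < d <;> simp [h2, h3]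
  clear_value A M
  constructor
  · intro hps
    have hq : ∀ x : Fin n → ℝ, 0 ≤ x ⬝ᵥ (M *ᵥ x) := fun x => by
      have := hps.dotProduct_mulVec_nonneg x
      simpa using this
    constructor
    · -- lower bound via the vector u
      set u := fun s : Fin n => if (s : ℕ) < d then (1 : ℝ) else -1 with hu
      have h0 := hq u
      rw [quad n d M A _ hM u] at h0
      have hUu : ∑ s : Fin n, (if (s : ℕ) < d then u s else 0) = (d : ℝ) := by
        rw [← cardU n d (by omega)]
        exact Finset.sum_congr rfl fun s _ => by
          by_cases h : (s : ℕ) < d <;> simp [hu, h]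
      have hWu : ∑ s : Fin n, (if (s : ℕ) < d then 0 else u s) = -(d : ℝ) := by
        have h1 : ∀ s : Fin n, (if (s : ℕ) < d then (0 : ℝ) else u s)
            = -(if (s : ℕ) < d then (0 : ℝ) else 1) := fun s => by
          by_cases h : (s : ℕ) < d <;> simp [hu, h]
        rw [Finset.sum_congr rfl fun s _ => h1 s, Finset.sum_neg_distrib, cardW n d hn]
      have hsqu : ∑ s : Fin n, u s ^ 2 = (n : ℝ) := by
        have h1 : ∀ s : Fin n, u s ^ 2 = (1 : ℝ) := fun s => by
          by_cases h : (s : ℕ) < d <;> simp [hu, h]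
        rw [Finset.sum_congr rfl fun s _ => h1 s, Finset.sum_const, Finset.card_univ,
          Fintype.card_fin, nsmul_eq_mul, mul_one]
      rw [hUu, hWu, hsqu, hnR] at h0
      have hexp : (1 - A) * (2 * (d : ℝ)) + A * ((d : ℝ) ^ 2 + (-(d : ℝ)) ^ 2)
          + 2 * (-2 / (2 * (d : ℝ)) - (1 - 2 / (2 * (d : ℝ))) * A) * ((d : ℝ) * -(d : ℝ))
          = 4 * (d : ℝ) + 4 * (d : ℝ) ^ 2 * A - 4 * (d : ℝ) * A := by
        field_simp; ring
      have h0' : 0 ≤ 4 * (d : ℝ) + 4 * (d : ℝ) ^ 2 * A - 4 * (d : ℝ) * A := by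
        rw [← hexp]; exact h0
      rw [hnR, div_le_iff₀ (by linarith : (0 : ℝ) < 2 * (d : ℝ) - 2)]
      nlinarith [h0', hdR]
    · -- upper bound via the vector v
      set v := fun s : Fin n => if (s : ℕ) = 0 then (1 : ℝ) else if (s : ℕ) = 1 then -1 else 0
        with hv
      have h0 := hq v
      rw [quad n d M A _ hM v] at h0
      have e0 : ∑ s : Fin n, (if (s : ℕ) = 0 then (1 : ℝ) else 0) = 1 := by
        rw [Fin.sum_univ_eq_sum_range (fun i => if i = 0 then (1 : ℝ) else 0) n,
          Finset.sum_ite_eq' (Finset.range n) 0 (fun _ => (1 : ℝ)),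
          if_pos (by simp; omega : 0 ∈ Finset.range n)]
      have e1 : ∑ s : Fin n, (if (s : ℕ) = 1 then (-1 : ℝ) else 0) = -1 := by
        rw [Fin.sum_univ_eq_sum_range (fun i => if i = 1 then (-1 : ℝ) else 0) n,
          Finset.sum_ite_eq' (Finset.range n) 1 (fun _ => (-1 : ℝ)),
          if_pos (by simp; omega : 1 ∈ Finset.range n)]
      have e1' : ∑ s : Fin n, (if (s : ℕ) = 1 then (1 : ℝ) else 0) = 1 := by
        rw [Fin.sum_univ_eq_sum_range (fun i => if i = 1 then (1 : ℝ) else 0) n,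
          Finset.sum_ite_eq' (Finset.range n) 1 (fun _ => (1 : ℝ)),
          if_pos (by simp; omega : 1 ∈ Finset.range n)]
      have hUv : ∑ s : Fin n, (if (s : ℕ) < d then v s else 0) = 0 := by
        have h1 : ∀ s : Fin n, (if (s : ℕ) < d then v s else 0)
            = (if (s : ℕ) = 0 then (1 : ℝ) else 0) + (if (s : ℕ) = 1 then (-1 : ℝ) else 0) := by
          intro s
          by_cases h2 : (s : ℕ) = 0
          · have h1 : (s : ℕ) < d := by omega
            simp [hv, h1, h2]
            try omega
          · by_cases h3 : (s : ℕ) = 1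
            · have h1 : (s : ℕ) < d := by omega
              simp [hv, h1, h2, h3]
              try omega
            · simp [hv, h2, h3]
        rw [Finset.sum_congr rfl fun s _ => h1 s, Finset.sum_add_distrib, e0, e1]
        ring
      have hWv : ∑ s : Fin n, (if (s : ℕ) < d then 0 else v s) = 0 := by
        have h1 : ∀ s : Fin n, (if (s : ℕ) < d then (0 : ℝ) else v s) = 0 := by
          intro s
          by_cases h : (s : ℕ) < d
          · simp [h]
          · have h2 : ¬ (s : ℕ) = 0 := by omega
            have h3 : ¬ (s : ℕ) = 1 := by omega
            simp [hv, h, h2, h3]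
        rw [Finset.sum_congr rfl fun s _ => h1 s, Finset.sum_const_zero]
      have hsqv : ∑ s : Fin n, v s ^ 2 = 2 := by
        have h1 : ∀ s : Fin n, v s ^ 2
            = (if (s : ℕ) = 0 then (1 : ℝ) else 0) + (if (s : ℕ) = 1 then (1 : ℝ) else 0) := by
          intro s
          by_cases h2 : (s : ℕ) = 0
          · have h3 : ¬ (s : ℕ) = 1 := by omega
            simp [hv, h2, h3]
          · by_cases h3 : (s : ℕ) = 1
            · simp [hv, h2, h3]
            · simp [hv, h2, h3]
        rw [Finset.sum_congr rfl fun s _ => h1 s, Finset.sum_add_distrib, e0, e1']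
        norm_num
      rw [hUv, hWv, hsqv] at h0
      nlinarith [h0]
  · rintro ⟨h1, h2⟩
    have hA2 : -2 ≤ A * (2 * (d : ℝ) - 2) := by
      rw [hnR, div_le_iff₀ (by linarith : (0 : ℝ) < 2 * (d : ℝ) - 2)] at h1
      exact h1
    refine Matrix.PosSemidef.of_dotProduct_mulVec_nonneg hHerm fun x => ?_
    have hstx : star x = x := funext fun i => star_trivial _
    rw [hstx, quad n d M A _ hM x]
    have hsplit : ∑ s : Fin n, x s ^ 2
        = (∑ s : Fin n, if (s : ℕ) < d then x s ^ 2 else 0)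
          + ∑ s : Fin n, (if (s : ℕ) < d then 0 else x s ^ 2) := by
      rw [← Finset.sum_add_distrib]
      exact Finset.sum_congr rfl fun s _ => by split_ifs <;> ring
    rw [hsplit, hnR]
    set U := ∑ s : Fin n, if (s : ℕ) < d then x s else 0 with hUdef
    set W := ∑ s : Fin n, if (s : ℕ) < d then 0 else x s with hWdef
    set TU := ∑ s : Fin n, if (s : ℕ) < d then x s ^ 2 else 0 with hTUdef
    set TW := ∑ s : Fin n, (if (s : ℕ) < d then 0 else x s ^ 2) with hTWdef
    have hCU : U ^ 2 ≤ (d : ℝ) * TU := by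
      have h := cs_aux n (fun s : Fin n => (s : ℕ) < d) x
      rw [cardU n d (by omega)] at h
      rw [hUdef, hTUdef]
      exact h
    have hCW : W ^ 2 ≤ (d : ℝ) * TW := by
      have h := cs_aux n (fun s : Fin n => ¬ ((s : ℕ) < d)) x
      have g1 : ∑ s : Fin n, (if ¬ ((s : ℕ) < d) then x s else 0) = W := by
        rw [hWdef]
        exact Finset.sum_congr rfl fun s _ => by by_cases hh : (s : ℕ) < d <;> simp [hh]
      have g2 : ∑ s : Fin n, (if ¬ ((s : ℕ) < d) then (1 : ℝ) else 0) = (d : ℝ) := by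
        rw [← cardW n d hn]
        exact Finset.sum_congr rfl fun s _ => by by_cases hh : (s : ℕ) < d <;> simp [hh]
      have g3 : ∑ s : Fin n, (if ¬ ((s : ℕ) < d) then x s ^ 2 else 0) = TW := by
        rw [hTWdef]
        exact Finset.sum_congr rfl fun s _ => by by_cases hh : (s : ℕ) < d <;> simp [hh]
      rw [g1, g2, g3] at h
      exact h
    clear_value U W TU TW
    have key : (1 - A) * (TU + TW) + A * (U ^ 2 + W ^ 2)
        + 2 * (-2 / (2 * (d : ℝ)) - (1 - 2 / (2 * (d : ℝ))) * A) * (U * W)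
        = ((1 - A) / d) * ((d : ℝ) * TU - U ^ 2) + ((1 - A) / d) * ((d : ℝ) * TW - W ^ 2)
          + ((2 + A * (2 * (d : ℝ) - 2)) / (2 * (d : ℝ))) * (U - W) ^ 2 := by
      field_simp; ring
    rw [key]
    have t1 : 0 ≤ (1 - A) / (d : ℝ) := by
      apply div_nonneg <;> linarith
    have t4 : 0 ≤ (2 + A * (2 * (d : ℝ) - 2)) / (2 * (d : ℝ)) := by
      apply div_nonneg <;> linarith
    have t2 : 0 ≤ (d : ℝ) * TU - U ^ 2 := by linarith
    have t3 : 0 ≤ (d : ℝ) * TW - W ^ 2 := by linarith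
    exact add_nonneg (add_nonneg (mul_nonneg t1 t2) (mul_nonneg t1 t3))
      (mul_nonneg t4 (sq_nonneg (U - W)))
end

section
/- Let n = 2d be an even positive integer with n ≥ 4, and for i = 1,...,d let a_i = (2/(n−2))·(cos(πi/d) + 1). For each k = 1,...,d define a^(k) = ∑_{i=1}^d cos(2πik/n)·a_i. Then a^(1) = (d−2)/(n−2), and a^(k) = −2/(n−2) for every k with 2 ≤ k ≤ d. -/
open Finset

lemma cosC (d m : ℕ) (hd : 0 < d) (hm1 : 1 ≤ m) (hm2 : m < 2 * d) :
    ∑ i ∈ Finset.Icc 1 d, Real.cos (Real.pi * m * i / d) = ((-1 : ℝ) ^ m - 1) / 2 := by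
  have hdR : (d : ℝ) ≠ 0 := Nat.cast_ne_zero.2 hd.ne'
  have hdpos : (0 : ℝ) < d := by positivity
  set θ : ℝ := Real.pi * m / d with hθ
  have hs : Real.sin (θ / 2) ≠ 0 := by
    have h1 : 0 < θ / 2 := by
      have : (0 : ℝ) < m := by exact_mod_cast hm1
      have := Real.pi_pos
      positivity
    have h2 : θ / 2 < Real.pi := by
      rw [hθ]
      rw [div_lt_iff₀ (by norm_num : (0:ℝ) < 2), div_lt_iff₀ hdpos]
      have hm2R : (m : ℝ) < 2 * d := by exact_mod_cast hm2
      nlinarith [Real.pi_pos]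
    exact (Real.sin_pos_of_pos_of_lt_pi h1 h2).ne'
  have tele := Finset.sum_range_sub (fun j : ℕ => Real.sin (θ * j + θ / 2)) d
  have key : (∑ i ∈ Finset.range d, Real.cos (Real.pi * m * (1 + i : ℕ) / d))
        * (2 * Real.sin (θ / 2))
      = Real.sin (θ * d + θ / 2) - Real.sin (θ * (0:ℕ) + θ / 2) := by
    rw [Finset.sum_mul, ← tele]
    refine Finset.sum_congr rfl fun i _ => ?_
    have ha : Real.pi * m * ((1 + i : ℕ) : ℝ) / d = θ * ((i:ℝ) + 1) := by
      rw [hθ]; push_cast; ring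
    rw [ha, Real.sin_sub_sin]
    push_cast
    ring_nf
  have hsum : (∑ i ∈ Finset.range d, Real.cos (Real.pi * m * (1 + i : ℕ) / d))
      = (Real.sin (θ * d + θ / 2) - Real.sin (θ * (0:ℕ) + θ / 2)) / (2 * Real.sin (θ / 2)) := by
    rw [← key]; field_simp
  have hIcc : Finset.Icc 1 d = Finset.Ico 1 (d + 1) := by rw [Finset.Ico_add_one_right_eq_Icc]
  rw [hIcc, Finset.sum_Ico_eq_sum_range]
  simp only [Nat.add_sub_cancel]
  rw [hsum]
  have hθd : θ * d = m * Real.pi := by rw [hθ]; field_simp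
  rw [hθd, show (m : ℝ) * Real.pi + θ / 2 = θ / 2 + m * Real.pi by ring,
    Real.sin_add_nat_mul_pi]
  rw [Nat.cast_zero, mul_zero, zero_add]
  field_simp

theorem stmt_5 (d : ℕ) (hd : 0 < d) (n : ℕ) (hn : n = 2 * d) (hn4 : 4 ≤ n)
    (a : ℕ → ℝ)
    (ha : ∀ i, a i = (2 / ((n : ℝ) - 2)) * (Real.cos (Real.pi * i / d) + 1)) :
    (∑ i ∈ Finset.Icc 1 d, Real.cos (2 * Real.pi * i * 1 / n) * a i
        = ((d : ℝ) - 2) / ((n : ℝ) - 2)) ∧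
    (∀ k, 2 ≤ k → k ≤ d →
      ∑ i ∈ Finset.Icc 1 d, Real.cos (2 * Real.pi * i * k / n) * a i
        = -2 / ((n : ℝ) - 2)) := by
  have hd2 : 2 ≤ d := by omega
  have hdR : (d : ℝ) ≠ 0 := Nat.cast_ne_zero.2 hd.ne'
  have hnR : (n : ℝ) = 2 * d := by exact_mod_cast congrArg (Nat.cast : ℕ → ℝ) hn
  have hn2 : (n : ℝ) - 2 ≠ 0 := by
    have : (4 : ℝ) ≤ n := by exact_mod_cast hn4
    linarith
  constructor
  · have e : ∀ i ∈ Finset.Icc 1 d, Real.cos (2 * Real.pi * i * 1 / n) * a i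
        = (2 / ((n : ℝ) - 2)) * ((Real.cos (Real.pi * (2:ℕ) * i / d) + 1) / 2
          + Real.cos (Real.pi * (1:ℕ) * i / d)) := by
      intro i _
      rw [ha i]
      have hA : 2 * Real.pi * (i:ℝ) * 1 / n = Real.pi * i / d := by
        rw [hnR]; field_simp
      have hA2 : Real.pi * ((2:ℕ):ℝ) * i / d = 2 * (Real.pi * i / d) := by
        push_cast; ring
      have hA1 : Real.pi * ((1:ℕ):ℝ) * i / d = Real.pi * i / d := by
        push_cast; ring
      rw [hA, hA2, hA1, Real.cos_two_mul]
      ring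
    rw [Finset.sum_congr rfl e, ← Finset.mul_sum]
    have hC2 := cosC d 2 hd (by norm_num) (by omega)
    have hC1 := cosC d 1 hd le_rfl (by omega)
    rw [Finset.sum_add_distrib, ← Finset.sum_div, Finset.sum_add_distrib, hC2, hC1,
      Finset.sum_const, Nat.card_Icc, Nat.add_sub_cancel, nsmul_eq_mul, mul_one, hnR]
    have h2d : (2:ℝ) * d - 2 ≠ 0 := by rw [← hnR]; exact hn2
    field_simp
    ring
  · intro k hk2 hkd
    obtain ⟨j, rfl⟩ : ∃ j, k = j + 2 := ⟨k - 2, by omega⟩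
    have e : ∀ i ∈ Finset.Icc 1 d, Real.cos (2 * Real.pi * i * ((j+2 : ℕ) : ℝ) / n) * a i
        = (2 / ((n : ℝ) - 2)) * ((Real.cos (Real.pi * (j+3 : ℕ) * i / d)
            + Real.cos (Real.pi * (j+1 : ℕ) * i / d)) / 2
          + Real.cos (Real.pi * (j+2 : ℕ) * i / d)) := by
      intro i _
      rw [ha i]
      have hA : 2 * Real.pi * (i:ℝ) * ((j+2:ℕ):ℝ) / n = Real.pi * ((j+2:ℕ):ℝ) * i / d := by
        rw [hnR]; push_cast; field_simp
      have h3 : Real.pi * ((j+3:ℕ):ℝ) * i / d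
          = Real.pi * ((j+2:ℕ):ℝ) * i / d + Real.pi * i / d := by
        push_cast; ring
      have h1 : Real.pi * ((j+1:ℕ):ℝ) * i / d
          = Real.pi * ((j+2:ℕ):ℝ) * i / d - Real.pi * i / d := by
        push_cast; ring
      rw [hA, h3, h1, Real.cos_add, Real.cos_sub]
      ring
    rw [Finset.sum_congr rfl e, ← Finset.mul_sum]
    have hC3 := cosC d (j+3) hd (by omega) (by omega)
    have hC1 := cosC d (j+1) hd (by omega) (by omega)
    have hC2 := cosC d (j+2) hd (by omega) (by omega)
    rw [Finset.sum_add_distrib, ← Finset.sum_div, Finset.sum_add_distrib, hC3, hC1, hC2]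
    field_simp
    ring
end

section
/- Let n = 2d be an even positive integer with n ≥ 4. For i = 1,...,d let a_i = (2/(n−2))·(cos(πi/d) + 1), and set b_j = 4/n − (1 − 2/n)a_j for j = 1,...,d−1 and b_d = 2/n − (1 − 2/n)a_d. Partition {1,...,n} into U = {1,...,d} and W = {d+1,...,n}, and for j = 1,...,d define X^(j) to be the symmetric n×n matrix with zero diagonal whose (s,t) entry for s ≠ t equals a_j if s and t lie in the same part and b_j otherwise. Then X^(1),...,X^(d) is a feasible SDP solution: each X^(j) is symmetric with nonnegative entries, ∑_{j=1}^d X^(j) = J − I, and for each k = 1,...,d the matrix I + ∑_{j=1}^d cos(2πjk/n)·X^(j) is positive semidefinite. -/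
open Matrix

section helpers

lemma reo' (ω : ℂ) (h1 : ω ≠ 1) (h2 : ω * (starRingEnd ℂ) ω = 1) :
    (ω / (1 - ω)).re = -1/2 := by
  have hω1 : (1 : ℂ) - ω ≠ 0 := sub_ne_zero.2 (Ne.symm h1)
  have hc1 : (starRingEnd ℂ) ω ≠ 1 := by
    intro h
    rw [h, mul_one] at h2
    exact h1 h2
  have hω2 : (1 : ℂ) - (starRingEnd ℂ) ω ≠ 0 := sub_ne_zero.2 (Ne.symm hc1)
  have key : ω / (1 - ω) + (starRingEnd ℂ) (ω / (1 - ω)) = (-1 : ℂ) := by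
    rw [map_div₀, map_sub, _root_.map_one]
    field_simp
    linear_combination (-1 : ℂ) * h2
  rw [Complex.add_conj] at key
  have : 2 * (ω / (1 - ω)).re = -1 := by exact_mod_cast key
  linarith

lemma costimes (x y : ℝ) : Real.cos x * Real.cos y = (Real.cos (x - y) + Real.cos (x + y)) / 2 := by
  rw [Real.cos_add, Real.cos_sub]; ring

lemma cosnatpi (k : ℕ) : Real.cos ((k : ℝ) * Real.pi) = (-1 : ℝ) ^ k := by
  rw [show (k : ℝ) * Real.pi = (k : ℝ) * Real.pi - 0 by ring, Real.cos_nat_mul_pi_sub,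
    Real.cos_zero, mul_one]

lemma Ssum (d m : ℕ) (hd : 0 < d) (hm0 : 0 < m) (hm : m < 2 * d) :
    ∑ j ∈ Finset.Icc 1 d, Real.cos (Real.pi * m * j / d) =
      if Odd m then -1 else 0 := by
  have hdR : (0 : ℝ) < d := by exact_mod_cast hd
  set θ : ℝ := Real.pi * m / d with hθ
  set ω : ℂ := Complex.exp (θ * Complex.I) with hω
  have hpow : ∀ j : ℕ, ω ^ j = Complex.exp ((Real.pi * m * j / d : ℝ) * Complex.I) := by
    intro j
    rw [hω, ← Complex.exp_nat_mul]
    congr 1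
    push_cast [hθ]
    ring
  have hre : ∀ j : ℕ, (ω ^ j).re = Real.cos (Real.pi * m * j / d) := by
    intro j
    rw [hpow j, Complex.exp_ofReal_mul_I_re]
  have hω1 : ω ≠ 1 := by
    rw [hω]
    intro h
    rw [Complex.exp_eq_one_iff] at h
    obtain ⟨z, hz⟩ := h
    have hI : (θ : ℂ) = z * (2 * Real.pi) := by
      have := mul_right_cancel₀ Complex.I_ne_zero (by rw [hz]; push_cast; ring_nf : (θ : ℂ) * Complex.I = (z * (2 * Real.pi)) * Complex.I)
      exact this
    have hR : θ = z * (2 * Real.pi) := by exact_mod_cast hI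
    rw [hθ] at hR
    have hmz : (m : ℝ) = 2 * z * d := by
      field_simp at hR
      nlinarith [Real.pi_pos, hR]
    have hzz : (m : ℤ) = 2 * z * d := by exact_mod_cast hmz
    have hdz : (1 : ℤ) ≤ d := by exact_mod_cast hd
    have hmz1 : (1 : ℤ) ≤ m := by exact_mod_cast hm0
    have hmz2 : (m : ℤ) < 2 * d := by exact_mod_cast hm
    have hz1 : 1 ≤ z := by nlinarith
    nlinarith
  have hωd : ω ^ d = (-1 : ℂ) ^ m := by
    rw [hω, ← Complex.exp_nat_mul]
    have : (d : ℂ) * (θ * Complex.I) = m * (Real.pi * Complex.I) := by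
      have hdC : (d : ℂ) ≠ 0 := by exact_mod_cast hdR.ne'
      rw [hθ]
      push_cast
      field_simp
    rw [this, Complex.exp_nat_mul, Complex.exp_pi_mul_I]
  have hsum : ∑ j ∈ Finset.Icc 1 d, Real.cos (Real.pi * m * j / d)
      = ((ω ^ (d + 1) - 1) / (ω - 1) - 1).re := by
    have hins : Finset.range (d + 1) = insert 0 (Finset.Icc 1 d) := by
      ext x; simp; omega
    have h0 : (0 : ℕ) ∉ Finset.Icc 1 d := by simp
    have := geom_sum_eq hω1 (d + 1)
    rw [hins, Finset.sum_insert h0, pow_zero] at this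
    have h2 : ∑ j ∈ Finset.Icc 1 d, ω ^ j = (ω ^ (d + 1) - 1) / (ω - 1) - 1 := by
      linear_combination this
    rw [← h2, Complex.re_sum]
    exact Finset.sum_congr rfl fun j _ => (hre j).symm
  rw [hsum]
  have hωm1 : ω - 1 ≠ 0 := sub_ne_zero.2 hω1
  rcases Nat.even_or_odd m with he | ho
  · rw [if_neg (Nat.not_odd_iff_even.mpr he)]
    have : ω ^ (d + 1) = ω := by
      rw [pow_succ, hωd, he.neg_one_pow, one_mul]
    rw [this, div_self hωm1]
    norm_num
  · rw [if_pos ho]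
    have hpow1 : ω ^ (d + 1) = -ω := by
      rw [pow_succ, hωd, ho.neg_one_pow]
      ring
    have h1ω : (1 : ℂ) - ω ≠ 0 := sub_ne_zero.2 (Ne.symm hω1)
    have heq : (ω ^ (d + 1) - 1) / (ω - 1) - 1 = 2 * (ω / (1 - ω)) := by
      rw [hpow1]
      field_simp
      ring
    rw [heq]
    have hconj : ω * (starRingEnd ℂ) ω = 1 := by
      rw [Complex.mul_conj, Complex.normSq_eq_norm_sq, hω, Complex.norm_exp_ofReal_mul_I]
      norm_num
    have := reo' ω hω1 hconj
    simp only [Complex.mul_re, Complex.re_ofNat, Complex.im_ofNat, this]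
    ring

lemma psd_aux (d n : ℕ) (hn : n = 2 * d) (hd : 2 ≤ d) (A B : ℝ)
    (hA : A ≤ 1) (hB1 : (d : ℝ) * B ≤ 1 + ((d : ℝ) - 1) * A)
    (hB2 : -(1 + ((d : ℝ) - 1) * A) ≤ (d : ℝ) * B)
    (M : Matrix (Fin n) (Fin n) ℝ)
    (hM : ∀ s t : Fin n, M s t =
      if s = t then 1 else if (((s : ℕ) < d) ↔ ((t : ℕ) < d)) then A else B) :
    M.PosSemidef := by
  have hdR : (2 : ℝ) ≤ (d : ℝ) := by exact_mod_cast hd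
  refine Matrix.PosSemidef.of_dotProduct_mulVec_nonneg ?_ ?_
  · -- Hermitian
    ext s t
    simp only [conjTranspose_apply, hM, star_trivial]
    by_cases h : s = t
    · simp [h]
    · rw [if_neg (fun e => h e.symm), if_neg h]
      by_cases h2 : (((s : ℕ) < d) ↔ ((t : ℕ) < d))
      · rw [if_pos h2.symm, if_pos h2]
      · rw [if_neg (fun e => h2 e.symm), if_neg h2]
  · intro x
    simp only [star_trivial]
    set U : Finset (Fin n) := Finset.univ.filter (fun s : Fin n => (s : ℕ) < d) with hUdef
    set W : Finset (Fin n) := Finset.univ.filter (fun s : Fin n => ¬ (s : ℕ) < d) with hWdef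
    have hUcard : U.card = d := by
      rw [hUdef, Finset.card_filter]
      rw [Fin.sum_univ_eq_sum_range (fun i => if i < d then (1 : ℕ) else 0)]
      rw [← Finset.card_filter]
      rw [show (Finset.range n).filter (fun i => i < d) = Finset.range d by
        ext i; simp; omega]
      exact Finset.card_range d
    have hWcard : W.card = d := by
      have := Finset.card_filter_add_card_filter_not
        (s := (Finset.univ : Finset (Fin n))) (p := fun s : Fin n => (s : ℕ) < d)
      rw [← hUdef, ← hWdef] at this  -- may fail; fix later
      simp [Finset.card_univ] at this
      omega
    set u : ℝ := ∑ s ∈ U, x s with hu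
    set w : ℝ := ∑ s ∈ W, x s with hw
    set p : ℝ := ∑ s ∈ U, (x s) ^ 2 with hp
    set q : ℝ := ∑ s ∈ W, (x s) ^ 2 with hq
    have hsU : ∀ s : Fin n, (s : ℕ) < d → s ∈ U := by
      intro s hs; rw [hUdef]; simp [hs]
    have hsW : ∀ s : Fin n, ¬ (s : ℕ) < d → s ∈ W := by
      intro s hs; rw [hWdef]; simp only [Finset.mem_filter, Finset.mem_univ, true_and]; exact hs
    have hinner : ∀ s : Fin n, (∑ t : Fin n, M s t * x t) =
        (1 - A) * x s + (if (s : ℕ) < d then A * u + B * w else A * w + B * u) := by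
      intro s
      rw [← Finset.sum_filter_add_sum_filter_not Finset.univ
        (fun t : Fin n => (t : ℕ) < d) (fun t => M s t * x t), ← hUdef, ← hWdef]
      have eU : ∀ pf : (s : ℕ) < d, ∑ t ∈ U, M s t * x t
          = A * u + (1 - A) * x s := by
        intro pf
        have step : ∀ t ∈ U, M s t * x t = A * x t + (if t = s then (1 - A) * x t else 0) := by
          intro t ht
          rw [hUdef, Finset.mem_filter] at ht
          rw [hM]
          by_cases hts : s = t
          · subst hts; rw [if_pos rfl, if_pos rfl]; ring
          · rw [if_neg hts, if_pos (iff_of_true pf ht.2), if_neg (fun e => hts e.symm)]; ring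
        rw [Finset.sum_congr rfl step, Finset.sum_add_distrib, ← Finset.mul_sum, ← hu,
          Finset.sum_ite_eq' U s (fun t => (1 - A) * x t), if_pos (hsU s pf)]
      have eWB : ∀ pf : (s : ℕ) < d, ∑ t ∈ W, M s t * x t = B * w := by
        intro pf
        have step : ∀ t ∈ W, M s t * x t = B * x t := by
          intro t ht
          rw [hWdef, Finset.mem_filter] at ht
          rw [hM, if_neg (fun e => ht.2 (by rw [← e]; exact pf)), if_neg (fun e => ht.2 (e.mp pf))]
        rw [Finset.sum_congr rfl step, ← Finset.mul_sum, ← hw]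
      have eW : ∀ pf : ¬ (s : ℕ) < d, ∑ t ∈ W, M s t * x t
          = A * w + (1 - A) * x s := by
        intro pf
        have step : ∀ t ∈ W, M s t * x t = A * x t + (if t = s then (1 - A) * x t else 0) := by
          intro t ht
          rw [hWdef, Finset.mem_filter] at ht
          rw [hM]
          by_cases hts : s = t
          · subst hts; rw [if_pos rfl, if_pos rfl]; ring
          · rw [if_neg hts, if_pos (iff_of_false pf ht.2), if_neg (fun e => hts e.symm)]; ring
        rw [Finset.sum_congr rfl step, Finset.sum_add_distrib, ← Finset.mul_sum, ← hw,
          Finset.sum_ite_eq' W s (fun t => (1 - A) * x t), if_pos (hsW s pf)]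
      by_cases hs : (s : ℕ) < d
      · rw [if_pos hs, eU hs, eWB hs]; ring
      · rw [if_neg hs]
        have stepU : ∀ t ∈ U, M s t * x t = B * x t := by
          intro t ht
          rw [hUdef, Finset.mem_filter] at ht
          rw [hM, if_neg (fun e => hs (by rw [e]; exact ht.2)), if_neg (fun e => hs (e.mpr ht.2))]
        rw [Finset.sum_congr rfl stepU, ← Finset.mul_sum, ← hu, eW hs]; ring
    have hform : x ⬝ᵥ M *ᵥ x = (1 - A) * (p + q) + A * (u ^ 2 + w ^ 2) + 2 * B * (u * w) := by
      have hexp : x ⬝ᵥ M *ᵥ x = ∑ s : Fin n, x s * ∑ t : Fin n, M s t * x t := by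
        simp [dotProduct, Matrix.mulVec]
      rw [hexp, Finset.sum_congr rfl (fun s _ => by rw [hinner s]),
        ← Finset.sum_filter_add_sum_filter_not Finset.univ (fun s : Fin n => (s : ℕ) < d),
        ← hUdef, ← hWdef]
      have cU : ∀ s ∈ U, x s * ((1 - A) * x s + if (s : ℕ) < d then A * u + B * w else A * w + B * u)
          = (1 - A) * x s ^ 2 + (A * u + B * w) * x s := by
        intro s hsm
        rw [hUdef, Finset.mem_filter] at hsm
        rw [if_pos hsm.2]; ring
      have cW : ∀ s ∈ W, x s * ((1 - A) * x s + if (s : ℕ) < d then A * u + B * w else A * w + B * u)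
          = (1 - A) * x s ^ 2 + (A * w + B * u) * x s := by
        intro s hsm
        rw [hWdef, Finset.mem_filter] at hsm
        rw [if_neg hsm.2]; ring
      rw [Finset.sum_congr rfl cU, Finset.sum_congr rfl cW,
        Finset.sum_add_distrib, Finset.sum_add_distrib, ← Finset.mul_sum, ← Finset.mul_sum,
        ← Finset.mul_sum, ← Finset.mul_sum, ← hu, ← hw, ← hp, ← hq]
      ring
    have hcs1 : u ^ 2 ≤ (d : ℝ) * p := by
      have := sq_sum_le_card_mul_sum_sq (s := U) (f := x)
      rw [hUcard] at this
      exact_mod_cast this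
    have hcs2 : w ^ 2 ≤ (d : ℝ) * q := by
      have := sq_sum_le_card_mul_sum_sq (s := W) (f := x)
      rw [hWcard] at this
      exact_mod_cast this
    rw [hform]
    have hd0 : (0 : ℝ) < d := by linarith
    have hγ1 : 0 ≤ (1 + ((d:ℝ) - 1) * A) + (d : ℝ) * B := by linarith
    have hγ2 : 0 ≤ (1 + ((d:ℝ) - 1) * A) - (d : ℝ) * B := by linarith
    have key : 0 ≤ (d : ℝ) * ((1 - A) * (p + q) + A * (u ^ 2 + w ^ 2) + 2 * B * (u * w)) := by
      nlinarith [mul_nonneg hγ1 (sq_nonneg (u + w)), mul_nonneg hγ2 (sq_nonneg (u - w)),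
        mul_nonneg (by linarith : (0:ℝ) ≤ 1 - A) (by linarith : (0:ℝ) ≤ (d:ℝ) * p - u ^ 2),
        mul_nonneg (by linarith : (0:ℝ) ≤ 1 - A) (by linarith : (0:ℝ) ≤ (d:ℝ) * q - w ^ 2)]
    nlinarith [key, hd0]

end helpers

theorem stmt_6 (d : ℕ) (hd : 0 < d) (n : ℕ) (hn : n = 2 * d) (hn4 : 4 ≤ n)
    (a b : ℕ → ℝ)
    (ha : ∀ i, a i = (2 / ((n : ℝ) - 2)) * (Real.cos (Real.pi * i / d) + 1))
    (hb : ∀ j ∈ Finset.Icc 1 (d - 1), b j = 4 / n - (1 - 2 / n) * a j)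
    (hbd : b d = 2 / n - (1 - 2 / n) * a d)
    (X : ℕ → Matrix (Fin n) (Fin n) ℝ)
    (hX : ∀ j, ∀ s t : Fin n, X j s t =
      if s = t then 0
      else if (((s : ℕ) < d) ↔ ((t : ℕ) < d)) then a j else b j) :
    (∀ j ∈ Finset.Icc 1 d, (X j).IsSymm ∧ ∀ s t : Fin n, 0 ≤ X j s t) ∧
    (∑ j ∈ Finset.Icc 1 d, X j) = Matrix.of (fun _ _ => (1 : ℝ)) - 1 ∧
    (∀ k ∈ Finset.Icc 1 d,
      ((1 : Matrix (Fin n) (Fin n) ℝ) +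
        ∑ j ∈ Finset.Icc 1 d, Real.cos (2 * Real.pi * j * k / n) • X j).PosSemidef) := by
  have hd2 : 2 ≤ d := by omega
  have hdR : (2 : ℝ) ≤ (d : ℝ) := by exact_mod_cast hd2
  have hd0R : (0 : ℝ) < (d : ℝ) := by linarith
  have hnR : (n : ℝ) = 2 * (d : ℝ) := by rw [hn]; push_cast; ring
  have hn2 : (0 : ℝ) < (n : ℝ) - 2 := by rw [hnR]; linarith
  have hn0 : (0 : ℝ) < (n : ℝ) := by linarith
  have hd1 : (d:ℝ) - 1 ≠ 0 := by linarith
  have had : a d = 0 := by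
    rw [ha, show Real.pi * (d : ℝ) / (d : ℝ) = Real.pi by field_simp, Real.cos_pi]
    ring
  have ha_nonneg : ∀ i, 0 ≤ a i := by
    intro i
    rw [ha]
    have := Real.neg_one_le_cos (Real.pi * i / d)
    have h2 : (0:ℝ) ≤ 2 / ((n : ℝ) - 2) := by positivity
    nlinarith
  have hb_nonneg : ∀ j ∈ Finset.Icc 1 d, 0 ≤ b j := by
    intro j hj
    rw [Finset.mem_Icc] at hj
    by_cases hjd : j = d
    · rw [hjd, hbd, had, mul_zero, sub_zero]
      positivity
    · have hj' : j ∈ Finset.Icc 1 (d - 1) := by rw [Finset.mem_Icc]; omega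
      rw [hb j hj', ha]
      have hc1 := Real.cos_le_one (Real.pi * j / d)
      have hc2 := Real.neg_one_le_cos (Real.pi * j / d)
      rw [hnR]
      have hkey : 4 / (2 * (d:ℝ)) - (1 - 2 / (2 * (d:ℝ))) *
          (2 / (2 * (d:ℝ) - 2) * (Real.cos (Real.pi * j / d) + 1))
          = (1 - Real.cos (Real.pi * j / d)) / (d:ℝ) := by
        have e1 : (2:ℝ) * (d:ℝ) - 2 ≠ 0 := by linarith
        have e2 : (d:ℝ) ≠ 0 := by linarith
        field_simp
        ring
      rw [hkey]
      apply div_nonneg (by linarith) (by linarith)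
  have hsplit : Finset.Icc 1 d = insert d (Finset.Icc 1 (d - 1)) := by
    ext x; simp; omega
  have hdnot : d ∉ Finset.Icc 1 (d - 1) := by simp; omega
  have hS0 : ∑ j ∈ Finset.Icc 1 d, Real.cos (Real.pi * ((0:ℕ) : ℝ) * j / d) = d := by
    simp [Nat.card_Icc]
  have sum_a : ∑ j ∈ Finset.Icc 1 d, a j = 1 := by
    have h1 := Ssum d 1 hd one_pos (by omega)
    rw [if_pos odd_one] at h1
    simp only [Nat.cast_one, mul_one] at h1
    calc ∑ j ∈ Finset.Icc 1 d, a j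
        = ∑ j ∈ Finset.Icc 1 d,
            ((2 / ((n:ℝ) - 2)) * Real.cos (Real.pi * j / d) + 2 / ((n:ℝ) - 2)) := by
          refine Finset.sum_congr rfl fun j _ => ?_
          rw [ha]; ring
      _ = (2 / ((n:ℝ) - 2)) * (∑ j ∈ Finset.Icc 1 d, Real.cos (Real.pi * j / d))
            + (d : ℝ) * (2 / ((n:ℝ) - 2)) := by
          rw [Finset.sum_add_distrib, ← Finset.mul_sum, Finset.sum_const, Nat.card_Icc,
            Nat.add_sub_cancel, nsmul_eq_mul]
      _ = 1 := by
          rw [h1, hnR]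
          have e1 : (2:ℝ) * (d:ℝ) - 2 ≠ 0 := by linarith
          field_simp
          ring
  have sum_a' : ∑ j ∈ Finset.Icc 1 (d - 1), a j = 1 := by
    have := sum_a
    rw [hsplit, Finset.sum_insert hdnot, had, zero_add] at this
    exact this
  have hcard' : ((d - 1 : ℕ) : ℝ) = (d : ℝ) - 1 := by
    push_cast [Nat.cast_sub (by omega : 1 ≤ d)]
    ring
  have sum_b : ∑ j ∈ Finset.Icc 1 d, b j = 1 := by
    rw [hsplit, Finset.sum_insert hdnot, hbd, had,
      Finset.sum_congr rfl (fun j hj => hb j hj), Finset.sum_sub_distrib,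
      Finset.sum_const, ← Finset.mul_sum, sum_a', Nat.card_Icc, Nat.add_sub_cancel,
      nsmul_eq_mul, hcard', hnR]
    have e1 : (2:ℝ) * (d:ℝ) - 2 ≠ 0 := by linarith
    have e2 : (d:ℝ) ≠ 0 := by linarith
    field_simp
    ring
  refine ⟨?_, ?_, ?_⟩
  · -- symmetry and nonnegativity
    intro j hj
    constructor
    · show (X j)ᵀ = X j
      ext s t
      rw [Matrix.transpose_apply, hX, hX]
      by_cases h : s = t
      · subst h; rfl
      · rw [if_neg (fun e => h e.symm), if_neg h]
        by_cases h2 : (((s : ℕ) < d) ↔ ((t : ℕ) < d))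
        · rw [if_pos h2.symm, if_pos h2]
        · rw [if_neg (fun e => h2 e.symm), if_neg h2]
    · intro s t
      rw [hX]
      by_cases h : s = t
      · rw [if_pos h]
      · rw [if_neg h]
        by_cases h2 : (((s : ℕ) < d) ↔ ((t : ℕ) < d))
        · rw [if_pos h2]; exact ha_nonneg j
        · rw [if_neg h2]; exact hb_nonneg j hj
  · -- sum equals J - I
    ext s t
    rw [Matrix.sum_apply, Matrix.sub_apply, Matrix.of_apply]
    by_cases h : s = t
    · subst h
      rw [Matrix.one_apply_eq]
      simp [hX]
    · rw [Matrix.one_apply_ne h, sub_zero]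
      by_cases h2 : (((s : ℕ) < d) ↔ ((t : ℕ) < d))
      · rw [Finset.sum_congr rfl (fun j _ => by rw [hX, if_neg h, if_pos h2])]
        exact sum_a
      · rw [Finset.sum_congr rfl (fun j _ => by rw [hX, if_neg h, if_neg h2])]
        exact sum_b
  · -- PSD
    intro k hk
    rw [Finset.mem_Icc] at hk
    obtain ⟨hk1, hkd⟩ := hk
    set A : ℝ := ∑ j ∈ Finset.Icc 1 d, Real.cos (2 * Real.pi * j * k / n) * a j with hA
    set B : ℝ := ∑ j ∈ Finset.Icc 1 d, Real.cos (2 * Real.pi * j * k / n) * b j with hB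
    have hcos : ∀ j : ℕ, Real.cos (2 * Real.pi * j * k / n) = Real.cos (Real.pi * k * j / d) := by
      intro j
      rw [hnR]
      congr 1
      field_simp
    have hM : ∀ s t : Fin n, ((1 : Matrix (Fin n) (Fin n) ℝ) +
        ∑ j ∈ Finset.Icc 1 d, Real.cos (2 * Real.pi * j * k / n) • X j) s t =
        if s = t then 1 else if (((s : ℕ) < d) ↔ ((t : ℕ) < d)) then A else B := by
      intro s t
      rw [Matrix.add_apply, Matrix.sum_apply]
      simp only [Matrix.smul_apply, smul_eq_mul]
      by_cases h : s = t
      · subst h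
        rw [if_pos rfl, Matrix.one_apply_eq,
          Finset.sum_congr rfl (fun j _ => by rw [hX, if_pos rfl, mul_zero])]
        simp
      · rw [if_neg h, Matrix.one_apply_ne h, zero_add]
        by_cases h2 : (((s : ℕ) < d) ↔ ((t : ℕ) < d))
        · rw [if_pos h2, hA]
          exact Finset.sum_congr rfl (fun j _ => by rw [hX, if_neg h, if_pos h2])
        · rw [if_neg h2, hB]
          exact Finset.sum_congr rfl (fun j _ => by rw [hX, if_neg h, if_neg h2])
    have hterm : ∀ j : ℕ, Real.cos (2 * Real.pi * j * k / n) * a j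
        = (2 / ((n:ℝ) - 2)) * ((Real.cos (Real.pi * ((k - 1 : ℕ) : ℝ) * j / d)
            + Real.cos (Real.pi * ((k + 1 : ℕ) : ℝ) * j / d)) / 2
          + Real.cos (Real.pi * (k : ℝ) * j / d)) := by
      intro j
      rw [hcos j, ha j,
        show Real.cos (Real.pi * (k:ℝ) * j / d) * (2 / ((n:ℝ) - 2) * (Real.cos (Real.pi * j / d) + 1))
          = (2 / ((n:ℝ) - 2)) * (Real.cos (Real.pi * (k:ℝ) * j / d) * Real.cos (Real.pi * j / d)
            + Real.cos (Real.pi * (k:ℝ) * j / d)) from by ring,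
        costimes,
        show Real.pi * (k:ℝ) * j / d - Real.pi * j / d = Real.pi * ((k - 1 : ℕ) : ℝ) * j / d from by
          rw [Nat.cast_sub hk1]; push_cast; ring,
        show Real.pi * (k:ℝ) * j / d + Real.pi * j / d = Real.pi * ((k + 1 : ℕ) : ℝ) * j / d from by
          push_cast; ring]
    have hAexp : A = (2 / ((n:ℝ) - 2)) *
        (((∑ j ∈ Finset.Icc 1 d, Real.cos (Real.pi * ((k - 1 : ℕ) : ℝ) * j / d))
          + ∑ j ∈ Finset.Icc 1 d, Real.cos (Real.pi * ((k + 1 : ℕ) : ℝ) * j / d)) / 2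
          + ∑ j ∈ Finset.Icc 1 d, Real.cos (Real.pi * (k : ℝ) * j / d)) := by
      rw [hA, Finset.sum_congr rfl (fun j _ => hterm j), ← Finset.mul_sum,
        Finset.sum_add_distrib, ← Finset.sum_div, Finset.sum_add_distrib]
    have hBexp : B = Real.cos (2 * Real.pi * d * k / n) * b d
        + ∑ j ∈ Finset.Icc 1 (d - 1), Real.cos (2 * Real.pi * j * k / n) * b j := by
      rw [hB, hsplit, Finset.sum_insert hdnot]
    have hcd : Real.cos (2 * Real.pi * (d:ℝ) * k / n) = (-1 : ℝ) ^ k := by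
      rw [hnR, show 2 * Real.pi * (d:ℝ) * k / (2 * (d:ℝ)) = (k:ℝ) * Real.pi from by
        field_simp, cosnatpi]
    have hsum_ca : ∑ j ∈ Finset.Icc 1 (d - 1), Real.cos (2 * Real.pi * j * k / n) * a j = A := by
      rw [hA, hsplit, Finset.sum_insert hdnot, had, mul_zero, zero_add]
    have hsum_c : ∑ j ∈ Finset.Icc 1 (d - 1), Real.cos (2 * Real.pi * j * k / n)
        = (∑ j ∈ Finset.Icc 1 d, Real.cos (Real.pi * (k:ℝ) * j / d)) - (-1 : ℝ) ^ k := by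
      rw [show ∑ j ∈ Finset.Icc 1 d, Real.cos (Real.pi * (k:ℝ) * j / d)
          = ∑ j ∈ Finset.Icc 1 d, Real.cos (2 * Real.pi * j * k / n) from
        Finset.sum_congr rfl (fun j _ => (hcos j).symm), hsplit, Finset.sum_insert hdnot, hcd]
      ring
    have hBval' : B = (-1 : ℝ) ^ k * (2 / (n:ℝ))
        + (4 / (n:ℝ)) * ((∑ j ∈ Finset.Icc 1 d, Real.cos (Real.pi * (k:ℝ) * j / d)) - (-1 : ℝ) ^ k)
        - (1 - 2 / (n:ℝ)) * A := by
      rw [hBexp, hcd, hbd, had, mul_zero, sub_zero,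
        Finset.sum_congr rfl (fun (j : ℕ) (hj : j ∈ Finset.Icc 1 (d - 1)) => show Real.cos (2 * Real.pi * j * k / n) * b j
          = (4 / (n:ℝ)) * Real.cos (2 * Real.pi * j * k / n)
            - (1 - 2 / (n:ℝ)) * (Real.cos (2 * Real.pi * j * k / n) * a j) from by
          rw [hb j hj]; ring),
        Finset.sum_sub_distrib, ← Finset.mul_sum, ← Finset.mul_sum, hsum_ca, hsum_c]
      ring
    have e1 : (2:ℝ) * (d:ℝ) - 2 ≠ 0 := by linarith
    have e2 : (d:ℝ) ≠ 0 := by linarith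
    have hSk := Ssum d k hd (by omega) (by omega)
    by_cases hk : k = 1
    · subst hk
      have hSm1 : ∑ j ∈ Finset.Icc 1 d, Real.cos (Real.pi * ((1 - 1 : ℕ) : ℝ) * j / d) = d := hS0
      have hSp1 : ∑ j ∈ Finset.Icc 1 d, Real.cos (Real.pi * ((1 + 1 : ℕ) : ℝ) * j / d) = 0 := by
        have := Ssum d 2 hd (by omega) (by omega)
        rw [if_neg (by decide)] at this
        exact this
      rw [if_pos (by decide)] at hSk
      have hAval : A = ((d:ℝ) - 2) / (2 * (d:ℝ) - 2) := by
        rw [hAexp, hSm1, hSp1, hSk, hnR]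
        field_simp
        ring
      have hBval : B = -(1/2) := by
        rw [hBval', hSk, hAval, hnR]
        norm_num
        field_simp
        ring
      have hkey : 1 + ((d:ℝ) - 1) * A = (d:ℝ) / 2 := by
        rw [hAval]
        field_simp
        ring
      refine psd_aux d n hn hd2 A B ?_ ?_ ?_ _ hM
      · rw [hAval, div_le_one (by linarith)]; linarith
      · rw [hBval, hkey]; linarith
      · rw [hBval, hkey]; linarith
    · have hk2 : 2 ≤ k := by omega
      have hSm1 := Ssum d (k - 1) hd (by omega) (by omega)
      have hSp1 := Ssum d (k + 1) hd (by omega) (by omega)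
      have hAval : A = -2 / ((n:ℝ) - 2) := by
        rcases Nat.even_or_odd k with he | ho
        · rw [if_pos (Nat.odd_iff.mpr (by have := Nat.even_iff.mp he; omega))] at hSm1
          rw [if_pos (Nat.odd_iff.mpr (by have := Nat.even_iff.mp he; omega))] at hSp1
          rw [if_neg (Nat.not_odd_iff_even.mpr he)] at hSk
          rw [hAexp, hSm1, hSp1, hSk]
          ring
        · rw [if_neg (Nat.not_odd_iff_even.mpr (by rw [Nat.even_iff]; have := Nat.odd_iff.mp ho; omega))] at hSm1
          rw [if_neg (Nat.not_odd_iff_even.mpr (by rw [Nat.even_iff]; have := Nat.odd_iff.mp ho; omega))] at hSp1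
          rw [if_pos ho] at hSk
          rw [hAexp, hSm1, hSp1, hSk]
          ring
      have hkey : 1 + ((d:ℝ) - 1) * A = 0 := by
        rw [hAval, hnR]
        field_simp
        ring
      have hBval : B = 0 := by
        rcases Nat.even_or_odd k with he | ho
        · rw [if_neg (Nat.not_odd_iff_even.mpr he)] at hSk
          rw [hBval', hSk, he.neg_one_pow, hAval, hnR]
          field_simp
          ring
        · rw [if_pos ho] at hSk
          rw [hBval', hSk, ho.neg_one_pow, hAval, hnR]
          field_simp
          ring
      refine psd_aux d n hn hd2 A B ?_ ?_ ?_ _ hM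
      · rw [hAval, div_le_one hn2]
        rw [hnR]; linarith
      · rw [hBval, hkey]; simp
      · rw [hBval, hkey]; simp
end

section
/- Let n = 2d be an even positive integer with n ≥ 4 and let Ĉ be the n×n cut-semimetric cost matrix. Then for every permutation σ of {1,...,n} whose cycle decomposition consists of a single n-cycle, the tour cost ∑_{i=1}^n Ĉ_{i,σ(i)} is at least 2, and there exists such a permutation with tour cost exactly 2. In other words, the optimal TSP value on the instance Ĉ equals 2. -/
open Matrix

lemma aux_cross {n : ℕ} (σ : Equiv.Perm (Fin n)) (hc : σ.IsCycle)
    (hs : σ.support = Finset.univ) (S : Finset (Fin n)) (a b : Fin n)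
    (ha : a ∈ S) (hb : b ∉ S) : ∃ i ∈ S, σ i ∉ S := by
  by_contra h
  push_neg at h
  have himg : S.image σ = S := by
    apply Finset.eq_of_subset_of_card_le
    · intro x hx
      obtain ⟨y, hy, rfl⟩ := Finset.mem_image.mp hx
      exact h y hy
    · rw [Finset.card_image_of_injective _ σ.injective]
  have hinv : ∀ x ∈ S, σ⁻¹ x ∈ S := by
    intro x hx
    rw [← himg] at hx
    obtain ⟨y, hy, rfl⟩ := Finset.mem_image.mp hx
    simpa using hy
  have hz : ∀ k : ℤ, (σ ^ k) a ∈ S := by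
    intro k
    induction k using Int.induction_on with
    | zero => simpa using ha
    | succ k ih =>
        have : σ ^ ((k : ℤ) + 1) = σ * σ ^ (k : ℤ) := by
          rw [add_comm, _root_.zpow_add, zpow_one]
        rw [this, Equiv.Perm.mul_apply]
        exact h _ ih
    | pred k ih =>
        have : σ ^ (-(k : ℤ) - 1) = σ⁻¹ * σ ^ (-(k : ℤ)) := by
          rw [sub_eq_add_neg, add_comm, _root_.zpow_add, _root_.zpow_neg_one]
        rw [this, Equiv.Perm.mul_apply]
        exact hinv _ ih
  obtain ⟨x, hx, hall⟩ := hc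
  have hmem : ∀ y : Fin n, σ y ≠ y := by
    intro y
    rw [← Equiv.Perm.mem_support, hs]
    exact Finset.mem_univ y
  have hsc : σ.SameCycle a b := ((hall (hmem a)).symm).trans (hall (hmem b))
  obtain ⟨k, hk⟩ := hsc
  exact hb (hk ▸ hz k)

theorem stmt_8 (d : ℕ) (hd : 0 < d) (n : ℕ) (hn : n = 2 * d) (hn4 : 4 ≤ n)
    (C : Matrix (Fin n) (Fin n) ℝ)
    (hC : ∀ s t : Fin n, C s t = if (((s : ℕ) < d) ↔ ((t : ℕ) < d)) then 0 else 1) :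
    (∀ σ : Equiv.Perm (Fin n), σ.IsCycle → σ.support = Finset.univ →
      2 ≤ ∑ i : Fin n, C i (σ i)) ∧
    (∃ σ : Equiv.Perm (Fin n), σ.IsCycle ∧ σ.support = Finset.univ ∧
      ∑ i : Fin n, C i (σ i) = 2) := by
  have hd2 : 2 ≤ d := by omega
  have hnn : ∀ (σ : Equiv.Perm (Fin n)) (i : Fin n), 0 ≤ C i (σ i) := by
    intro σ i
    rw [hC]
    split <;> norm_num
  constructor
  · intro σ hc hs
    set S : Finset (Fin n) := Finset.univ.filter (fun i => (i : ℕ) < d) with hS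
    have hmemS : ∀ i : Fin n, i ∈ S ↔ (i : ℕ) < d := by
      intro i; simp [hS]
    have ha : (⟨0, by omega⟩ : Fin n) ∈ S := (hmemS _).mpr (by simpa using hd)
    have hb : (⟨d, by omega⟩ : Fin n) ∉ S := by
      rw [hmemS]; simp
    obtain ⟨i0, hi0, hi0'⟩ := aux_cross σ hc hs S _ _ ha hb
    obtain ⟨i1, hi1, hi1'⟩ := aux_cross σ hc hs Sᶜ _ _
      (Finset.mem_compl.mpr hb) (by simpa using ha)
    rw [Finset.mem_compl] at hi1
    rw [Finset.mem_compl, not_not] at hi1'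
    have hne : i0 ≠ i1 := fun hEq => hi1 (hEq ▸ hi0)
    rw [hmemS] at hi0 hi1 hi1'
    rw [hmemS] at hi0'
    have ht0 : C i0 (σ i0) = 1 := by rw [hC, if_neg]; tauto
    have ht1 : C i1 (σ i1) = 1 := by rw [hC, if_neg]; tauto
    calc (2 : ℝ) = ∑ i ∈ ({i0, i1} : Finset (Fin n)), C i (σ i) := by
            rw [Finset.sum_pair hne, ht0, ht1]; norm_num
      _ ≤ ∑ i : Fin n, C i (σ i) :=
            Finset.sum_le_sum_of_subset_of_nonneg (Finset.subset_univ _)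
              (fun i _ _ => hnn σ i)
  · obtain ⟨m, rfl⟩ : ∃ m, n = m + 2 := ⟨n - 2, by omega⟩
    refine ⟨finRotate (m + 2), isCycle_finRotate, support_finRotate, ?_⟩
    have hdm : d - 1 < m + 2 := by omega
    have hmm : m + 1 < m + 2 := by omega
    set a : Fin (m + 2) := ⟨d - 1, hdm⟩
    set b : Fin (m + 2) := ⟨m + 1, hmm⟩
    have hab : a ≠ b := by
      simp only [a, b, Fin.mk.injEq, ne_eq]
      omega
    have key : ∀ i : Fin (m + 2),
        C i (finRotate (m + 2) i) = (if i = a then 1 else 0) + (if i = b then 1 else 0) := by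
      intro i
      have hco : ((finRotate (m + 1 + 1) i : Fin (m + 2)) : ℕ) =
          if i = Fin.last (m + 1) then 0 else (i : ℕ) + 1 := coe_finRotate i
      have hlast : i = Fin.last (m + 1) ↔ (i : ℕ) = m + 1 := by
        rw [Fin.ext_iff]; rfl
      have hia : i = a ↔ (i : ℕ) = d - 1 := by rw [Fin.ext_iff]
      have hib : i = b ↔ (i : ℕ) = m + 1 := by rw [Fin.ext_iff]
      rw [hC]
      by_cases hl : i = Fin.last (m + 1)
      · have hiv : (i : ℕ) = m + 1 := hlast.mp hl
        have hcv : ((finRotate (m + 1 + 1) i : Fin (m + 2)) : ℕ) = 0 := by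
          rw [hco, if_pos hl]
        rw [hcv, if_neg (by omega), if_neg (hia.not.mpr (by omega)),
          if_pos (hib.mpr hiv)]
        norm_num
      · rw [if_neg (hib.not.mpr (by rw [hlast] at hl; omega))]
        have hico : ((finRotate (m + 1 + 1) i : Fin (m + 2)) : ℕ) = (i : ℕ) + 1 := by
          rw [hco, if_neg hl]
        rw [hico]
        have hilt : (i : ℕ) < m + 1 := by
          have := i.isLt
          rw [hlast] at hl
          omega
        by_cases hc : (i : ℕ) = d - 1
        · rw [if_neg (by omega), if_pos (hia.mpr hc)]; norm_num
        · rw [if_pos (by omega), if_neg (hia.not.mpr hc)]; norm_num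
    rw [Finset.sum_congr rfl (fun i _ => key i), Finset.sum_add_distrib,
      Finset.sum_ite_eq' Finset.univ a (fun _ => (1 : ℝ)),
      Finset.sum_ite_eq' Finset.univ b (fun _ => (1 : ℝ))]
    simp
    norm_num
end

section
/- Let n = 2d be an even positive integer and let X^(1),...,X^(d) be symmetric n×n matrices with nonnegative entries satisfying ∑_{j=1}^d X^(j) = J − I and, for each k = 1,...,d, the positive semidefinite constraint I + ∑_{j=1}^d cos(2πjk/n)·X^(j) ⪰ 0. Let e be the all-ones vector in ℝⁿ. Then X^(i)·e = 2e for every i = 1,...,d−1, and X^(d)·e = e. -/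
open Matrix

lemma cos_sum_eq (n : ℕ) (hn : 0 < n) (m : ℤ) :
    ∑ k ∈ Finset.range n, Real.cos (2 * Real.pi * m * k / n) =
      if (n:ℤ) ∣ m then (n:ℝ) else 0 := by
  have hne : (n:ℝ) ≠ 0 := by positivity
  have hnC : (n : ℂ) ≠ 0 := by exact_mod_cast hne
  have hpi : (Real.pi : ℂ) ≠ 0 := by exact_mod_cast Real.pi_ne_zero
  have hI : (Complex.I : ℂ) ≠ 0 := Complex.I_ne_zero
  split_ifs with h
  · obtain ⟨t, rfl⟩ := h
    have : ∀ k ∈ Finset.range n, Real.cos (2 * Real.pi * (↑((n:ℤ)*t)) * k / n) = 1 := by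
      intro k _
      have : 2 * Real.pi * (↑((n:ℤ)*t)) * k / n = ((t*k : ℤ) : ℝ) * (2 * Real.pi) := by
        field_simp; push_cast; ring
      rw [this, Real.cos_int_mul_two_pi]
    rw [Finset.sum_congr rfl this]; simp
  · set ζ : ℂ := Complex.exp (2 * Real.pi * m / n * Complex.I) with hζ
    have hz1 : ζ ≠ 1 := by
      intro hone
      rw [Complex.exp_eq_one_iff] at hone
      obtain ⟨t, ht⟩ := hone
      apply h
      refine ⟨t, ?_⟩
      have h2 : (2 * (Real.pi:ℂ) * Complex.I) ≠ 0 := by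
        simp [hpi, hI]
      have : (m : ℂ) = n * t := by
        apply mul_left_cancel₀ h2
        field_simp at ht
        linear_combination (2 * (Real.pi:ℂ) * Complex.I) * ht
      exact_mod_cast this
    have hzn : ζ ^ n = 1 := by
      rw [← Complex.exp_nat_mul]
      have : (n:ℂ) * (2 * Real.pi * m / n * Complex.I) = m * (2 * Real.pi * Complex.I) := by
        field_simp
      rw [this]
      exact Complex.exp_int_mul_two_pi_mul_I m
    have hterm : ∀ k : ℕ, Real.cos (2 * Real.pi * m * k / n) = (ζ ^ k).re := by
      intro k
      rw [← Complex.exp_nat_mul]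
      have harg : (k:ℂ) * (2 * Real.pi * m / n * Complex.I) =
          ((2 * Real.pi * m * k / n : ℝ) : ℂ) * Complex.I := by
        push_cast; field_simp
      rw [harg, Complex.exp_ofReal_mul_I_re]
    have : ∑ k ∈ Finset.range n, Real.cos (2 * Real.pi * m * k / n) =
        (∑ k ∈ Finset.range n, ζ ^ k).re := by
      rw [Complex.re_sum]
      exact Finset.sum_congr rfl fun k _ => hterm k
    rw [this, geom_sum_eq hz1, hzn]
    simp

lemma cos_mirror (n j k : ℕ) (hk : k ≤ n) :
    Real.cos (2 * Real.pi * j * ((n - k : ℕ) : ℝ) / n) = Real.cos (2 * Real.pi * j * k / n) := by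
  rcases Nat.eq_zero_or_pos n with rfl | hn
  · interval_cases k; simp
  have hne : (n:ℝ) ≠ 0 := by positivity
  have hcast : ((n - k : ℕ) : ℝ) = (n:ℝ) - k := by
    push_cast [Nat.cast_sub hk]; ring
  rw [hcast]
  have : 2 * Real.pi * j * ((n:ℝ) - k) / n = (j : ℤ) * (2 * Real.pi) - 2 * Real.pi * j * k / n := by
    field_simp; push_cast; ring
  rw [this, Real.cos_int_mul_two_pi_sub]
open Finset in
lemma key_lin (d : ℕ) (hd : 0 < d) (n : ℕ) (hn : n = 2 * d) (x : ℕ → ℝ)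
    (h0 : ∑ j ∈ Finset.Icc 1 d, x j = (n : ℝ) - 1)
    (hk : ∀ k ∈ Finset.Icc 1 d,
      ∑ j ∈ Finset.Icc 1 d, Real.cos (2 * Real.pi * j * k / n) * x j = -1) :
    ∀ i ∈ Finset.Icc 1 d, x i = if i = d then 1 else 2 := by
  have hn0 : 0 < n := by omega
  have hne : (n:ℝ) ≠ 0 := by positivity
  set c : ℕ → ℕ → ℝ := fun j k => Real.cos (2 * Real.pi * j * k / n) with hc
  -- extended equations
  have hE : ∀ k, 1 ≤ k → k < n → ∑ j ∈ Icc 1 d, c j k * x j = -1 := by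
    intro k hk1 hk2
    rcases le_or_gt k d with h | h
    · exact hk k (mem_Icc.mpr ⟨hk1, h⟩)
    · have hkn : k ≤ n := by omega
      have heq : ∀ j ∈ Icc 1 d, c j k * x j = c j (n - k) * x j := by
        intro j _
        have := cos_mirror n j k hkn
        simp only [hc]
        rw [← this]
      rw [Finset.sum_congr rfl heq]
      exact hk (n - k) (mem_Icc.mpr ⟨by omega, by omega⟩)
  intro i hi
  rw [mem_Icc] at hi
  have hidvd : ¬ (n:ℤ) ∣ (i:ℤ) := by
    intro h
    have := Int.le_of_dvd (by exact_mod_cast hi.1) h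
    omega
  have hci0 : ∀ j : ℕ, c j 0 = 1 := by
    intro j; simp [hc]
  -- full range cosine sum for i
  have hSi : ∑ k ∈ range n, c i k = 0 := by
    have := cos_sum_eq n hn0 (i:ℤ)
    rw [if_neg hidvd] at this
    rw [← this]
    apply Finset.sum_congr rfl
    intro k _
    simp [hc]
  -- T computed way 2
  have hT2 : ∑ k ∈ range n, c i k * (∑ j ∈ Icc 1 d, c j k * x j) = n := by
    rw [Finset.range_eq_Ico, Finset.sum_eq_sum_Ico_succ_bot hn0]
    have h1 : c i 0 * (∑ j ∈ Icc 1 d, c j 0 * x j) = (n:ℝ) - 1 := by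
      rw [hci0]
      have : ∀ j ∈ Icc 1 d, c j 0 * x j = x j := by intro j _; rw [hci0, one_mul]
      rw [Finset.sum_congr rfl this, h0, one_mul]
    rw [h1]
    have h2 : ∀ k ∈ Ico 1 n, c i k * (∑ j ∈ Icc 1 d, c j k * x j) = -(c i k) := by
      intro k hkk
      rw [mem_Ico] at hkk
      rw [hE k hkk.1 hkk.2]
      ring
    rw [Finset.sum_congr rfl h2, Finset.sum_neg_distrib]
    have h3 : ∑ k ∈ Ico 1 n, c i k = -1 := by
      have : ∑ k ∈ range n, c i k = c i 0 + ∑ k ∈ Ico 1 n, c i k := by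
        rw [Finset.range_eq_Ico, Finset.sum_eq_sum_Ico_succ_bot hn0]
      rw [hSi, hci0] at this
      linarith
    rw [h3]; ring
  -- T computed way 1
  have hP : ∀ j ∈ Icc 1 d, ∑ k ∈ range n, c i k * c j k
      = if j = i then (if i = d then (n:ℝ) else (n:ℝ)/2) else 0 := by
    intro j hj
    rw [mem_Icc] at hj
    have hterm : ∀ k : ℕ, c i k * c j k =
        (Real.cos (2 * Real.pi * (((i:ℤ) - j : ℤ):ℝ) * k / n)
          + Real.cos (2 * Real.pi * (((i:ℤ) + j : ℤ):ℝ) * k / n)) / 2 := by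
      intro k
      have hA : 2 * Real.pi * (((i:ℤ) - j : ℤ) : ℝ) * k / n
          = 2 * Real.pi * i * k / n - 2 * Real.pi * j * k / n := by
        push_cast; ring
      have hB : 2 * Real.pi * (((i:ℤ) + j : ℤ) : ℝ) * k / n
          = 2 * Real.pi * i * k / n + 2 * Real.pi * j * k / n := by
        push_cast; ring
      rw [hA, hB, Real.cos_sub, Real.cos_add]
      simp only [hc]
      ring
    rw [Finset.sum_congr rfl (fun k _ => hterm k), ← Finset.sum_div,
      Finset.sum_add_distrib, cos_sum_eq n hn0 ((i:ℤ) - j), cos_sum_eq n hn0 ((i:ℤ) + j)]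
    have hd1 : ((n:ℤ) ∣ ((i:ℤ) - j)) ↔ j = i := by
      constructor
      · intro h
        have habs : |(i:ℤ) - j| < n := by rw [abs_lt]; constructor <;> [skip; skip] <;> omega
        have := Int.eq_zero_of_abs_lt_dvd h habs
        omega
      · intro h; subst h; simp
    have hd2 : ((n:ℤ) ∣ ((i:ℤ) + j)) ↔ (i = d ∧ j = d) := by
      constructor
      · intro h
        have := Int.le_of_dvd (by omega) h
        omega
      · rintro ⟨rfl, rfl⟩
        exact ⟨1, by omega⟩
    rw [if_congr hd1 rfl rfl, if_congr hd2 rfl rfl]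
    rcases eq_or_ne j i with rfl | hji
    · rcases eq_or_ne j d with rfl | hjd
      · simp
      · simp only [if_pos rfl, if_neg hjd, if_neg (fun hh : j = d ∧ j = d => hjd hh.1)]
        norm_num
    · rw [if_neg hji, if_neg (fun hh : i = d ∧ j = d => hji (hh.2.trans hh.1.symm)), if_neg hji]
      norm_num
  have hT1 : ∑ k ∈ range n, c i k * (∑ j ∈ Icc 1 d, c j k * x j)
      = (if i = d then (n:ℝ) else (n:ℝ)/2) * x i := by
    have e1 : ∑ k ∈ range n, c i k * (∑ j ∈ Icc 1 d, c j k * x j)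
        = ∑ j ∈ Icc 1 d, (∑ k ∈ range n, c i k * c j k) * x j := by
      simp_rw [Finset.mul_sum]
      rw [Finset.sum_comm]
      apply Finset.sum_congr rfl
      intro j _
      rw [Finset.sum_mul]
      apply Finset.sum_congr rfl
      intro k _
      ring
    rw [e1, Finset.sum_congr rfl (fun j hj => by rw [hP j hj])]
    simp_rw [ite_mul, zero_mul]
    rw [Finset.sum_ite_eq' (Icc 1 d) i]
    rw [if_pos (mem_Icc.mpr hi)]
  rw [hT1] at hT2
  rcases eq_or_ne i d with rfl | hid
  · rw [if_pos rfl] at hT2 ⊢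
    exact mul_left_cancel₀ hne (hT2.trans (mul_one (n:ℝ)).symm)
  · rw [if_neg hid] at hT2 ⊢
    have h2 : (n:ℝ) * x i = (n:ℝ) * 2 := by linarith
    exact mul_left_cancel₀ hne h2

open Finset in
lemma coeff_eq (d : ℕ) (hd : 0 < d) (n : ℕ) (hn : n = 2 * d) (j : ℕ) (hj1 : 1 ≤ j) (hj2 : j ≤ d) :
    ∑ k ∈ Finset.Icc 1 (d-1), Real.cos (2 * Real.pi * j * k / n)
      + Real.cos (2 * Real.pi * j * d / n) / 2 = -(1/2) := by
  have hn0 : 0 < n := by omega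
  set c : ℕ → ℝ := fun k => Real.cos (2 * Real.pi * j * k / n) with hc
  have hfull : ∑ k ∈ range n, c k = 0 := by
    have h := cos_sum_eq n hn0 (j:ℤ)
    have hnd : ¬ (n:ℤ) ∣ (j:ℤ) := by
      intro h'
      have := Int.le_of_dvd (by exact_mod_cast hj1) h'
      omega
    rw [if_neg hnd] at h
    rw [← h]
    apply Finset.sum_congr rfl
    intro k _
    simp [hc]
  have hmirror : ∑ k ∈ Ico (d+1) n, c k = ∑ k ∈ Ico 1 d, c k := by
    apply Finset.sum_nbij' (i := fun k => n - k) (j := fun k => n - k)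
    · intro a ha; rw [mem_Ico] at ha ⊢; omega
    · intro a ha; rw [mem_Ico] at ha ⊢; omega
    · intro a ha; rw [mem_Ico] at ha; omega
    · intro a ha; rw [mem_Ico] at ha; omega
    · intro a ha
      rw [mem_Ico] at ha
      simp only [hc]
      rw [cos_mirror n j a (by omega)]
  have hsplit : ∑ k ∈ range n, c k
      = ((c 0 + ∑ k ∈ Ico 1 d, c k) + c d) + ∑ k ∈ Ico (d+1) n, c k := by
    rw [range_eq_Ico, ← Finset.sum_Ico_consecutive c (by omega : 0 ≤ d+1) (by omega : d+1 ≤ n)]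
    congr 1
    rw [← Finset.range_eq_Ico, Finset.sum_range_succ]
    congr 1
    rw [Finset.range_eq_Ico, Finset.sum_eq_sum_Ico_succ_bot hd]
  have hc0 : c 0 = 1 := by simp [hc]
  have hIcc : Finset.Icc 1 (d-1) = Ico 1 d := by
    rw [← Finset.Ico_add_one_right_eq_Icc]
    congr 1
    omega
  rw [hIcc]
  rw [hsplit, hmirror, hc0] at hfull
  have : Real.cos (2 * Real.pi * ↑j * ↑d / ↑n) = c d := rfl
  rw [this]
  linarith

theorem stmt_10 (d : ℕ) (hd : 0 < d) (n : ℕ) (hn : n = 2 * d)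
    (X : ℕ → Matrix (Fin n) (Fin n) ℝ)
    (hsymm : ∀ j ∈ Finset.Icc 1 d, (X j).IsSymm)
    (hnonneg : ∀ j ∈ Finset.Icc 1 d, ∀ s t : Fin n, 0 ≤ X j s t)
    (hsum : ∑ j ∈ Finset.Icc 1 d, X j = Matrix.of (fun _ _ => (1 : ℝ)) - 1)
    (hpsd : ∀ k ∈ Finset.Icc 1 d,
      ((1 : Matrix (Fin n) (Fin n) ℝ) +
        ∑ j ∈ Finset.Icc 1 d, Real.cos (2 * Real.pi * j * k / n) • X j).PosSemidef) :
    (∀ i ∈ Finset.Icc 1 (d - 1), (X i) *ᵥ (fun _ => (1 : ℝ)) = fun _ => 2) ∧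
    (X d) *ᵥ (fun _ => (1 : ℝ)) = fun _ => 1 := by
  have hn0 : 0 < n := by omega
  set e : Fin n → ℝ := fun _ => 1 with he
  set M : ℕ → Matrix (Fin n) (Fin n) ℝ := fun k =>
    (1 : Matrix (Fin n) (Fin n) ℝ) +
      ∑ j ∈ Finset.Icc 1 d, Real.cos (2 * Real.pi * j * k / n) • X j with hM
  set y : ℕ → Fin n → ℝ := fun j s => ∑ t, X j s t with hy
  have hXe : ∀ j, X j *ᵥ e = y j := by
    intro j
    funext s
    simp [Matrix.mulVec, dotProduct, he, hy]
  -- coordinate formula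
  have hMcoord : ∀ k, ∀ s : Fin n, (M k *ᵥ e) s =
      1 + ∑ j ∈ Finset.Icc 1 d, Real.cos (2 * Real.pi * j * k / n) * y j s := by
    intro k s
    simp only [hM, Matrix.mulVec, dotProduct, he, mul_one, Matrix.add_apply,
      Matrix.sum_apply, Matrix.smul_apply, smul_eq_mul, Matrix.one_apply]
    rw [Finset.sum_add_distrib]
    congr 1
    · simp
    · rw [Finset.sum_comm]
      apply Finset.sum_congr rfl
      intro j _
      rw [Finset.mul_sum]
  -- row sums of the sum constraint
  have hrow : ∀ s : Fin n, ∑ j ∈ Finset.Icc 1 d, y j s = (n:ℝ) - 1 := by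
    intro s
    have h1 : ∑ j ∈ Finset.Icc 1 d, y j s = ∑ t, (∑ j ∈ Finset.Icc 1 d, X j) s t := by
      simp only [hy, Matrix.sum_apply]
      rw [Finset.sum_comm]
    rw [h1, hsum]
    simp only [Matrix.sub_apply, Matrix.of_apply, Matrix.one_apply]
    rw [Finset.sum_sub_distrib]
    simp [Finset.card_univ, he]
  -- q k
  set q : ℕ → ℝ := fun k => ∑ s, (M k *ᵥ e) s with hqdef
  have hq : ∀ k, q k = n + ∑ j ∈ Finset.Icc 1 d,
      Real.cos (2 * Real.pi * j * k / n) * (∑ s, y j s) := by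
    intro k
    simp only [hqdef]
    rw [Finset.sum_congr rfl (fun s _ => hMcoord k s), Finset.sum_add_distrib]
    congr 1
    · simp [Finset.card_univ]
    · rw [Finset.sum_comm]
      apply Finset.sum_congr rfl
      intro j _
      rw [Finset.mul_sum]
  have hqnn : ∀ k ∈ Finset.Icc 1 d, 0 ≤ q k := by
    intro k hk
    have h2 := (hpsd k hk).dotProduct_mulVec_nonneg e
    have hse : star e = e := by funext s; simp [he]
    rw [hse] at h2
    have : dotProduct e (M k *ᵥ e) = q k := by
      simp [dotProduct, he, hqdef]
    rw [← this]
    exact h2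
  -- total mass
  have hTT : ∑ j ∈ Finset.Icc 1 d, (∑ s, y j s) = (n:ℝ) * ((n:ℝ) - 1) := by
    rw [Finset.sum_comm]
    rw [Finset.sum_congr rfl (fun s _ => hrow s)]
    simp [Finset.card_univ, mul_comm]; ring
  -- the combination is zero
  have hnr : (n:ℝ) = 2*(d:ℝ) := by rw [hn]; push_cast; ring
  have hQ : ∑ k ∈ Finset.Icc 1 (d-1), q k + q d / 2 = 0 := by
    have hsw : ∑ k ∈ Finset.Icc 1 (d-1), ∑ j ∈ Finset.Icc 1 d,
          Real.cos (2 * Real.pi * j * k / n) * (∑ s, y j s)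
        = ∑ j ∈ Finset.Icc 1 d,
            (∑ k ∈ Finset.Icc 1 (d-1), Real.cos (2 * Real.pi * j * k / n)) * (∑ s, y j s) := by
      rw [Finset.sum_comm]
      exact Finset.sum_congr rfl fun j _ => (Finset.sum_mul _ _ _).symm
    have hmerge : ∑ j ∈ Finset.Icc 1 d,
          (∑ k ∈ Finset.Icc 1 (d-1), Real.cos (2 * Real.pi * j * k / n)) * (∑ s, y j s)
        + (∑ j ∈ Finset.Icc 1 d, Real.cos (2 * Real.pi * j * d / n) * (∑ s, y j s)) / 2
        = -(1/2) * ((n:ℝ) * ((n:ℝ) - 1)) := by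
      rw [Finset.sum_div, ← Finset.sum_add_distrib]
      have : ∀ j ∈ Finset.Icc 1 d,
          (∑ k ∈ Finset.Icc 1 (d-1), Real.cos (2 * Real.pi * j * k / n)) * (∑ s, y j s)
            + (Real.cos (2 * Real.pi * j * d / n) * (∑ s, y j s)) / 2
          = -(1/2) * (∑ s, y j s) := by
        intro j hj
        rw [Finset.mem_Icc] at hj
        have hco := coeff_eq d hd n hn j hj.1 hj.2
        linear_combination (∑ s, y j s) * hco
      rw [Finset.sum_congr rfl this, ← Finset.mul_sum, hTT]
    have hcast : ((d - 1 + 1 - 1 : ℕ) : ℝ) = (d:ℝ) - 1 := by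
      rw [show d-1+1-1 = d-1 from by omega, Nat.cast_sub hd, Nat.cast_one]
    have harith : ((d:ℝ) - 1) * n + n/2 - ((n:ℝ) * ((n:ℝ)-1))/2 = 0 := by
      linear_combination (-(n:ℝ)/2) * hnr
    rw [Finset.sum_congr rfl (fun k _ => hq k), hq d, Finset.sum_add_distrib, hsw,
      Finset.sum_const, nsmul_eq_mul, Nat.card_Icc, hcast]
    linear_combination hmerge + harith
  -- each q k vanishes
  have hq0 : ∀ k ∈ Finset.Icc 1 d, q k = 0 := by
    have hins : Finset.Icc 1 d = insert d (Finset.Icc 1 (d-1)) := by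
      ext a
      simp only [Finset.mem_Icc, Finset.mem_insert]
      omega
    have hnotmem : d ∉ Finset.Icc 1 (d-1) := by
      simp only [Finset.mem_Icc]
      omega
    have hwq : ∑ k ∈ Finset.Icc 1 d, (if k = d then (1/2:ℝ) else 1) * q k = 0 := by
      rw [hins, Finset.sum_insert hnotmem, if_pos rfl]
      have : ∀ k ∈ Finset.Icc 1 (d-1), (if k = d then (1/2:ℝ) else 1) * q k = q k := by
        intro k hk
        rw [Finset.mem_Icc] at hk
        rw [if_neg (by omega), one_mul]
      rw [Finset.sum_congr rfl this]
      linarith [hQ]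
    have hterm0 : ∀ k ∈ Finset.Icc 1 d, (if k = d then (1/2:ℝ) else 1) * q k = 0 := by
      refine (Finset.sum_eq_zero_iff_of_nonneg ?_).mp hwq
      intro k hk
      have := hqnn k hk
      split_ifs <;> linarith
    intro k hk
    have := hterm0 k hk
    rcases mul_eq_zero.mp this with h | h
    · split_ifs at h <;> norm_num at h
    · exact h
  -- M k *ᵥ e = 0
  have hMe0 : ∀ k ∈ Finset.Icc 1 d, M k *ᵥ e = 0 := by
    intro k hk
    apply ((hpsd k hk).dotProduct_mulVec_zero_iff e).mp
    have hse : star e = e := by funext s; simp [he]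
    rw [hse]
    have : dotProduct e (M k *ᵥ e) = q k := by
      simp [dotProduct, he, hqdef]
    rw [this]
    exact hq0 k hk
  -- coordinate equations and key_lin
  have hkey : ∀ s : Fin n, ∀ i ∈ Finset.Icc 1 d, y i s = if i = d then 1 else 2 := by
    intro s
    apply key_lin d hd n hn (fun j => y j s) (hrow s)
    intro k hk
    have h0 := congrFun (hMe0 k hk) s
    rw [hMcoord k s] at h0
    simp only [Pi.zero_apply] at h0
    linarith
  constructor
  · intro i hi
    rw [Finset.mem_Icc] at hi
    rw [hXe]
    funext s
    have := hkey s i (Finset.mem_Icc.mpr ⟨hi.1, by omega⟩)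
    rw [if_neg (by omega)] at this
    exact this
  · rw [hXe]
    funext s
    have := hkey s d (Finset.mem_Icc.mpr ⟨hd, le_refl d⟩)
    rw [if_pos rfl] at this
    exact this
end

section
/- Let n = 2d be an even positive integer and let X^(1),...,X^(d) be symmetric n×n matrices with nonnegative entries satisfying ∑_{j=1}^d X^(j) = J − I and, for each k = 1,...,d, the positive semidefinite constraint I + ∑_{j=1}^d cos(2πjk/n)·X^(j) ⪰ 0. Then 2I − X^(i) is positive semidefinite for every i = 1,...,d−1, and I − X^(d) is positive semidefinite. -/
open Matrix

private lemma aux_sum_cos_eq (n : ℕ) (hn : 0 < n) (m : ℤ) :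
    ∑ k ∈ Finset.range n, Real.cos (2 * Real.pi * m * k / n)
      = if (n : ℤ) ∣ m then (n : ℝ) else 0 := by
  have hne : (n : ℝ) ≠ 0 := by positivity
  split_ifs with h
  · obtain ⟨t, rfl⟩ := h
    have hterm : ∀ k ∈ Finset.range n,
        Real.cos (2 * Real.pi * ((((n : ℤ) * t : ℤ)) : ℝ) * k / n) = 1 := by
      intro k _
      have harg : 2 * Real.pi * ((((n : ℤ) * t : ℤ)) : ℝ) * k / n
          = ((t * k : ℤ) : ℝ) * (2 * Real.pi) := by
        push_cast
        field_simp
      rw [harg, Real.cos_int_mul_two_pi]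
    rw [Finset.sum_congr rfl hterm]
    simp
  · set z : ℂ := Complex.exp (2 * Real.pi * Complex.I * m / n) with hz
    have hz1 : z ≠ 1 := by
      rw [hz, Ne, Complex.exp_eq_one_iff]
      rintro ⟨t, ht⟩
      apply h
      refine ⟨t, ?_⟩
      have hIne : (2 : ℂ) * Real.pi * Complex.I ≠ 0 := by
        simp [Complex.I_ne_zero, Real.pi_ne_zero]
      have hnC : (n : ℂ) ≠ 0 := Nat.cast_ne_zero.mpr hn.ne'
      have hmn : (m : ℂ) = n * t := by
        field_simp at ht
        have h2 : (2 : ℂ) * Real.pi * Complex.I * m = 2 * Real.pi * Complex.I * (n * t) := by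
          rw [ht]
        exact mul_left_cancel₀ hIne h2
      exact_mod_cast hmn
    have hzn : z ^ n = 1 := by
      rw [hz, ← Complex.exp_nat_mul]
      have harg : (n : ℂ) * (2 * Real.pi * Complex.I * m / n)
          = (m : ℂ) * (2 * Real.pi * Complex.I) := by
        have hnC : (n : ℂ) ≠ 0 := Nat.cast_ne_zero.mpr hn.ne'
        field_simp
      rw [harg]
      exact_mod_cast Complex.exp_int_mul_two_pi_mul_I m
    have hgeom : ∑ k ∈ Finset.range n, z ^ k = 0 := by
      rw [geom_sum_eq hz1, hzn, sub_self, zero_div]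
    have hre : ∀ k : ℕ, (z ^ k).re = Real.cos (2 * Real.pi * m * k / n) := by
      intro k
      rw [hz, ← Complex.exp_nat_mul]
      have harg : (k : ℂ) * (2 * Real.pi * Complex.I * m / n)
          = ((2 * Real.pi * m * k / n : ℝ) : ℂ) * Complex.I := by
        have hnC : (n : ℂ) ≠ 0 := Nat.cast_ne_zero.mpr hn.ne'
        push_cast
        field_simp
      rw [harg, Complex.exp_ofReal_mul_I_re]
    calc ∑ k ∈ Finset.range n, Real.cos (2 * Real.pi * m * k / n)
        = ∑ k ∈ Finset.range n, (z ^ k).re := by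
          exact Finset.sum_congr rfl fun k _ => (hre k).symm
      _ = (∑ k ∈ Finset.range n, z ^ k).re := (Complex.re_sum _ _).symm
      _ = 0 := by rw [hgeom]; simp

private lemma aux_sum_cos_mul (n : ℕ) (hn : 0 < n) (i j : ℕ) :
    ∑ k ∈ Finset.range n, Real.cos (2 * Real.pi * i * k / n) * Real.cos (2 * Real.pi * j * k / n)
      = ((if n ∣ i + j then (n : ℝ) else 0) + (if (n : ℤ) ∣ ((i : ℤ) - j) then (n : ℝ) else 0)) / 2 := by
  have hpt : ∀ k : ℕ, Real.cos (2 * Real.pi * i * k / n) * Real.cos (2 * Real.pi * j * k / n)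
      = (Real.cos (2 * Real.pi * (((i + j : ℕ) : ℤ) : ℝ) * k / n)
        + Real.cos (2 * Real.pi * (((i : ℤ) - j : ℤ) : ℝ) * k / n)) / 2 := by
    intro k
    have e1 : 2 * Real.pi * (((i + j : ℕ) : ℤ) : ℝ) * k / n
        = 2 * Real.pi * i * k / n + 2 * Real.pi * j * k / n := by
      push_cast; ring
    have e2 : 2 * Real.pi * (((i : ℤ) - j : ℤ) : ℝ) * k / n
        = 2 * Real.pi * i * k / n - 2 * Real.pi * j * k / n := by
      push_cast; ring
    rw [e1, e2, Real.cos_add, Real.cos_sub]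
    ring
  rw [Finset.sum_congr rfl fun k _ => hpt k, ← Finset.sum_div, Finset.sum_add_distrib,
    aux_sum_cos_eq n hn ((i + j : ℕ) : ℤ), aux_sum_cos_eq n hn ((i : ℤ) - j)]
  have hiff : ((n : ℤ) ∣ ((i : ℤ) + (j : ℤ))) ↔ n ∣ i + j := by
    constructor
    · intro h; exact_mod_cast h
    · intro h; exact_mod_cast h
  push_cast
  simp only [hiff]

theorem stmt_11 (d : ℕ) (hd : 0 < d) (n : ℕ) (hn : n = 2 * d)
    (X : ℕ → Matrix (Fin n) (Fin n) ℝ)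
    (hsymm : ∀ j ∈ Finset.Icc 1 d, (X j).IsSymm)
    (hnonneg : ∀ j ∈ Finset.Icc 1 d, ∀ s t : Fin n, 0 ≤ X j s t)
    (hsum : ∑ j ∈ Finset.Icc 1 d, X j = Matrix.of (fun _ _ => (1 : ℝ)) - 1)
    (hpsd : ∀ k ∈ Finset.Icc 1 d,
      ((1 : Matrix (Fin n) (Fin n) ℝ) +
        ∑ j ∈ Finset.Icc 1 d, Real.cos (2 * Real.pi * j * k / n) • X j).PosSemidef) :
    (∀ i ∈ Finset.Icc 1 (d - 1),
      ((2 : ℝ) • (1 : Matrix (Fin n) (Fin n) ℝ) - X i).PosSemidef) ∧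
    ((1 : Matrix (Fin n) (Fin n) ℝ) - X d).PosSemidef := by
  have npos : 0 < n := by omega
  have hnR : (0 : ℝ) < n := by exact_mod_cast npos
  have hnne : (n : ℝ) ≠ 0 := hnR.ne'
  -- sum over matrices commutes with mulVec
  have hmulVecSum : ∀ (s : Finset ℕ) (M : ℕ → Matrix (Fin n) (Fin n) ℝ) (x : Fin n → ℝ),
      (∑ j ∈ s, M j) *ᵥ x = ∑ j ∈ s, (M j) *ᵥ x := by
    intro s M x
    ext a
    simp only [Matrix.mulVec, dotProduct, Finset.sum_apply, Matrix.sum_apply,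
      Finset.sum_mul]
    rw [Finset.sum_comm]
  have hdotSum : ∀ (s : Finset ℕ) (w : ℕ → Fin n → ℝ) (v : Fin n → ℝ),
      v ⬝ᵥ (∑ j ∈ s, w j) = ∑ j ∈ s, v ⬝ᵥ w j := by
    intro s w v
    simp only [dotProduct, Finset.sum_apply, Finset.mul_sum]
    rw [Finset.sum_comm]
  -- key quantitative claim
  have key : ∀ i ∈ Finset.Icc 1 d, ∀ x : Fin n → ℝ,
      (if i = d then (n : ℝ) else (n : ℝ) / 2) * (x ⬝ᵥ (X i) *ᵥ x) ≤ (n : ℝ) * (x ⬝ᵥ x) := by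
    intro i hi x
    obtain ⟨hi1, hid⟩ := Finset.mem_Icc.mp hi
    set c : ℝ := x ⬝ᵥ x with hc
    set q : ℕ → ℝ := fun j => x ⬝ᵥ (X j) *ᵥ x with hq
    -- nonnegativity of the quadratic form values
    have hf : ∀ k ∈ Finset.Icc 1 d,
        0 ≤ c + ∑ j ∈ Finset.Icc 1 d, Real.cos (2 * Real.pi * j * k / n) * q j := by
      intro k hk
      have h := (hpsd k hk).dotProduct_mulVec_nonneg x
      have hrw : star x ⬝ᵥ ((1 : Matrix (Fin n) (Fin n) ℝ) +
          ∑ j ∈ Finset.Icc 1 d, Real.cos (2 * Real.pi * j * k / n) • X j) *ᵥ x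
          = c + ∑ j ∈ Finset.Icc 1 d, Real.cos (2 * Real.pi * j * k / n) * q j := by
        rw [star_trivial, Matrix.add_mulVec, Matrix.one_mulVec, dotProduct_add, hmulVecSum,
          hdotSum]
        congr 1
        refine Finset.sum_congr rfl fun j _ => ?_
        rw [smul_mulVec, dotProduct_smul, smul_eq_mul]
      rw [hrw] at h
      exact h
    -- nonnegativity of each term over range n
    have hterm : ∀ k ∈ Finset.range n,
        0 ≤ (1 - Real.cos (2 * Real.pi * i * k / n)) *
          (c + ∑ j ∈ Finset.Icc 1 d, Real.cos (2 * Real.pi * j * k / n) * q j) := by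
      intro k hk
      have hkn : k < n := Finset.mem_range.mp hk
      have hcosle : (0 : ℝ) ≤ 1 - Real.cos (2 * Real.pi * i * k / n) := by
        linarith [Real.cos_le_one (2 * Real.pi * i * k / n)]
      rcases Nat.eq_zero_or_pos k with rfl | hk0
      · simp
      · by_cases hkd : k ≤ d
        · exact mul_nonneg hcosle (hf k (Finset.mem_Icc.mpr ⟨hk0, hkd⟩))
        · have hflip : ∀ j : ℕ, Real.cos (2 * Real.pi * j * ((n - k : ℕ) : ℝ) / n)
              = Real.cos (2 * Real.pi * j * k / n) := by
            intro j
            have hcast : ((n - k : ℕ) : ℝ) = (n : ℝ) - k := by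
              push_cast [Nat.cast_sub hkn.le]
              ring
            have harg : 2 * Real.pi * j * ((n - k : ℕ) : ℝ) / n
                = ((j : ℤ) : ℝ) * (2 * Real.pi) - 2 * Real.pi * j * k / n := by
              rw [hcast]
              push_cast
              field_simp
            have hsin : Real.sin (((j : ℤ) : ℝ) * (2 * Real.pi)) = 0 := by
              have h2 : ((j : ℤ) : ℝ) * (2 * Real.pi) = ((2 * j : ℤ) : ℝ) * Real.pi := by
                push_cast; ring
              rw [h2, Real.sin_int_mul_pi]
            rw [harg, Real.cos_sub, Real.cos_int_mul_two_pi, hsin]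
            ring
          have hmem : n - k ∈ Finset.Icc 1 d := Finset.mem_Icc.mpr (by omega)
          have h0 := hf (n - k) hmem
          have heq : (c + ∑ j ∈ Finset.Icc 1 d,
                Real.cos (2 * Real.pi * j * ((n - k : ℕ) : ℝ) / n) * q j)
              = c + ∑ j ∈ Finset.Icc 1 d, Real.cos (2 * Real.pi * j * k / n) * q j := by
            congr 1
            exact Finset.sum_congr rfl fun j _ => by rw [hflip j]
          rw [heq] at h0
          exact mul_nonneg hcosle h0
    -- basic cosine sums vanish
    have hSj : ∀ j ∈ Finset.Icc 1 d,
        ∑ k ∈ Finset.range n, Real.cos (2 * Real.pi * j * k / n) = 0 := by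
      intro j hj
      obtain ⟨hj1, hjd⟩ := Finset.mem_Icc.mp hj
      have h := aux_sum_cos_eq n npos (j : ℤ)
      rw [if_neg (by
        rw [Int.natCast_dvd_natCast]
        intro hdvd
        have := Nat.le_of_dvd (by omega) hdvd
        omega)] at h
      have hcast : ∀ k : ℕ, Real.cos (2 * Real.pi * (((j : ℤ)) : ℝ) * k / n)
          = Real.cos (2 * Real.pi * j * k / n) := by
        intro k; push_cast; ring_nf
      rw [← Finset.sum_congr rfl fun k _ => hcast k]
      exact h
    -- product sums
    have hC : ∀ j ∈ Finset.Icc 1 d,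
        ∑ k ∈ Finset.range n, Real.cos (2 * Real.pi * i * k / n) * Real.cos (2 * Real.pi * j * k / n)
          = if j = i then (if i = d then (n : ℝ) else (n : ℝ) / 2) else 0 := by
      intro j hj
      obtain ⟨hj1, hjd⟩ := Finset.mem_Icc.mp hj
      rw [aux_sum_cos_mul n npos i j]
      have h1 : n ∣ i + j ↔ (i = d ∧ j = d) := by
        constructor
        · intro hdvd
          have hle := Nat.le_of_dvd (by omega) hdvd
          omega
        · rintro ⟨rfl, rfl⟩
          exact ⟨1, by omega⟩
      have h2 : (n : ℤ) ∣ ((i : ℤ) - j) ↔ i = j := by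
        constructor
        · intro hdvd
          have habs : |(i : ℤ) - j| < n := by
            rw [abs_lt]
            constructor <;> [skip; skip] <;>
            · push_cast
              omega
          have := Int.eq_zero_of_abs_lt_dvd hdvd habs
          omega
        · rintro rfl; simp
      by_cases hji : j = i
      · subst hji
        rw [if_pos rfl]
        by_cases hjd' : j = d
        · subst hjd'
          rw [if_pos (h1.mpr ⟨rfl, rfl⟩), if_pos (h2.mpr rfl)]
          norm_num
        · rw [if_neg (by rw [h1]; tauto), if_pos (h2.mpr rfl), if_neg hjd']
          norm_num
      · rw [if_neg hji, if_neg (by rw [h1]; rintro ⟨rfl, rfl⟩; exact hji rfl),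
          if_neg (by rw [h2]; intro hij; exact hji hij.symm)]
        norm_num
    -- evaluate the full sum
    have hval : ∑ k ∈ Finset.range n, (1 - Real.cos (2 * Real.pi * i * k / n)) *
          (c + ∑ j ∈ Finset.Icc 1 d, Real.cos (2 * Real.pi * j * k / n) * q j)
        = (n : ℝ) * c - (if i = d then (n : ℝ) else (n : ℝ) / 2) * q i := by
      have expand : ∀ k ∈ Finset.range n,
          (1 - Real.cos (2 * Real.pi * i * k / n)) *
            (c + ∑ j ∈ Finset.Icc 1 d, Real.cos (2 * Real.pi * j * k / n) * q j)
          = (c + ∑ j ∈ Finset.Icc 1 d, Real.cos (2 * Real.pi * j * k / n) * q j)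
            - (Real.cos (2 * Real.pi * i * k / n) * c
              + ∑ j ∈ Finset.Icc 1 d,
                  Real.cos (2 * Real.pi * i * k / n) * Real.cos (2 * Real.pi * j * k / n) * q j) := by
        intro k _
        have hs : Real.cos (2 * Real.pi * i * k / n) *
            ∑ j ∈ Finset.Icc 1 d, Real.cos (2 * Real.pi * j * k / n) * q j
            = ∑ j ∈ Finset.Icc 1 d,
                Real.cos (2 * Real.pi * i * k / n) * Real.cos (2 * Real.pi * j * k / n) * q j := by
          rw [Finset.mul_sum]
          exact Finset.sum_congr rfl fun j _ => by ring
        rw [← hs]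
        ring
      rw [Finset.sum_congr rfl expand, Finset.sum_sub_distrib, Finset.sum_add_distrib,
        Finset.sum_add_distrib]
      have e1 : ∑ _k ∈ Finset.range n, c = (n : ℝ) * c := by
        rw [Finset.sum_const, Finset.card_range, nsmul_eq_mul]
      have e2 : ∑ k ∈ Finset.range n, ∑ j ∈ Finset.Icc 1 d,
          Real.cos (2 * Real.pi * j * k / n) * q j = 0 := by
        rw [Finset.sum_comm]
        refine Finset.sum_eq_zero fun j hj => ?_
        rw [← Finset.sum_mul, hSj j hj, zero_mul]
      have e3 : ∑ k ∈ Finset.range n, Real.cos (2 * Real.pi * i * k / n) * c = 0 := by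
        rw [← Finset.sum_mul, hSj i hi, zero_mul]
      have e4 : ∑ k ∈ Finset.range n, ∑ j ∈ Finset.Icc 1 d,
          Real.cos (2 * Real.pi * i * k / n) * Real.cos (2 * Real.pi * j * k / n) * q j
          = (if i = d then (n : ℝ) else (n : ℝ) / 2) * q i := by
        rw [Finset.sum_comm]
        have : ∀ j ∈ Finset.Icc 1 d, ∑ k ∈ Finset.range n,
            Real.cos (2 * Real.pi * i * k / n) * Real.cos (2 * Real.pi * j * k / n) * q j
            = (if j = i then (if i = d then (n : ℝ) else (n : ℝ) / 2) * q j else 0) := by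
          intro j hj
          rw [← Finset.sum_mul, hC j hj, ite_mul, zero_mul]
        rw [Finset.sum_congr rfl this, Finset.sum_ite_eq' (Finset.Icc 1 d) i
          (fun j => (if i = d then (n : ℝ) else (n : ℝ) / 2) * q j), if_pos hi]
      rw [e1, e2, e3, e4]
      ring
    have hpos := Finset.sum_nonneg hterm
    rw [hval] at hpos
    linarith
  -- conclude
  have hherm : ∀ j ∈ Finset.Icc 1 d, (X j).IsHermitian := by
    intro j hj
    rw [Matrix.IsHermitian, conjTranspose_eq_transpose_of_trivial]
    exact hsymm j hj
  constructor
  · intro i hi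
    obtain ⟨hi1, hi2⟩ := Finset.mem_Icc.mp hi
    have hid : i ≠ d := by omega
    have hiT : i ∈ Finset.Icc 1 d := Finset.mem_Icc.mpr ⟨hi1, by omega⟩
    refine Matrix.PosSemidef.of_dotProduct_mulVec_nonneg ?_ ?_
    · rw [Matrix.IsHermitian, conjTranspose_eq_transpose_of_trivial, Matrix.transpose_sub,
        Matrix.transpose_smul, Matrix.transpose_one, (hsymm i hiT).eq]
    · intro x
      have h := key i hiT x
      rw [if_neg hid] at h
      rw [star_trivial, Matrix.sub_mulVec, dotProduct_sub, smul_mulVec,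
        Matrix.one_mulVec, dotProduct_smul, smul_eq_mul]
      nlinarith [h]
  · have hdT : d ∈ Finset.Icc 1 d := Finset.mem_Icc.mpr ⟨hd, le_refl d⟩
    refine Matrix.PosSemidef.of_dotProduct_mulVec_nonneg ?_ ?_
    · rw [Matrix.IsHermitian, conjTranspose_eq_transpose_of_trivial, Matrix.transpose_sub,
        Matrix.transpose_one, (hsymm d hdT).eq]
    · intro x
      have h := key d hdT x
      rw [if_pos rfl] at h
      rw [star_trivial, Matrix.sub_mulVec, dotProduct_sub, Matrix.one_mulVec]
      nlinarith [h]
end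

section
/- Let d be an even positive integer, n = 2d, and let Q be the d×d real matrix with entries Q_{ij} = cos(2πij/n) for i, j = 1,...,d. Define the d×d matrix R by R_{ij} = (1/d)·(2cos(2πij/n) − 2) if i ≠ d and j ≠ d; R_{ij} = (1/d)·((−1)^i − 1) if i ≠ d and j = d; R_{ij} = (1/d)·((−1)^j − 1) if i = d and j ≠ d; and R_{dd} = 0. Then QR = I (so R = Q^{−1}), and R·e = −2e + e_d, where e is the all-ones vector in ℝᵈ and e_d is the d-th standard basis vector. -/
open Finset


lemma cos_nat_pi (n : ℕ) : Real.cos (n * Real.pi) = (-1 : ℝ) ^ n := by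
  induction n with
  | zero => simp
  | succ k ih =>
      push_cast
      rw [add_mul, one_mul, Real.cos_add, Real.sin_pi, Real.cos_pi, ih]
      ring

lemma cos_int_pi (m : ℤ) : Real.cos (m * Real.pi) = (if Even m then (1:ℝ) else -1) := by
  rcases Int.even_or_odd m with ⟨c, hc⟩ | ⟨c, hc⟩
  · rw [if_pos ⟨c, hc⟩, hc]
    have h : ((c + c : ℤ) : ℝ) * Real.pi = (c : ℝ) * (2 * Real.pi) := by push_cast; ring
    rw [h]
    exact_mod_cast Real.cos_int_mul_two_pi c
  · rw [if_neg (by simp [hc, Int.even_add_one, parity_simps]), hc]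
    have h : ((2*c + 1 : ℤ) : ℝ) * Real.pi = (c : ℝ) * (2 * Real.pi) + Real.pi := by push_cast; ring
    rw [h, Real.cos_add, Real.sin_pi, Real.cos_pi]
    have h2 : Real.cos ((c:ℝ) * (2*Real.pi)) = 1 := Real.cos_int_mul_two_pi c
    rw [h2]; ring

lemma sum_cos_U (d : ℕ) (hd : 0 < d) (m : ℤ) :
    ∑ j ∈ Finset.range d, Real.cos (Real.pi * m * j / d) =
      if (2 * (d:ℤ)) ∣ m then (d:ℝ) else if Even m then 0 else 1 := by
  have hdR : (d : ℝ) ≠ 0 := by positivity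
  by_cases hdvd : (2 * (d:ℤ)) ∣ m
  · rw [if_pos hdvd]
    obtain ⟨c, rfl⟩ := hdvd
    have h : ∀ j ∈ Finset.range d, Real.cos (Real.pi * ((2 * (d:ℤ) * c : ℤ):ℝ) * j / d) = 1 := by
      intro j _
      have harg : Real.pi * ((2 * (d:ℤ) * c : ℤ):ℝ) * j / d = ((c * j : ℤ):ℝ) * (2 * Real.pi) := by
        push_cast; field_simp
      rw [harg, Real.cos_int_mul_two_pi]
    rw [Finset.sum_congr rfl h]
    simp
  · rw [if_neg hdvd]
    rcases Int.even_or_odd m with ⟨m', hm'⟩ | hodd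
    · -- even case: complex geometric sum
      rw [if_pos ⟨m', hm'⟩]
      have hdvd' : ¬ ((d:ℤ) ∣ m') := by
        rintro ⟨c, hc⟩
        exact hdvd ⟨c, by rw [hm', hc]; ring⟩
      set z : ℂ := Complex.exp ((2 * Real.pi * m' / d : ℝ) * Complex.I) with hz
      have hzpow : ∀ j : ℕ, z ^ j = Complex.exp ((2 * Real.pi * m' * j / d : ℝ) * Complex.I) := by
        intro j
        rw [hz, ← Complex.exp_nat_mul]
        congr 1
        push_cast
        ring
      have hzd : z ^ d = 1 := by
        rw [hzpow d]
        have h1 : (2 * Real.pi * (m':ℝ) * d / d) = (m':ℝ) * (2*Real.pi) := by field_simp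
        rw [show ((2 * Real.pi * (m':ℝ) * d / d : ℝ):ℂ) * Complex.I
              = (m' : ℤ) * (2 * Real.pi * Complex.I) from by rw [h1]; push_cast; ring]
        exact Complex.exp_int_mul_two_pi_mul_I m'
      have hzne : z ≠ 1 := by
        intro h
        rw [hz] at h
        obtain ⟨k, hk⟩ := Complex.exp_eq_one_iff.mp h
        have him := congrArg Complex.im hk
        simp at him
        -- him : 2 * π * m' / d = k * (2 * π)
        apply hdvd'
        refine ⟨k, ?_⟩
        have : (m' : ℝ) = d * k := by
          field_simp at him
          nlinarith [Real.pi_ne_zero, Real.pi_pos]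
        exact_mod_cast this
      have hgeom : ∑ j ∈ Finset.range d, z ^ j = 0 := by
        rw [geom_sum_eq hzne, hzd]
        simp
      have hre : ∀ j ∈ Finset.range d, Real.cos (Real.pi * m * j / d) = (z ^ j).re := by
        intro j _
        rw [hzpow j, Complex.exp_ofReal_mul_I_re]
        congr 1
        rw [hm']; push_cast; ring
      rw [Finset.sum_congr rfl hre, ← Complex.re_sum, hgeom]
      simp
    · -- odd case: reflection
      rw [if_neg (Int.not_even_iff_odd.mpr hodd)]
      set f : ℕ → ℝ := fun j => Real.cos (Real.pi * m * j / d) with hf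
      have hcosm : Real.cos (m * Real.pi) = -1 := by
        rw [cos_int_pi, if_neg (Int.not_even_iff_odd.mpr hodd)]
      have hrefl : ∀ j ∈ Finset.range d, f (d - 1 - j) = - f (j + 1) := by
        intro j hj
        rw [Finset.mem_range] at hj
        have hcast : ((d - 1 - j : ℕ) : ℝ) = (d : ℝ) - 1 - j := by
          have : d - 1 - j = d - (j + 1) := by omega
          rw [this]
          push_cast [Nat.cast_sub hj]
          ring
        rw [hf]
        simp only
        rw [hcast]
        have harg : Real.pi * m * ((d:ℝ) - 1 - j) / d
            = m * Real.pi - Real.pi * m * ((j:ℝ) + 1) / d := by field_simp; ring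
        rw [harg, Real.cos_sub, hcosm, Real.sin_int_mul_pi]
        push_cast
        ring
      have h1 : ∑ j ∈ Finset.range d, f j = - ∑ j ∈ Finset.range d, f (j + 1) := by
        rw [← Finset.sum_range_reflect f d, Finset.sum_congr rfl hrefl, Finset.sum_neg_distrib]
      have h2 : ∑ j ∈ Finset.range (d + 1), f j
          = ∑ j ∈ Finset.range d, f (j + 1) + f 0 := Finset.sum_range_succ' f d
      have h3 : ∑ j ∈ Finset.range (d + 1), f j = ∑ j ∈ Finset.range d, f j + f d :=
        Finset.sum_range_succ f d
      have hf0 : f 0 = 1 := by simp [hf]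
      have hfd : f d = -1 := by
        rw [hf]
        simp only
        rw [show Real.pi * m * d / d = m * Real.pi from by field_simp, hcosm]
      have := h2.symm.trans h3
      -- ∑ f(j+1) + f 0 = ∑ f j + f d
      rw [hf0, hfd] at this
      have hU : ∑ j ∈ Finset.range d, f j = 1 := by linarith [h1, this]
      exact hU

lemma sum_cos_S (d : ℕ) (hd : 0 < d) (m : ℤ) :
    ∑ j ∈ Finset.range (d - 1), Real.cos (Real.pi * m * ((j:ℝ) + 1) / d) =
      (if (2 * (d:ℤ)) ∣ m then (d:ℝ) else if Even m then 0 else 1) - 1 := by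
  have h := Finset.sum_range_succ' (fun j : ℕ => Real.cos (Real.pi * m * j / d)) (d - 1)
  rw [show d - 1 + 1 = d from by omega] at h
  rw [sum_cos_U d hd m] at h

  push_cast at h
  simp only [Nat.cast_zero, mul_zero, zero_div, zero_mul, Real.cos_zero] at h
  linarith [h]

lemma alt_sum (n : ℕ) : ∑ j ∈ Finset.range n, ((-1:ℝ))^(j+1) = if Even n then 0 else -1 := by
  induction n with
  | zero => simp
  | succ k ih =>
      rw [Finset.sum_range_succ, ih]
      by_cases h : Even k
      · rw [if_pos h, if_neg (by simp [Nat.even_add_one, h])]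
        rw [pow_succ, h.neg_one_pow]
        ring
      · rw [if_neg h, if_pos (Nat.even_add_one.mpr h)]
        rw [pow_succ, (Nat.not_even_iff_odd.mp h).neg_one_pow]
        ring

lemma entry (d : ℕ) (hd2 : 2 ≤ d) (hde : Even d) (a b : ℕ)
    (ha : 1 ≤ a) (had : a ≤ d) (hb : 1 ≤ b) (hbd : b ≤ d) :
    ∑ j ∈ Finset.range d,
      (Real.cos (Real.pi * a * ((j:ℝ) + 1) / d) *
        (if j + 1 = d then
           (if b = d then 0 else (1/(d:ℝ)) * ((-1:ℝ)^b - 1))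
         else
           (if b = d then (1/(d:ℝ)) * ((-1:ℝ)^(j+1) - 1)
            else (1/(d:ℝ)) * (2 * Real.cos (Real.pi * b * ((j:ℝ) + 1) / d) - 2))))
    = if a = b then 1 else 0 := by
  have hd0 : 0 < d := by omega
  have hdR : (d:ℝ) ≠ 0 := by positivity
  have hdR' : (0:ℝ) < d := by positivity
  -- peel last term
  rw [show Finset.range d = Finset.range ((d-1)+1) from by rw [show d - 1 + 1 = d from by omega],
      Finset.sum_range_succ]
  rw [if_pos (show d - 1 + 1 = d from by omega)]
  have hcastd : ((d-1:ℕ):ℝ) + 1 = (d:ℝ) := by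
    push_cast [Nat.cast_sub (by omega : 1 ≤ d)]; ring
  have hcoslast : Real.cos (Real.pi * a * (((d-1:ℕ):ℝ) + 1) / d) = (-1:ℝ)^a := by
    rw [hcastd, show Real.pi * (a:ℝ) * d / d = (a:ℝ) * Real.pi from by field_simp,
        cos_nat_pi]
  rw [hcoslast]
  -- divisibility facts
  have hnd_a : ¬ ((2 * (d:ℤ)) ∣ (a:ℤ)) := by
    intro h
    have := Int.le_of_dvd (by exact_mod_cast ha) h
    omega
  by_cases hbde : b = d
  · -- last column
    rw [hbde]
    rw [if_pos rfl]
    simp only [if_true, mul_zero, add_zero]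
    have hmain : ∀ j ∈ Finset.range (d - 1),
        Real.cos (Real.pi * a * ((j:ℝ) + 1) / d) *
          (if j + 1 = d then (0:ℝ) else (1/(d:ℝ)) * ((-1:ℝ)^(j+1) - 1))
        = (1/(d:ℝ)) * (Real.cos (Real.pi * (((a:ℤ) + d : ℤ):ℝ) * ((j:ℝ) + 1) / d)
            - Real.cos (Real.pi * (((a:ℤ) : ℤ):ℝ) * ((j:ℝ) + 1) / d)) := by
      intro j hj
      rw [Finset.mem_range] at hj
      rw [if_neg (by omega)]
      have harg : Real.pi * (((a:ℤ) + d : ℤ):ℝ) * ((j:ℝ) + 1) / d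
          = Real.pi * (a:ℝ) * ((j:ℝ) + 1) / d + ((j+1 : ℕ):ℝ) * Real.pi := by
        push_cast; field_simp
      rw [harg, Real.cos_add, cos_nat_pi]
      have hsin : Real.sin (((j+1:ℕ):ℝ) * Real.pi) = 0 := by
        exact_mod_cast Real.sin_int_mul_pi ((j:ℤ)+1)
      rw [hsin]
      push_cast
      ring
    rw [Finset.sum_congr rfl hmain, ← Finset.mul_sum, Finset.sum_sub_distrib,
        sum_cos_S d hd0 ((a:ℤ) + d), sum_cos_S d hd0 (a:ℤ)]
    rw [if_neg hnd_a]
    by_cases hade : a = d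
    · rw [hade]
      rw [if_pos ⟨1, by ring⟩, if_pos rfl,
          if_pos (by exact_mod_cast hde : Even ((d:ℤ)))]
      field_simp
      try ring
    · have hnd_ad : ¬ ((2 * (d:ℤ)) ∣ ((a:ℤ) + d)) := by
        intro h
        have := Int.le_of_dvd (by push_cast; omega) h
        omega
      rw [if_neg hnd_ad, if_neg hade]
      have hpar : Even ((a:ℤ) + d) ↔ Even ((a:ℤ)) := by
        simp [Int.even_add, (by exact_mod_cast hde : Even ((d:ℤ)))]
      by_cases hae : Even ((a:ℤ))
      · rw [if_pos (hpar.mpr hae), if_pos hae]; ring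
      · rw [if_neg (by rw [hpar]; exact hae), if_neg hae]; ring
  · -- b < d
    have hnd_ab : ¬ ((2 * (d:ℤ)) ∣ ((a:ℤ) + b)) := by
      intro h
      have hlt : b < d := by omega
      have := Int.le_of_dvd (by push_cast; omega) h
      omega
    simp only [if_neg hbde]
    have hmain : ∀ j ∈ Finset.range (d - 1),
        Real.cos (Real.pi * a * ((j:ℝ) + 1) / d) *
          (if j + 1 = d then (1/(d:ℝ)) * ((-1:ℝ)^b - 1)
           else (1/(d:ℝ)) * (2 * Real.cos (Real.pi * b * ((j:ℝ) + 1) / d) - 2))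
        = (1/(d:ℝ)) * ((Real.cos (Real.pi * (((a:ℤ) - b : ℤ):ℝ) * ((j:ℝ) + 1) / d)
            + Real.cos (Real.pi * (((a:ℤ) + b : ℤ):ℝ) * ((j:ℝ) + 1) / d))
            - 2 * Real.cos (Real.pi * (((a:ℤ) : ℤ):ℝ) * ((j:ℝ) + 1) / d)) := by
      intro j hj
      rw [Finset.mem_range] at hj
      rw [if_neg (by omega)]
      have h1 : Real.pi * (((a:ℤ) - b : ℤ):ℝ) * ((j:ℝ) + 1) / d
          = Real.pi * (a:ℝ) * ((j:ℝ) + 1) / d - Real.pi * (b:ℝ) * ((j:ℝ) + 1) / d := by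
        push_cast; ring
      have h2 : Real.pi * (((a:ℤ) + b : ℤ):ℝ) * ((j:ℝ) + 1) / d
          = Real.pi * (a:ℝ) * ((j:ℝ) + 1) / d + Real.pi * (b:ℝ) * ((j:ℝ) + 1) / d := by
        push_cast; ring
      rw [h1, h2, Real.cos_sub, Real.cos_add]
      push_cast
      ring
    rw [Finset.sum_congr rfl hmain, ← Finset.mul_sum, Finset.sum_sub_distrib,
        Finset.sum_add_distrib, ← Finset.mul_sum,
        sum_cos_S d hd0 ((a:ℤ) - b), sum_cos_S d hd0 ((a:ℤ) + b), sum_cos_S d hd0 (a:ℤ)]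
    rw [if_neg hnd_a, if_neg hnd_ab]
    have hsubiff : (2 * (d:ℤ)) ∣ ((a:ℤ) - b) ↔ a = b := by
      constructor
      · intro h
        have h0 : (a:ℤ) - b = 0 := by
          refine Int.eq_zero_of_abs_lt_dvd h ?_
          rcases abs_cases ((a:ℤ) - b) with ⟨h1, _⟩ | ⟨h1, _⟩ <;> omega
        omega
      · rintro rfl; simp
    have hparsub : Even ((a:ℤ) - b) ↔ (Even a ↔ Even b) := by
      rw [Int.even_sub]
      simp [Int.even_coe_nat]
    have hparadd : Even ((a:ℤ) + b) ↔ (Even a ↔ Even b) := by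
      rw [Int.even_add]
      simp [Int.even_coe_nat]
    have hparA : Even ((a:ℤ)) ↔ Even a := Int.even_coe_nat a
    by_cases hab : a = b
    · subst hab
      rw [if_pos (hsubiff.mpr rfl), if_pos rfl]
      rcases Nat.even_or_odd a with hae | hao
      · rw [if_pos (hparadd.mpr Iff.rfl), if_pos (hparA.mpr hae), hae.neg_one_pow]
        field_simp
        try ring
      · rw [if_pos (hparadd.mpr Iff.rfl),
            if_neg (by rw [hparA]; exact Nat.not_even_iff_odd.mpr hao), hao.neg_one_pow]
        field_simp
        try ring
    · rw [if_neg (by rw [hsubiff]; exact hab), if_neg hab]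
      rcases Nat.even_or_odd a with hae | hao <;> rcases Nat.even_or_odd b with hbe | hbo
      · rw [if_pos (hparsub.mpr (by tauto)), if_pos (hparadd.mpr (by tauto)),
            if_pos (hparA.mpr hae), hae.neg_one_pow, hbe.neg_one_pow]
        ring
      · rw [if_neg (by rw [hparsub]; simp [hae, Nat.not_even_iff_odd.mpr hbo]),
            if_neg (by rw [hparadd]; simp [hae, Nat.not_even_iff_odd.mpr hbo]),
            if_pos (hparA.mpr hae), hae.neg_one_pow, hbo.neg_one_pow]
        field_simp
        try ring
      · rw [if_neg (by rw [hparsub]; simp [hbe, Nat.not_even_iff_odd.mpr hao]),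
            if_neg (by rw [hparadd]; simp [hbe, Nat.not_even_iff_odd.mpr hao]),
            if_neg (by rw [hparA]; exact Nat.not_even_iff_odd.mpr hao),
            hao.neg_one_pow, hbe.neg_one_pow]
        ring
      · rw [if_pos (hparsub.mpr (by simp [Nat.not_even_iff_odd.mpr hao, Nat.not_even_iff_odd.mpr hbo])),
            if_pos (hparadd.mpr (by simp [Nat.not_even_iff_odd.mpr hao, Nat.not_even_iff_odd.mpr hbo])),
            if_neg (by rw [hparA]; exact Nat.not_even_iff_odd.mpr hao),
            hao.neg_one_pow, hbo.neg_one_pow]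
        field_simp
        try ring

lemma rowsum (d : ℕ) (hd2 : 2 ≤ d) (hde : Even d) (a : ℕ) (ha : 1 ≤ a) (had : a ≤ d) :
    ∑ k ∈ Finset.range d,
      (if a = d then (if k + 1 = d then (0:ℝ) else (1/(d:ℝ)) * ((-1:ℝ)^(k+1) - 1))
       else (if k + 1 = d then (1/(d:ℝ)) * ((-1:ℝ)^a - 1)
             else (1/(d:ℝ)) * (2 * Real.cos (Real.pi * a * ((k:ℝ) + 1) / d) - 2)))
    = -2 + if a = d then 1 else 0 := by
  have hd0 : 0 < d := by omega
  have hdR : (d:ℝ) ≠ 0 := by positivity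
  have hlast : d - 1 + 1 = d := by omega
  by_cases hade : a = d
  · simp only [if_pos hade]
    rw [show Finset.range d = Finset.range ((d-1)+1) from by rw [hlast],
        Finset.sum_range_succ, if_pos hlast]
    have hmain : ∀ k ∈ Finset.range (d - 1),
        (if k + 1 = d then (0:ℝ) else (1/(d:ℝ)) * ((-1:ℝ)^(k+1) - 1))
        = (1/(d:ℝ)) * ((-1:ℝ)^(k+1) - 1) := by
      intro k hk
      rw [Finset.mem_range] at hk
      rw [if_neg (by omega)]
    rw [Finset.sum_congr rfl hmain, ← Finset.mul_sum, Finset.sum_sub_distrib, alt_sum (d-1),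
        if_neg (by simp [Nat.even_sub (by omega : 1 ≤ d), hde])]
    simp only [Finset.sum_const, Finset.card_range, nsmul_eq_mul]
    rw [Nat.cast_sub (by omega : 1 ≤ d)]
    push_cast
    field_simp
    ring
  · simp only [if_neg hade]
    rw [show Finset.range d = Finset.range ((d-1)+1) from by rw [hlast],
        Finset.sum_range_succ, if_pos hlast]
    have hmain : ∀ k ∈ Finset.range (d - 1),
        (if k + 1 = d then (1/(d:ℝ)) * ((-1:ℝ)^a - 1)
         else (1/(d:ℝ)) * (2 * Real.cos (Real.pi * a * ((k:ℝ) + 1) / d) - 2))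
        = (1/(d:ℝ)) * (2 * Real.cos (Real.pi * ((a:ℤ):ℝ) * ((k:ℝ) + 1) / d) - 2) := by
      intro k hk
      rw [Finset.mem_range] at hk
      rw [if_neg (by omega)]
      push_cast
      ring
    rw [Finset.sum_congr rfl hmain, ← Finset.mul_sum, Finset.sum_sub_distrib, ← Finset.mul_sum,
        sum_cos_S d hd0 (a:ℤ)]
    have hnd_a : ¬ ((2 * (d:ℤ)) ∣ (a:ℤ)) := by
      intro h
      have := Int.le_of_dvd (by exact_mod_cast ha) h
      omega
    rw [if_neg hnd_a]
    simp only [Finset.sum_const, Finset.card_range, nsmul_eq_mul]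
    rw [Nat.cast_sub (by omega : 1 ≤ d)]
    rcases Nat.even_or_odd a with hae | hao
    · rw [if_pos (by exact_mod_cast hae), hae.neg_one_pow]
      field_simp
      ring
    · rw [if_neg (by rw [Int.even_coe_nat]; exact Nat.not_even_iff_odd.mpr hao), hao.neg_one_pow]
      field_simp
      ring


open Matrix

theorem stmt_12 (d : ℕ) (hd : 0 < d) (hde : Even d) (n : ℕ) (hn : n = 2 * d)
    (Q R : Matrix (Fin d) (Fin d) ℝ)
    (hQ : ∀ i j : Fin d,
      Q i j = Real.cos (2 * Real.pi * ((i : ℕ) + 1) * ((j : ℕ) + 1) / n))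
    (hR : ∀ i j : Fin d, R i j =
      if (i : ℕ) + 1 = d then
        (if (j : ℕ) + 1 = d then 0
         else (1 / (d : ℝ)) * ((-1 : ℝ) ^ ((j : ℕ) + 1) - 1))
      else
        (if (j : ℕ) + 1 = d then (1 / (d : ℝ)) * ((-1 : ℝ) ^ ((i : ℕ) + 1) - 1)
         else (1 / (d : ℝ)) *
           (2 * Real.cos (2 * Real.pi * ((i : ℕ) + 1) * ((j : ℕ) + 1) / n) - 2))) :
    Q * R = 1 ∧
    R *ᵥ (fun _ => (1 : ℝ)) = fun i : Fin d => (-2 : ℝ) + (if (i : ℕ) + 1 = d then 1 else 0) := by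
  subst hn
  have hd2 : 2 ≤ d := by
    obtain ⟨e, he⟩ := hde
    omega
  have hdR : (d : ℝ) ≠ 0 := by positivity
  constructor
  · ext i k
    rw [Matrix.mul_apply, Matrix.one_apply]
    calc ∑ j : Fin d, Q i j * R j k
        = ∑ j : Fin d, (fun jj : ℕ =>
            Real.cos (Real.pi * (((i:ℕ)+1 : ℕ):ℝ) * ((jj:ℝ) + 1) / d) *
              (if jj + 1 = d then
                 (if (k:ℕ) + 1 = d then (0:ℝ)
                  else (1/(d:ℝ)) * ((-1:ℝ)^((k:ℕ)+1) - 1))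
               else
                 (if (k:ℕ) + 1 = d then (1/(d:ℝ)) * ((-1:ℝ)^(jj+1) - 1)
                  else (1/(d:ℝ)) *
                    (2 * Real.cos (Real.pi * (((k:ℕ)+1 : ℕ):ℝ) * ((jj:ℝ) + 1) / d) - 2))))
            ((j : ℕ)) := by
          refine Finset.sum_congr rfl fun j _ => ?_
          rw [hQ i j, hR j k]
          simp only
          rw [show (2 * Real.pi * (((i:ℕ):ℝ)+1) * (((j:ℕ):ℝ)+1) / ((2*d : ℕ):ℝ))
                = Real.pi * (((i:ℕ)+1 : ℕ):ℝ) * (((j:ℕ):ℝ) + 1) / d from by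
              push_cast; field_simp]
          rw [show (2 * Real.pi * (((j:ℕ):ℝ)+1) * (((k:ℕ):ℝ)+1) / ((2*d : ℕ):ℝ))
                = Real.pi * (((k:ℕ)+1 : ℕ):ℝ) * (((j:ℕ):ℝ) + 1) / d from by
              push_cast; field_simp]
      _ = ∑ jj ∈ Finset.range d,
            (Real.cos (Real.pi * (((i:ℕ)+1 : ℕ):ℝ) * ((jj:ℝ) + 1) / d) *
              (if jj + 1 = d then
                 (if (k:ℕ) + 1 = d then (0:ℝ)
                  else (1/(d:ℝ)) * ((-1:ℝ)^((k:ℕ)+1) - 1))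
               else
                 (if (k:ℕ) + 1 = d then (1/(d:ℝ)) * ((-1:ℝ)^(jj+1) - 1)
                  else (1/(d:ℝ)) *
                    (2 * Real.cos (Real.pi * (((k:ℕ)+1 : ℕ):ℝ) * ((jj:ℝ) + 1) / d) - 2)))) :=
          Fin.sum_univ_eq_sum_range (fun jj : ℕ =>
            Real.cos (Real.pi * (((i:ℕ)+1 : ℕ):ℝ) * ((jj:ℝ) + 1) / d) *
              (if jj + 1 = d then
                 (if (k:ℕ) + 1 = d then (0:ℝ)
                  else (1/(d:ℝ)) * ((-1:ℝ)^((k:ℕ)+1) - 1))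
               else
                 (if (k:ℕ) + 1 = d then (1/(d:ℝ)) * ((-1:ℝ)^(jj+1) - 1)
                  else (1/(d:ℝ)) *
                    (2 * Real.cos (Real.pi * (((k:ℕ)+1 : ℕ):ℝ) * ((jj:ℝ) + 1) / d) - 2)))) d
      _ = if (i:ℕ)+1 = (k:ℕ)+1 then 1 else 0 :=
          entry d hd2 hde ((i:ℕ)+1) ((k:ℕ)+1) (by omega) (by omega) (by omega)
            (by have := k.isLt; omega)
      _ = if i = k then 1 else 0 := by
          have hiff : ((i:ℕ)+1 = (k:ℕ)+1) ↔ i = k := by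
            rw [Fin.ext_iff]; omega
          simp only [hiff]
  · funext i
    have hsum : (R *ᵥ (fun _ => (1:ℝ))) i = ∑ j : Fin d, R i j := by
      simp [Matrix.mulVec, dotProduct]
    rw [hsum]
    calc ∑ j : Fin d, R i j
        = ∑ j : Fin d, (fun kk : ℕ =>
            (if (i:ℕ) + 1 = d then
               (if kk + 1 = d then (0:ℝ) else (1/(d:ℝ)) * ((-1:ℝ)^(kk+1) - 1))
             else
               (if kk + 1 = d then (1/(d:ℝ)) * ((-1:ℝ)^((i:ℕ)+1) - 1)
                else (1/(d:ℝ)) *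
                  (2 * Real.cos (Real.pi * (((i:ℕ)+1 : ℕ):ℝ) * ((kk:ℝ) + 1) / d) - 2))))
            ((j : ℕ)) := by
          refine Finset.sum_congr rfl fun j _ => ?_
          rw [hR i j]
          simp only
          rw [show (2 * Real.pi * (((i:ℕ):ℝ)+1) * (((j:ℕ):ℝ)+1) / ((2*d : ℕ):ℝ))
                = Real.pi * (((i:ℕ)+1 : ℕ):ℝ) * (((j:ℕ):ℝ) + 1) / d from by
              push_cast; field_simp]
      _ = ∑ kk ∈ Finset.range d,
            (if (i:ℕ) + 1 = d then
               (if kk + 1 = d then (0:ℝ) else (1/(d:ℝ)) * ((-1:ℝ)^(kk+1) - 1))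
             else
               (if kk + 1 = d then (1/(d:ℝ)) * ((-1:ℝ)^((i:ℕ)+1) - 1)
                else (1/(d:ℝ)) *
                  (2 * Real.cos (Real.pi * (((i:ℕ)+1 : ℕ):ℝ) * ((kk:ℝ) + 1) / d) - 2))) :=
          Fin.sum_univ_eq_sum_range (fun kk : ℕ =>
            (if (i:ℕ) + 1 = d then
               (if kk + 1 = d then (0:ℝ) else (1/(d:ℝ)) * ((-1:ℝ)^(kk+1) - 1))
             else
               (if kk + 1 = d then (1/(d:ℝ)) * ((-1:ℝ)^((i:ℕ)+1) - 1)
                else (1/(d:ℝ)) *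
                  (2 * Real.cos (Real.pi * (((i:ℕ)+1 : ℕ):ℝ) * ((kk:ℝ) + 1) / d) - 2)))) d
      _ = -2 + if (i:ℕ)+1 = d then 1 else 0 :=
          rowsum d hd2 hde ((i:ℕ)+1) (by omega) (by have := i.isLt; omega)
end

section
/- Let n = 2d be an even positive integer, and let a_1 = (2/(n−2))·(cos(π/d) + 1). Then for all sufficiently large even n, ((n−1)/n) · (d(d−1)/2) · a_1 > d − 1. Consequently, the scaled solution ((n−1)/n)·x, where x_e = X^(1)_{ij} for each edge e = {i,j}, violates the spanning-tree constraint ∑_{e ⊆ U} z_e ≤ |U| − 1 for the group U of d vertices, so x cannot be scaled into the minimum spanning tree polytope. -/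
theorem stmt_13 :
    ∃ N : ℕ, ∀ n : ℕ, N ≤ n → ∀ d : ℕ, n = 2 * d →
      ((n : ℝ) - 1) / n * ((d : ℝ) * ((d : ℝ) - 1) / 2) *
          ((2 / ((n : ℝ) - 2)) * (Real.cos (Real.pi / d) + 1))
        > (d : ℝ) - 1 := by
  use 12
  intro n hn d hnd
  subst hnd
  have hd : (6 : ℕ) ≤ d := by omega
  have hd' : (6 : ℝ) ≤ (d : ℝ) := by exact_mod_cast hd
  have hdpos : (0 : ℝ) < d := by linarith
  set c := Real.cos (Real.pi / d) with hc
  have hcos : 1 - (Real.pi / d) ^ 2 / 2 ≤ c := Real.one_sub_sq_div_two_le_cos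
  have hpi : Real.pi < 3.15 := Real.pi_lt_d2
  have hpi0 : 0 < Real.pi := Real.pi_pos
  have hpisq : Real.pi ^ 2 < 10 := by nlinarith
  have hc2 : 1 - 5 / (d : ℝ) ^ 2 ≤ c := by
    have h1 : (Real.pi / d) ^ 2 = Real.pi ^ 2 / (d : ℝ) ^ 2 := div_pow _ _ _
    have h2 : Real.pi ^ 2 / (d : ℝ) ^ 2 ≤ 10 / (d : ℝ) ^ 2 := by
      apply div_le_div_of_nonneg_right ?_ (by positivity) |>.trans_eq rfl
      · linarith
    have h3 : 10 / (d : ℝ) ^ 2 = 2 * (5 / (d : ℝ) ^ 2) := by ring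
    rw [h1] at hcos
    linarith
  have hdsq : (0 : ℝ) < (d : ℝ) ^ 2 := by positivity
  have hc3 : c * (d : ℝ) ^ 2 ≥ (d : ℝ) ^ 2 - 5 := by
    have heq : 5 / (d : ℝ) ^ 2 * (d : ℝ) ^ 2 = 5 := by field_simp
    nlinarith [mul_le_mul_of_nonneg_right hc2 hdsq.le, heq]
  have hn0 : (2 * (d : ℝ)) ≠ 0 := by positivity
  have hn2 : (2 * (d : ℝ) - 2) ≠ 0 := by intro h; nlinarith
  push_cast
  have key : (2 * (d : ℝ) - 1) / (2 * d) * ((d : ℝ) * ((d : ℝ) - 1) / 2) *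
      (2 / (2 * (d : ℝ) - 2) * (c + 1)) = (2 * (d : ℝ) - 1) / 4 * (c + 1) := by
    field_simp [show (d : ℝ) - 1 ≠ 0 by intro h; nlinarith]
    ring
  rw [key]
  rw [gt_iff_lt, ← sub_pos]
  have hexp : (2 * (d : ℝ) - 1) / 4 * (c + 1) - ((d : ℝ) - 1) =
      ((2 * (d : ℝ) - 1) * (c + 1) - 4 * ((d : ℝ) - 1)) / 4 := by ring
  rw [hexp]
  apply div_pos ?_ (by norm_num)
  nlinarith [hc3, hd', sq_nonneg ((d : ℝ) - 6)]
end

section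
/- Let n = 2d be an even positive integer with n ≥ 4. Let a_1 = (2/(n−2))·(cos(π/d) + 1) and b_1 = (2/n)·(1 − cos(π/d)), and let X^(1) be the symmetric n×n matrix with zero diagonal whose (s,t) entry for s ≠ t equals a_1 if s and t both lie in {1,...,d} or both lie in {d+1,...,n}, and b_1 otherwise. Let h_n = 2 − 2cos(2π/n). Then: (i) the matrix 2I − X^(1) + h_n·(J − I) is positive semidefinite, so X^(1) is feasible for the SDP of Cvetković, Čangalović, and Kovačević-Vujčić; and (ii) the vector v ∈ ℝⁿ with v_s = 1 for s ≤ d and v_s = −1 for s > d satisfies (2I − X^(1))·v = h_n·v, so the second smallest eigenvalue of the Laplacian 2I − X^(1) is exactly h_n, the algebraic connectivity of the n-cycle. -/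
set_option maxHeartbeats 1000000

open Matrix

lemma psd_smul_nonneg {m : Type*} [Fintype m] {A : Matrix m m ℝ} (hA : A.PosSemidef)
    {a : ℝ} (ha : 0 ≤ a) : (a • A).PosSemidef := by
  refine Matrix.PosSemidef.of_dotProduct_mulVec_nonneg ?_ fun x => ?_
  · unfold Matrix.IsHermitian
    ext i j
    simp only [Matrix.conjTranspose_apply, Matrix.smul_apply, smul_eq_mul, star_trivial]
    have := hA.1.apply i j
    simp only [star_trivial] at this
    rw [this]
  · rw [Matrix.smul_mulVec, dotProduct_smul]
    exact mul_nonneg ha (hA.dotProduct_mulVec_nonneg x)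

theorem stmt_14 (d : ℕ) (hd : 0 < d) (n : ℕ) (hn : n = 2 * d) (hn4 : 4 ≤ n)
    (a1 b1 : ℝ)
    (ha1 : a1 = (2 / ((n : ℝ) - 2)) * (Real.cos (Real.pi / d) + 1))
    (hb1 : b1 = (2 / (n : ℝ)) * (1 - Real.cos (Real.pi / d)))
    (X : Matrix (Fin n) (Fin n) ℝ)
    (hX : ∀ s t : Fin n, X s t =
      if s = t then 0
      else if (((s : ℕ) < d) ↔ ((t : ℕ) < d)) then a1 else b1)
    (h : ℝ) (hh : h = 2 - 2 * Real.cos (2 * Real.pi / n))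
    (v : Fin n → ℝ) (hv : ∀ s : Fin n, v s = if (s : ℕ) < d then 1 else -1) :
    ((2 : ℝ) • (1 : Matrix (Fin n) (Fin n) ℝ) - X +
        h • (Matrix.of (fun _ _ => (1 : ℝ)) - 1)).PosSemidef ∧
    ((2 : ℝ) • (1 : Matrix (Fin n) (Fin n) ℝ) - X) *ᵥ v = h • v := by
  have hd2 : 2 ≤ d := by omega
  have hdn : d < n := by omega
  have hD0 : (0:ℝ) < (d:ℝ) := by exact_mod_cast hd
  have hD2 : (2:ℝ) ≤ (d:ℝ) := by exact_mod_cast hd2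
  have hnR : (n : ℝ) = 2 * (d:ℝ) := by rw [hn]; push_cast; ring
  set c := Real.cos (Real.pi / d) with hcdef
  have hpin : 2 * Real.pi / (n:ℝ) = Real.pi / (d:ℝ) := by
    rw [hnR]; field_simp
  have hh2 : h = 2 - 2 * c := by rw [hh, hpin]
  have hc0 : 0 ≤ c := by
    apply Real.cos_nonneg_of_mem_Icc
    constructor
    · have : 0 ≤ Real.pi / (d:ℝ) := by positivity
      linarith [Real.pi_pos]
    · calc Real.pi / (d:ℝ) ≤ Real.pi / 2 :=
            div_le_div_of_nonneg_left Real.pi_pos.le two_pos hD2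
        _ = Real.pi / 2 := rfl
  have hc1 : c ≤ 1 := Real.cos_le_one _
  have hvv : ∀ t : Fin n, v t * v t = 1 := by
    intro t; rw [hv]; split <;> norm_num
  -- algebraic form of X
  set α : ℝ := (a1 + b1) / 2 with hα
  set β : ℝ := (a1 - b1) / 2 with hβ
  have hXab : ∀ s t : Fin n, X s t
      = α + β * (v s * v t) - (α + β) * (if s = t then 1 else 0) := by
    intro s t
    rw [hX, hv, hv]
    by_cases hst : s = t
    · subst hst
      by_cases h1 : (s:ℕ) < d <;> simp [h1, hα, hβ] <;> ring
    · simp only [if_neg hst]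
      by_cases h1 : (s:ℕ) < d <;> by_cases h2 : (t:ℕ) < d <;>
        simp [h1, h2] <;> · rw [hα, hβ]; ring
  -- cardinalities
  have hF : (Finset.univ.filter fun t : Fin n => (t:ℕ) < d).card = d := by
    have : (Finset.univ.filter fun t : Fin n => (t:ℕ) < d) = Finset.Iio (⟨d, hdn⟩ : Fin n) := by
      ext t; simp [Fin.lt_def]
    rw [this, Fin.card_Iio]
  have hFc : (Finset.univ.filter fun t : Fin n => ¬ (t:ℕ) < d).card = d := by
    have h2 := Finset.card_filter_add_card_filter_not
      (s := (Finset.univ : Finset (Fin n))) (p := fun t : Fin n => (t:ℕ) < d)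
    simp only [Finset.card_univ, Fintype.card_fin] at h2
    omega
  have hsv : ∑ t : Fin n, v t = 0 := by
    calc ∑ t : Fin n, v t = ∑ t : Fin n, (if (t:ℕ) < d then (1:ℝ) else -1) := by
          exact Finset.sum_congr rfl fun t _ => hv t
      _ = 0 := by
          rw [Finset.sum_ite, Finset.sum_const, Finset.sum_const, hF, hFc]
          simp
  have hsvv : ∑ t : Fin n, v t * v t = (n : ℝ) := by
    calc ∑ t : Fin n, v t * v t = ∑ _t : Fin n, (1:ℝ) :=
          Finset.sum_congr rfl fun t _ => hvv t
      _ = (n:ℝ) := by simp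
  -- scalar facts
  have hne1 : (n:ℝ) - 2 ≠ 0 := by rw [hnR]; nlinarith
  have hne2 : (n:ℝ) ≠ 0 := by rw [hnR]; positivity
  have hd1 : (d:ℝ) - 1 ≠ 0 := by linarith
  -- Part 2
  have part2 : ((2 : ℝ) • (1 : Matrix (Fin n) (Fin n) ℝ) - X) *ᵥ v = h • v := by
    funext s
    have hrow : ∀ t : Fin n, ((2 : ℝ) • (1 : Matrix (Fin n) (Fin n) ℝ) - X) s t * v t
        = (2 + α + β) * (if s = t then v t else 0) - (α * v t + β * v s * (v t * v t)) := by
      intro t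
      simp only [Matrix.sub_apply, Matrix.smul_apply, one_apply, smul_eq_mul, hXab s t]
      split <;> ring
    have : (((2 : ℝ) • (1 : Matrix (Fin n) (Fin n) ℝ) - X) *ᵥ v) s
        = ∑ t : Fin n, (((2 : ℝ) • (1 : Matrix (Fin n) (Fin n) ℝ) - X) s t * v t) := rfl
    rw [this]
    rw [Finset.sum_congr rfl fun t _ => hrow t]
    rw [Finset.sum_sub_distrib, ← Finset.mul_sum, Finset.sum_ite_eq, Finset.sum_add_distrib,
      ← Finset.mul_sum, ← Finset.mul_sum, hsv, hsvv]
    simp only [Finset.mem_univ, if_pos, mul_zero, zero_add, Pi.smul_apply, smul_eq_mul]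
    have hscal : 2 + α + β - β * (n:ℝ) = h := by
      rw [hα, hβ, ha1, hb1, hh2, hnR]
      rw [hnR] at hne1 hne2
      field_simp
      ring
    linear_combination (v s) * hscal
  refine ⟨?_, part2⟩
  -- Part 1
  set J : Matrix (Fin n) (Fin n) ℝ := Matrix.of (fun _ _ => (1:ℝ)) with hJ
  set W : Matrix (Fin n) (Fin n) ℝ := Matrix.of (fun s t => v s * v t) with hW
  set N : Matrix (Fin n) (Fin n) ℝ := 1 - ((n:ℝ))⁻¹ • (J + W) with hN
  set γ : ℝ := 2 - h + a1 with hγ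
  set q : ℝ := h - b1 with hq
  have hγ0 : 0 ≤ γ := by
    have h1 : γ = 2 * c + 2 / ((n:ℝ) - 2) * (c + 1) := by rw [hγ, hh2, ha1]; ring
    rw [h1]
    have : (0:ℝ) < (n:ℝ) - 2 := by rw [hnR]; nlinarith
    have hcm1 : (-1:ℝ) ≤ c := Real.neg_one_le_cos _
    have : 0 ≤ 2 / ((n:ℝ) - 2) * (c + 1) := by
      apply mul_nonneg (by positivity) (by linarith)
    linarith
  have hq0 : 0 ≤ q := by
    have h1 : q = (1 - c) * (2 * (n:ℝ) - 2) / (n:ℝ) := by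
      rw [hq, hh2, hb1]; field_simp
    rw [h1]
    apply div_nonneg _ (by rw [hnR]; positivity)
    apply mul_nonneg (by linarith)
    rw [hnR]; nlinarith
  have hM : (2 : ℝ) • (1 : Matrix (Fin n) (Fin n) ℝ) - X +
      h • (Matrix.of (fun _ _ => (1 : ℝ)) - 1) = γ • N + q • J := by
    ext s t
    simp only [Matrix.add_apply, Matrix.sub_apply, Matrix.smul_apply, one_apply, Matrix.of_apply, smul_eq_mul,
      hN, hW, hJ, hXab s t]
    by_cases hst : s = t
    · subst hst
      rw [if_pos rfl, hvv s, hγ, hq, hα, hβ, hh2, ha1, hb1]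
      field_simp
      ring
    · rw [if_neg hst, hv, hv]
      by_cases h1 : (s:ℕ) < d <;> by_cases h2 : (t:ℕ) < d <;>
        simp only [h1, h2, if_true, if_false, if_neg, not_false_iff, not_true] <;>
        · rw [hγ, hq, hα, hβ, hh2, ha1, hb1]
          field_simp
          ring
  rw [hM]
  have psdJ : J.PosSemidef := by
    refine Matrix.PosSemidef.of_dotProduct_mulVec_nonneg ?_ fun x => ?_
    · unfold Matrix.IsHermitian
      ext i j; simp [hJ, Matrix.conjTranspose_apply]
    · have : star x ⬝ᵥ (J *ᵥ x) = (∑ t, x t) * (∑ t, x t) := by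
        simp only [star_trivial, dotProduct, mulVec, hJ, Matrix.of_apply, one_mul]
        rw [← Finset.sum_mul]
      rw [this]
      exact mul_self_nonneg _
  have psdN : N.PosSemidef := by
    refine Matrix.PosSemidef.of_dotProduct_mulVec_nonneg ?_ fun x => ?_
    · unfold Matrix.IsHermitian
      ext i j
      simp only [hN, hJ, hW, Matrix.conjTranspose_apply, Matrix.sub_apply, Matrix.smul_apply, one_apply,
        Matrix.add_apply, Matrix.of_apply, smul_eq_mul, star_trivial]
      rw [mul_comm (v j) (v i)]
      by_cases hij : i = j
      · subst hij; simp
      · simp [hij, Ne.symm hij]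
    · set S1 : ℝ := ∑ t ∈ Finset.univ.filter (fun t : Fin n => (t:ℕ) < d), x t with hS1
      set S2 : ℝ := ∑ t ∈ Finset.univ.filter (fun t : Fin n => ¬ (t:ℕ) < d), x t with hS2
      set Q1 : ℝ := ∑ t ∈ Finset.univ.filter (fun t : Fin n => (t:ℕ) < d), x t ^ 2 with hQ1
      set Q2 : ℝ := ∑ t ∈ Finset.univ.filter (fun t : Fin n => ¬ (t:ℕ) < d), x t ^ 2 with hQ2
      have hT : ∑ t : Fin n, x t = S1 + S2 :=
        (Finset.sum_filter_add_sum_filter_not _ _ _).symm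
      have hQ : ∑ t : Fin n, x t ^ 2 = Q1 + Q2 :=
        (Finset.sum_filter_add_sum_filter_not _ _ _).symm
      have hU : ∑ t : Fin n, v t * x t = S1 - S2 := by
        calc ∑ t : Fin n, v t * x t
            = ∑ t : Fin n, (if (t:ℕ) < d then x t else - x t) := by
              refine Finset.sum_congr rfl fun t _ => ?_
              rw [hv]; split <;> ring
          _ = S1 - S2 := by
              rw [Finset.sum_ite, Finset.sum_neg_distrib]
              rw [hS1, hS2]; ring
      have hform : star x ⬝ᵥ (N *ᵥ x)
          = (∑ t : Fin n, x t ^ 2)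
            - ((n:ℝ))⁻¹ * ((∑ t : Fin n, x t) ^ 2 + (∑ t : Fin n, v t * x t) ^ 2) := by
        have hrow : ∀ s : Fin n, (N *ᵥ x) s
            = x s - ((n:ℝ))⁻¹ * ((∑ t : Fin n, x t) + v s * (∑ t : Fin n, v t * x t)) := by
          intro s
          have : (N *ᵥ x) s = ∑ t : Fin n, (N s t * x t) := rfl
          rw [this]
          have hentry : ∀ t : Fin n, N s t * x t
              = (if s = t then x t else 0) - ((n:ℝ))⁻¹ * (x t + v s * (v t * x t)) := by
            intro t
            simp only [hN, hJ, hW, Matrix.sub_apply, Matrix.smul_apply, one_apply, Matrix.add_apply,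
              Matrix.of_apply, smul_eq_mul]
            split <;> ring
          rw [Finset.sum_congr rfl fun t _ => hentry t, Finset.sum_sub_distrib,
            Finset.sum_ite_eq, ← Finset.mul_sum, Finset.sum_add_distrib, ← Finset.mul_sum]
          simp
        simp only [star_trivial, dotProduct]
        rw [Finset.sum_congr rfl fun s _ => by rw [hrow s]]
        have expand : ∀ s : Fin n, x s * (x s - ((n:ℝ))⁻¹ * ((∑ t : Fin n, x t)
              + v s * (∑ t : Fin n, v t * x t)))
            = x s ^ 2 - ((n:ℝ))⁻¹ * ((∑ t : Fin n, x t) * x s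
              + (∑ t : Fin n, v t * x t) * (v s * x s)) := by
          intro s; ring
        rw [Finset.sum_congr rfl fun s _ => expand s, Finset.sum_sub_distrib,
          ← Finset.mul_sum, Finset.sum_add_distrib, ← Finset.mul_sum, ← Finset.mul_sum]
        ring
      rw [hform, hT, hU, hQ]
      have hCS1 : S1 ^ 2 ≤ (d:ℝ) * Q1 := by
        have := sq_sum_le_card_mul_sum_sq
          (s := Finset.univ.filter (fun t : Fin n => (t:ℕ) < d)) (f := x)
        rw [hF] at this
        exact_mod_cast this
      have hCS2 : S2 ^ 2 ≤ (d:ℝ) * Q2 := by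
        have := sq_sum_le_card_mul_sum_sq
          (s := Finset.univ.filter (fun t : Fin n => ¬ (t:ℕ) < d)) (f := x)
        rw [hFc] at this
        exact_mod_cast this
      have hinv : ((n:ℝ))⁻¹ = 1 / (2 * (d:ℝ)) := by rw [hnR, one_div]
      rw [hinv]
      have key : ((S1 + S2) ^ 2 + (S1 - S2) ^ 2) / (2 * (d:ℝ)) ≤ Q1 + Q2 := by
        rw [div_le_iff₀ (by positivity)]
        nlinarith [hCS1, hCS2]
      have : 1 / (2 * (d:ℝ)) * ((S1 + S2) ^ 2 + (S1 - S2) ^ 2)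
          = ((S1 + S2) ^ 2 + (S1 - S2) ^ 2) / (2 * (d:ℝ)) := by ring
      rw [this]
      linarith
  exact (psd_smul_nonneg psdN hγ0).add (psd_smul_nonneg psdJ hq0)
end

section
/- Let k ≥ 2 and c ≥ 1 be integers, with c even whenever k is even. Let n = ck(k+1) and d = n/2. For i = 1,...,d define a_i = 0 if k does not divide i; a_i = (2/(n−k−1))·(cos(πi/d) + k) if k divides i and i ≠ d; and a_d = (1/(n−k−1))·(cos(πd/d) + k) = (k−1)/(n−k−1). Then ∑_{i=1}^d a_i = 1. -/
open Finset in
lemma cos_sum_zero (m : ℕ) :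
    ∑ j ∈ Finset.Icc 1 (m - 1), Real.cos (Real.pi * j / m) = 0 := by
  rcases Nat.eq_zero_or_pos m with hm | hm
  · simp [hm]
  set S := ∑ j ∈ Finset.Icc 1 (m - 1), Real.cos (Real.pi * j / m) with hS
  have hrefl : S = ∑ j ∈ Finset.Icc 1 (m - 1), Real.cos (Real.pi * ((m : ℝ) - j) / m) := by
    rw [hS]
    apply Finset.sum_nbij' (i := fun j => m - j) (j := fun j => m - j)
    · intro x hx
      simp only [Finset.mem_Icc] at hx ⊢
      omega
    · intro x hx
      simp only [Finset.mem_Icc] at hx ⊢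
      omega
    · intro x hx
      simp only [Finset.mem_Icc] at hx
      omega
    · intro x hx
      simp only [Finset.mem_Icc] at hx
      omega
    · intro x hx
      simp only [Finset.mem_Icc] at hx
      have : ((m - x : ℕ) : ℝ) = (m : ℝ) - x := by
        push_cast [Nat.cast_sub (by omega : x ≤ m)]; ring
      rw [this]
      congr 1
      ring
  have hstep : ∀ j ∈ Finset.Icc 1 (m - 1),
      Real.cos (Real.pi * ((m : ℝ) - j) / m) = - Real.cos (Real.pi * j / m) := by
    intro j hj
    have hm0 : (m : ℝ) ≠ 0 := Nat.cast_ne_zero.mpr (by omega)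
    have : Real.pi * ((m : ℝ) - j) / m = Real.pi - Real.pi * j / m := by
      field_simp
    rw [this, Real.cos_pi_sub]
  rw [Finset.sum_congr rfl hstep, Finset.sum_neg_distrib] at hrefl
  linarith [hrefl]

theorem stmt_17 (k c : ℕ) (hk : 2 ≤ k) (hc : 1 ≤ c) (hpar : Even k → Even c)
    (n d : ℕ) (hn : n = c * k * (k + 1)) (hd : n = 2 * d)
    (a : ℕ → ℝ)
    (ha : ∀ i ∈ Finset.Icc 1 d, a i =
      if ¬ (k ∣ i) then 0
      else if i ≠ d then (2 / ((n : ℝ) - k - 1)) * (Real.cos (Real.pi * i / d) + k)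
      else (1 / ((n : ℝ) - k - 1)) * (Real.cos (Real.pi * d / d) + k)) :
    ∑ i ∈ Finset.Icc 1 d, a i = 1 := by
  classical
  -- obtain m with d = k * m and m ≥ 2
  obtain ⟨m, hm, hm2⟩ : ∃ m, d = k * m ∧ 2 ≤ m := by
    rcases Nat.even_or_odd k with he | ho
    · obtain ⟨c', hc'⟩ := hpar he
      have e : 2 * d = 2 * (k * (c' * (k + 1))) := by rw [← hd, hn, hc']; ring
      exact ⟨c' * (k + 1), Nat.eq_of_mul_eq_mul_left (by norm_num) e, by nlinarith⟩
    · obtain ⟨t, ht⟩ := ho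
      have e : 2 * d = 2 * (k * (c * (t + 1))) := by rw [← hd, hn, ht]; ring
      exact ⟨c * (t + 1), Nat.eq_of_mul_eq_mul_left (by norm_num) e, by nlinarith⟩
  have hk0 : k ≠ 0 := by omega
  have hd0 : d ≠ 0 := by nlinarith
  have hkR : (2 : ℝ) ≤ k := by exact_mod_cast hk
  have hmR : (2 : ℝ) ≤ m := by exact_mod_cast hm2
  have hNpos : (0 : ℝ) < (n : ℝ) - k - 1 := by
    have : (n : ℝ) = 2 * k * m := by
      have : n = 2 * (k * m) := by omega
      rw [this]; push_cast; ring
    rw [this]; nlinarith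
  have hN0 : (n : ℝ) - k - 1 ≠ 0 := ne_of_gt hNpos
  -- restrict to multiples of k
  have h1 : ∑ i ∈ Finset.Icc 1 d, a i
      = ∑ i ∈ (Finset.Icc 1 d).filter (k ∣ ·), a i := by
    refine (Finset.sum_filter_of_ne ?_).symm
    intro x hx hax
    by_contra hdvd
    apply hax
    rw [ha x hx, if_pos hdvd]
  have h2 : (Finset.Icc 1 d).filter (k ∣ ·) = (Finset.Icc 1 m).image (k * ·) := by
    ext x
    simp only [Finset.mem_filter, Finset.mem_Icc, Finset.mem_image]
    constructor
    · rintro ⟨⟨h1x, h2x⟩, j, hj⟩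
      exact ⟨j, ⟨by nlinarith, by subst hm hj; exact Nat.le_of_mul_le_mul_left h2x (by omega)⟩, by omega⟩
    · rintro ⟨j, ⟨hj1, hj2⟩, rfl⟩
      exact ⟨⟨by nlinarith, by subst hm; exact Nat.mul_le_mul_left k hj2⟩, j, rfl⟩
  have hinj : ∀ x ∈ Finset.Icc 1 m, ∀ y ∈ Finset.Icc 1 m, k * x = k * y → x = y := by
    intro x _ y _ h
    exact Nat.eq_of_mul_eq_mul_left (by omega) h
  rw [h1, h2, Finset.sum_image hinj]
  -- split off the top term j = m
  have hmsplit : Finset.Icc 1 m = insert m (Finset.Icc 1 (m - 1)) := by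
    ext x
    simp only [Finset.mem_insert, Finset.mem_Icc]
    omega
  rw [hmsplit, Finset.sum_insert (by simp only [Finset.mem_Icc]; omega)]
  -- value of the top term
  have htop : a (k * m) = (1 / ((n : ℝ) - k - 1)) * ((k : ℝ) - 1) := by
    have hmem : k * m ∈ Finset.Icc 1 d := by
      simp only [Finset.mem_Icc]; omega
    rw [ha _ hmem, if_neg (by simp [Dvd.intro m rfl]), if_neg (by simp [hm])]
    have hdR : (d : ℝ) ≠ 0 := Nat.cast_ne_zero.mpr hd0
    have : Real.pi * (d : ℝ) / d = Real.pi := by field_simp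
    rw [this, Real.cos_pi]
    ring
  -- values of the other terms
  have hbody : ∀ j ∈ Finset.Icc 1 (m - 1),
      a (k * j) = (2 / ((n : ℝ) - k - 1)) * (Real.cos (Real.pi * j / m) + k) := by
    intro j hj
    simp only [Finset.mem_Icc] at hj
    have hmem : k * j ∈ Finset.Icc 1 d := by
      simp only [Finset.mem_Icc]
      constructor
      · nlinarith
      · subst hm; exact Nat.mul_le_mul_left k (by omega)
    have hne : k * j ≠ d := by
      subst hm
      intro h
      have := Nat.eq_of_mul_eq_mul_left (show 0 < k by omega) h
      omega
    rw [ha _ hmem, if_neg (by simp [Dvd.intro j rfl]), if_pos hne]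
    have hdR : (d : ℝ) = (k : ℝ) * m := by rw [hm]; push_cast; ring
    have hkR0 : (k : ℝ) ≠ 0 := by positivity
    have hmR0 : (m : ℝ) ≠ 0 := by positivity
    have harg : Real.pi * ((k * j : ℕ) : ℝ) / (d : ℝ) = Real.pi * j / m := by
      rw [hdR]
      push_cast
      rw [div_eq_div_iff (by positivity) hmR0]
      ring
    rw [harg]
  rw [Finset.sum_congr rfl hbody, htop]
  -- compute
  rw [show (∑ j ∈ Finset.Icc 1 (m - 1),
      (2 / ((n : ℝ) - k - 1)) * (Real.cos (Real.pi * j / m) + k))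
    = (2 / ((n : ℝ) - k - 1)) * ((∑ j ∈ Finset.Icc 1 (m - 1), Real.cos (Real.pi * j / m))
        + (m - 1 : ℕ) * k) by
      rw [← Finset.mul_sum, Finset.sum_add_distrib, Finset.sum_const, Nat.card_Icc]
      rw [nsmul_eq_mul]
      norm_num]
  rw [cos_sum_zero]
  have hcast : ((m - 1 : ℕ) : ℝ) = (m : ℝ) - 1 := by
    push_cast [Nat.cast_sub (by omega : 1 ≤ m)]; ring
  have hnR : (n : ℝ) = 2 * k * m := by
    have : n = 2 * (k * m) := by omega
    rw [this]; push_cast; ring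
  rw [hnR] at hN0
  rw [hcast, hnR]
  field_simp [hN0]
  rw [div_eq_one_iff_eq (by intro h; apply hN0; linarith)]
  ring
end

section
/- Let k ≥ 2 and c ≥ 1 be integers, with c even whenever k is even. Let n = ck(k+1) and d = n/2. For i = 1,...,d define a_i = 0 if k does not divide i; a_i = (2/(n−k−1))·(cos(πi/d) + k) if k divides i and i ≠ d; and a_d = (1/(n−k−1))·(cos(πd/d) + k). For each j = 1,...,d define a^(j) = ∑_{i=1}^d cos(2πij/n)·a_i. Then −1/(ck−1) ≤ a^(j) ≤ 1 for every j = 1,...,d. -/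
open Finset Real


lemma cos_sum_range (M t : ℕ) (hM : 0 < M) :
    ∑ m ∈ Finset.range M, Real.cos (Real.pi * m * t / M) =
      if 2*M ∣ t then (M:ℝ) else if Even t then 0 else 1 := by
  have hM' : (M:ℝ) ≠ 0 := Nat.cast_ne_zero.mpr hM.ne'
  have hMc : (M:ℂ) ≠ 0 := Nat.cast_ne_zero.mpr hM.ne'
  by_cases hdvd : 2*M ∣ t
  · rw [if_pos hdvd]
    obtain ⟨s, rfl⟩ := hdvd
    have key : ∀ m : ℕ, Real.pi * m * ((2*M*s : ℕ) : ℝ) / M = ((m*s : ℕ):ℝ) * (2*Real.pi) := by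
      intro m; push_cast; field_simp
    rw [Finset.sum_congr rfl fun m _ => by rw [key m, Real.cos_nat_mul_two_pi]]
    simp
  · rw [if_neg hdvd]
    set θ : ℝ := Real.pi * t / M with hθ
    set ζ : ℂ := Complex.exp ((θ:ℂ) * Complex.I) with hζ
    have hre : ∀ m : ℕ, Real.cos (Real.pi * m * t / M) = (ζ ^ m).re := by
      intro m
      rw [hζ, ← Complex.exp_nat_mul]
      have : (m:ℂ) * ((θ:ℂ) * Complex.I) = ((Real.pi * m * t / M : ℝ) : ℂ) * Complex.I := by
        rw [hθ]; push_cast; ring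
      rw [this, Complex.exp_ofReal_mul_I_re]
    have hζM : ζ ^ M = (-1) ^ t := by
      rw [hζ, ← Complex.exp_nat_mul]
      have : (M:ℂ) * ((θ:ℂ) * Complex.I) = (t:ℂ) * ((Real.pi:ℂ) * Complex.I) := by
        rw [hθ]; push_cast; field_simp [hMc]
      rw [this, Complex.exp_nat_mul, Complex.exp_pi_mul_I]
    have hζ1 : ζ ≠ 1 := by
      intro h
      rw [hζ, Complex.exp_eq_one_iff] at h
      obtain ⟨z, hz⟩ := h
      have h1 : ((θ:ℝ):ℂ) = (z:ℂ) * (2 * Real.pi) :=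
        mul_right_cancel₀ Complex.I_ne_zero (hz.trans (by ring))
      have h2 : θ = (z:ℝ) * (2 * Real.pi) := by exact_mod_cast h1
      rw [hθ] at h2
      have hpi := Real.pi_ne_zero
      have h2' : Real.pi * (t:ℝ) = Real.pi * (2 * M * z) := by
        field_simp at h2
        linear_combination Real.pi * h2
      have h3 : (t:ℝ) = 2 * M * z := mul_left_cancel₀ hpi h2'
      have h4 : (t:ℤ) = 2 * M * z := by exact_mod_cast h3
      exact hdvd (Int.natCast_dvd_natCast.mp ⟨z, by push_cast; linarith⟩)
    calc ∑ m ∈ Finset.range M, Real.cos (Real.pi * m * t / M)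
        = (∑ m ∈ Finset.range M, ζ ^ m).re := by
          rw [Complex.re_sum]; exact Finset.sum_congr rfl fun m _ => hre m
      _ = ((ζ ^ M - 1) / (ζ - 1)).re := by rw [geom_sum_eq hζ1]
      _ = if Even t then 0 else 1 := by
          rw [hζM]
          by_cases hev : Even t
          · rw [if_pos hev, hev.neg_one_pow]; simp
          · rw [if_neg hev, (Nat.not_even_iff_odd.mp hev).neg_one_pow]
            have hw : ζ - 1 ≠ 0 := sub_ne_zero.mpr hζ1
            have hζ0 : ζ ≠ 0 := Complex.exp_ne_zero _
            have hinv : ζ⁻¹ - 1 ≠ 0 := by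
              intro h
              exact hζ1 (inv_eq_one.mp (sub_eq_zero.mp h))
            have hconj : (starRingEnd ℂ) ζ = ζ⁻¹ := by
              rw [hζ, ← Complex.exp_conj, ← Complex.exp_neg]
              congr 1
              simp [Complex.conj_I]
            set z : ℂ := (-1 - 1) / (ζ - 1) with hzdef
            have hz' : ζ * ζ⁻¹ = 1 := mul_inv_cancel₀ hζ0
            have hsum : z + (starRingEnd ℂ) z = 2 := by
              rw [hzdef, map_div₀]
              simp only [map_sub, map_one, map_neg, hconj]
              rw [div_add_div _ _ hw hinv, div_eq_iff (mul_ne_zero hw hinv)]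
              linear_combination (-2:ℂ) * hz'
            have hac := Complex.add_conj z
            rw [hsum] at hac
            have h2 : (2 : ℝ) * z.re = 2 := by exact_mod_cast hac.symm
            show z.re = 1
            linarith

lemma cos_sum_Ico (M t : ℕ) (hM : 0 < M)
    (h1 : ∑ m ∈ Finset.range M, Real.cos (Real.pi * m * t / M) =
      if 2*M ∣ t then (M:ℝ) else if Even t then 0 else 1) :
    ∑ m ∈ Finset.Ico 1 M, Real.cos (Real.pi * m * t / M) =
      (if 2*M ∣ t then (M:ℝ) else if Even t then 0 else 1) - 1 := by
  rw [Finset.range_eq_Ico, Finset.sum_eq_sum_Ico_succ_bot hM] at h1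
  simp only [Nat.cast_zero, mul_zero, zero_mul, zero_div, Real.cos_zero] at h1
  linarith

lemma Vbound (M k : ℕ) (hM : 2 ≤ M) (hk : 2 ≤ k) (j : ℕ) (hj : 1 ≤ j)
    (E : ℕ → ℝ)
    (hE : ∀ t, E t = (if 2*M ∣ t then (M:ℝ) else if Even t then 0 else 1) - 1) :
    -((k:ℝ)+1) ≤ E (j+1) + E (j-1) + 2*k*(E j) + ((k:ℝ)-1)*(-1)^j ∧
      E (j+1) + E (j-1) + 2*k*(E j) + ((k:ℝ)-1)*(-1)^j ≤ 2*k*M - k - 1 := by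
  have hkR : (2:ℝ) ≤ k := by exact_mod_cast hk
  have hMR : (2:ℝ) ≤ M := by exact_mod_cast hM
  rcases Nat.even_or_odd j with he | ho
  · -- j even
    have hj2 : 2 ≤ j := by
      rcases he with ⟨r, hr⟩; omega
    have hodd1 : Odd (j+1) := Even.add_one he
    have hodd2 : Odd (j-1) := Nat.Even.sub_odd hj he odd_one
    have h1 : ¬ 2*M ∣ (j+1) := fun h => (Nat.not_odd_iff_even.mpr
      ((dvd_trans ⟨M, rfl⟩ h).elim fun r hr => ⟨r, by omega⟩)) hodd1
    have h2 : ¬ 2*M ∣ (j-1) := fun h => (Nat.not_odd_iff_even.mpr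
      ((dvd_trans ⟨M, rfl⟩ h).elim fun r hr => ⟨r, by omega⟩)) hodd2
    have hpow : ((-1:ℝ))^j = 1 := he.neg_one_pow
    have hE1 : E (j+1) = 0 := by
      rw [hE, if_neg h1, if_neg (Nat.not_even_iff_odd.mpr hodd1)]; ring
    have hE2 : E (j-1) = 0 := by
      rw [hE, if_neg h2, if_neg (Nat.not_even_iff_odd.mpr hodd2)]; ring
    rw [hE1, hE2, hpow]
    by_cases h0 : 2*M ∣ j
    · rw [hE, if_pos h0]
      constructor <;> nlinarith
    · rw [hE, if_neg h0, if_pos he]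
      constructor <;> nlinarith
  · -- j odd
    have h0 : ¬ 2*M ∣ j := fun h => (Nat.not_even_iff_odd.mpr ho)
      ((dvd_trans ⟨M, rfl⟩ h).elim fun r hr => ⟨r, by omega⟩)
    have hev1 : Even (j+1) := Odd.add_one ho
    have hev2 : Even (j-1) := by
      rcases ho with ⟨r, hr⟩; exact ⟨r, by omega⟩
    have hpow : ((-1:ℝ))^j = -1 := ho.neg_one_pow
    have hEj : E j = 0 := by
      rw [hE, if_neg h0, if_neg (Nat.not_even_iff_odd.mpr ho)]; ring
    rw [hEj, hpow]
    have hnot_both : ¬ (2*M ∣ (j+1) ∧ 2*M ∣ (j-1)) := by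
      rintro ⟨⟨a, ha⟩, ⟨b, hb⟩⟩
      have key : 2*M*a = 2*M*b + 2 := by rw [← ha, ← hb]; omega
      have hab : b + 1 ≤ a := by
        by_contra h
        push_neg at h
        have h2 : 2*M*a ≤ 2*M*b := Nat.mul_le_mul_left _ (by omega)
        linarith
      have h3 : 2*M*(b+1) ≤ 2*M*a := Nat.mul_le_mul_left _ hab
      have h4 : 2*M*(b+1) = 2*M*b + 2*M := by ring
      have h5 : 4 ≤ 2*M := by omega
      linarith
    by_cases hp : 2*M ∣ (j+1) <;> by_cases hq : 2*M ∣ (j-1)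
    · exact absurd ⟨hp, hq⟩ hnot_both
    · rw [hE, hE, if_pos hp, if_neg hq, if_pos hev2]
      constructor <;> nlinarith
    · rw [hE, hE, if_neg hp, if_pos hev1, if_pos hq]
      constructor <;> nlinarith
    · rw [hE, hE, if_neg hp, if_pos hev1, if_neg hq, if_pos hev2]
      constructor <;> nlinarith

lemma cos_pi_nat (j : ℕ) : Real.cos (Real.pi * j) = (-1:ℝ)^j := by
  induction j with
  | zero => simp
  | succ m ih =>
    push_cast
    rw [show Real.pi * ((m:ℝ)+1) = Real.pi * m + Real.pi from by ring,
      Real.cos_add_pi, ih]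
    ring

theorem stmt_18 (k c : ℕ) (hk : 2 ≤ k) (hc : 1 ≤ c) (hpar : Even k → Even c)
    (n d : ℕ) (hn : n = c * k * (k + 1)) (hd : n = 2 * d)
    (a : ℕ → ℝ)
    (ha : ∀ i ∈ Finset.Icc 1 d, a i =
      if ¬ (k ∣ i) then 0
      else if i ≠ d then (2 / ((n : ℝ) - k - 1)) * (Real.cos (Real.pi * i / d) + k)
      else (1 / ((n : ℝ) - k - 1)) * (Real.cos (Real.pi * d / d) + k)) :
    ∀ j ∈ Finset.Icc 1 d,
      -1 / ((c : ℝ) * k - 1) ≤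
          ∑ i ∈ Finset.Icc 1 d, Real.cos (2 * Real.pi * i * j / n) * a i ∧
        ∑ i ∈ Finset.Icc 1 d, Real.cos (2 * Real.pi * i * j / n) * a i ≤ 1 := by
  intro j hj
  rw [Finset.mem_Icc] at hj
  obtain ⟨hj1, hjd⟩ := hj
  have hk0 : 0 < k := by omega
  -- structure: d = k*M, 2*M = c*(k+1)
  obtain ⟨M, hdM, h2M⟩ : ∃ M, d = k * M ∧ 2 * M = c * (k+1) := by
    rcases Nat.even_or_odd k with hke | hko
    · obtain ⟨c', hc'⟩ := hpar hke
      refine ⟨c' * (k+1), ?_, by rw [hc']; ring⟩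
      have h1 : 2 * d = 2 * (k * (c' * (k+1))) := by rw [← hd, hn, hc']; ring
      exact Nat.eq_of_mul_eq_mul_left (by norm_num) h1
    · obtain ⟨e, he⟩ := hko
      refine ⟨c * (e+1), ?_, by rw [he]; ring⟩
      have h1 : 2 * d = 2 * (k * (c * (e+1))) := by rw [← hd, hn, he]; ring
      exact Nat.eq_of_mul_eq_mul_left (by norm_num) h1
  have hM2 : 2 ≤ M := by
    have h3 : 3 ≤ c * (k+1) :=
      le_trans (show 3 ≤ 1*(k+1) by omega) (Nat.mul_le_mul hc le_rfl)
    have h4 : 3 ≤ 2 * M := h2M ▸ h3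
    omega
  have hM0 : 0 < M := by omega
  have hn2 : n = 2 * (k * M) := by rw [hd, hdM]
  have hdpos : 0 < d := by rw [hdM]; positivity
  -- real facts
  have hkR : (2:ℝ) ≤ (k:ℝ) := by exact_mod_cast hk
  have hMR : (2:ℝ) ≤ (M:ℝ) := by exact_mod_cast hM2
  have hcR : (1:ℝ) ≤ (c:ℝ) := by exact_mod_cast hc
  have hkR0 : (k:ℝ) ≠ 0 := by positivity
  have hMR0 : (M:ℝ) ≠ 0 := by linarith
  have hnR : (n:ℝ) = 2*k*M := by rw [hn2]; push_cast; ring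
  have hdR : (d:ℝ) = k*M := by rw [hdM]; push_cast; ring
  have hdR0 : (d:ℝ) ≠ 0 := by rw [hdR]; positivity
  have hPpos : (0:ℝ) < (n:ℝ) - k - 1 := by rw [hnR]; nlinarith
  have hP0 : ((n:ℝ) - k - 1) ≠ 0 := ne_of_gt hPpos
  have hnc : (n:ℝ) = c * k * (k+1) := by rw [hn]; push_cast; ring
  have hck : ((c:ℝ)*k - 1) * ((k:ℝ)+1) = (n:ℝ) - k - 1 := by
    rw [hnc]; ring
  have hckpos : (0:ℝ) < (c:ℝ)*k - 1 := by nlinarith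
  -- step 1: reindex
  have hsum1 : ∑ i ∈ Finset.Icc 1 d, Real.cos (2 * Real.pi * i * j / n) * a i
      = ∑ m ∈ Finset.Icc 1 M, Real.cos (Real.pi * m * j / M) *
          (if m ≠ M then 2/((n:ℝ)-k-1) * (Real.cos (Real.pi * m / M) + k)
           else 1/((n:ℝ)-k-1) * (-1 + k)) := by
    rw [← Finset.sum_filter_of_ne (p := fun i => k ∣ i)
      (fun i hi hne => by
        by_contra hki
        exact hne (by rw [ha i hi, if_pos hki, mul_zero]))]
    have himg : (Finset.Icc 1 d).filter (fun i => k ∣ i)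
        = (Finset.Icc 1 M).image (fun m => k * m) := by
      ext i
      simp only [Finset.mem_filter, Finset.mem_image, Finset.mem_Icc]
      constructor
      · rintro ⟨⟨hi1, hi2⟩, m, rfl⟩
        refine ⟨m, ⟨?_, ?_⟩, rfl⟩
        · have hm0 : m ≠ 0 := by rintro rfl; simp at hi1
          omega
        · rw [hdM] at hi2
          exact Nat.le_of_mul_le_mul_left hi2 hk0
      · rintro ⟨m, ⟨hm1, hm2⟩, rfl⟩
        refine ⟨⟨?_, ?_⟩, ⟨m, rfl⟩⟩
        · exact Nat.mul_pos hk0 hm1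
        · rw [hdM]; exact Nat.mul_le_mul_left k hm2
    rw [himg, Finset.sum_image (fun x _ y _ h => Nat.eq_of_mul_eq_mul_left hk0 h)]
    refine Finset.sum_congr rfl fun m hm => ?_
    rw [Finset.mem_Icc] at hm
    have hmem : k * m ∈ Finset.Icc 1 d := by
      rw [Finset.mem_Icc]
      constructor
      · exact Nat.mul_pos hk0 hm.1
      · rw [hdM]; exact Nat.mul_le_mul_left k hm.2
    rw [ha _ hmem, if_neg (not_not_intro (dvd_mul_right k m))]
    have hang1 : 2 * Real.pi * ((k*m : ℕ):ℝ) * j / n = Real.pi * m * j / M := by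
      rw [hnR]; push_cast; field_simp
    rw [hang1]
    by_cases hmM : m = M
    · rw [hmM, if_neg (not_not_intro (hdM.symm)), if_neg (not_not_intro rfl)]
      have : Real.pi * (d:ℝ) / d = Real.pi := by field_simp
      rw [this, Real.cos_pi]
    · have hkmd : k * m ≠ d := by
        rw [hdM]
        exact fun h => hmM (Nat.eq_of_mul_eq_mul_left hk0 h)
      rw [if_pos hkmd, if_pos hmM]
      have hang2 : Real.pi * ((k*m : ℕ):ℝ) / d = Real.pi * m / M := by
        rw [hdR]; push_cast; field_simp
      rw [hang2]
  -- step 2: split off top term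
  have hsum2 : ∑ m ∈ Finset.Icc 1 M, Real.cos (Real.pi * m * j / M) *
          (if m ≠ M then 2/((n:ℝ)-k-1) * (Real.cos (Real.pi * m / M) + k)
           else 1/((n:ℝ)-k-1) * (-1 + k))
      = (∑ m ∈ Finset.Ico 1 M, Real.cos (Real.pi * m * j / M) *
          (2/((n:ℝ)-k-1) * (Real.cos (Real.pi * m / M) + k)))
        + (-1:ℝ)^j * (1/((n:ℝ)-k-1) * (-1 + k)) := by
    rw [← Finset.Ico_add_one_right_eq_Icc, Finset.sum_Ico_succ_top (by omega : 1 ≤ M)]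
    congr 1
    · refine Finset.sum_congr rfl fun m hm => ?_
      rw [Finset.mem_Ico] at hm
      rw [if_pos (by omega : m ≠ M)]
    · rw [if_neg (not_not_intro rfl)]
      have : Real.pi * (M:ℝ) * j / M = Real.pi * j := by field_simp
      rw [this, cos_pi_nat]
  -- step 3: multiply by P and evaluate
  set E : ℕ → ℝ := fun t => (if 2*M ∣ t then (M:ℝ) else if Even t then 0 else 1) - 1
    with hEdef
  have hEIco : ∀ t : ℕ, ∑ m ∈ Finset.Ico 1 M, Real.cos (Real.pi * m * t / M) = E t :=
    fun t => cos_sum_Ico M t hM0 (cos_sum_range M t hM0)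
  have hPS : ((n:ℝ)-k-1) * (∑ i ∈ Finset.Icc 1 d, Real.cos (2 * Real.pi * i * j / n) * a i)
      = E (j+1) + E (j-1) + 2*k*(E j) + ((k:ℝ)-1)*(-1:ℝ)^j := by
    rw [hsum1, hsum2, mul_add, Finset.mul_sum]
    have hterm : ∀ m ∈ Finset.Ico 1 M,
        ((n:ℝ)-k-1) * (Real.cos (Real.pi*m*j/M) * (2/((n:ℝ)-k-1) * (Real.cos (Real.pi*m/M)+k)))
        = Real.cos (Real.pi*m*((j+1:ℕ):ℝ)/M) + Real.cos (Real.pi*m*((j-1:ℕ):ℝ)/M)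
          + 2*k*Real.cos (Real.pi*m*j/M) := by
      intro m hm
      have hc1 : ((j+1:ℕ):ℝ) = (j:ℝ) + 1 := by push_cast; ring
      have hc2 : ((j-1:ℕ):ℝ) = (j:ℝ) - 1 := by
        rw [Nat.cast_sub hj1]; simp
      have e1 : Real.pi*m*((j+1:ℕ):ℝ)/M = Real.pi*m*j/M + Real.pi*m/M := by
        rw [hc1]; field_simp
      have e2 : Real.pi*m*((j-1:ℕ):ℝ)/M = Real.pi*m*j/M - Real.pi*m/M := by
        rw [hc2]; field_simp
      rw [e1, e2, Real.cos_add, Real.cos_sub]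
      field_simp
      ring
    rw [Finset.sum_congr rfl hterm]
    rw [Finset.sum_add_distrib, Finset.sum_add_distrib, ← Finset.mul_sum]
    rw [hEIco (j+1), hEIco (j-1), hEIco j]
    field_simp
    ring
  obtain ⟨hlow, hhigh⟩ := Vbound M k hM2 hk j hj1 E (fun t => rfl)
  constructor
  · have h1 : -1/((c:ℝ)*k-1) = -((k:ℝ)+1)/((n:ℝ)-k-1) := by
      rw [← hck]
      rw [div_eq_div_iff (ne_of_gt hckpos) (ne_of_gt (mul_pos hckpos (by linarith : (0:ℝ) < (k:ℝ)+1)))]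
      ring
    rw [h1, div_le_iff₀ hPpos]
    calc -((k:ℝ)+1) ≤ E (j+1) + E (j-1) + 2*k*(E j) + ((k:ℝ)-1)*(-1:ℝ)^j := hlow
      _ = ((n:ℝ)-k-1) * (∑ i ∈ Finset.Icc 1 d, Real.cos (2 * Real.pi * i * j / n) * a i) :=
        hPS.symm
      _ = (∑ i ∈ Finset.Icc 1 d, Real.cos (2 * Real.pi * i * j / n) * a i) * ((n:ℝ)-k-1) :=
        mul_comm _ _
  · have h2 : ((n:ℝ)-k-1) * (∑ i ∈ Finset.Icc 1 d, Real.cos (2 * Real.pi * i * j / n) * a i)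
        ≤ ((n:ℝ)-k-1) * 1 := by
      rw [hPS, mul_one]
      linarith [hhigh, hnR]
    exact le_of_mul_le_mul_left h2 hPpos
end
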